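/- arXiv:1908.09473 — 7 statements merged into one kernel-verified Lean document; each statement's English description precedes it below -/
import Mathlib

section
/- Let k ≥ 3 and let G be a connected k-chordal finite simple graph of diameter at most D. Let P ⊆ V(G) be a set of vertices such that the subgraph of G induced by P is connected, and let G_P be the 1-hop extension of P in G. Then for all vertices u, v ∈ P, the distance between u and v in G_P is at most k · dist_G(u,v); in particular it is at most kD. -/
/-- The 1-hop extension of a vertex set `P` in `G`: the subgraph of `G` consisting of
all edges of `G` with at least one endpoint in `P` (modeled as a graph on the same
vertex type; vertices outside the closed neighborhood of `P` are isolated). -/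
def oneHopExt {V : Type*} (G : SimpleGraph V) (P : Set V) : SimpleGraph V where
  Adj u v := G.Adj u v ∧ (u ∈ P ∨ v ∈ P)
  symm := ⟨fun u v h => ⟨h.1.symm, h.2.symm⟩⟩
  loopless := ⟨fun v h => G.loopless.irrefl v h.1⟩

/-- A cycle `w` has a chord: an edge of `G` joining two vertices of the cycle which is
not an edge of the cycle (for cycles of length at least 4 this is exactly an edge joining
two non-consecutive vertices of the cycle). -/
def HasChord {V : Type*} {G : SimpleGraph V} {v : V} (w : G.Walk v v) : Prop :=
  ∃ a b, a ∈ w.support ∧ b ∈ w.support ∧ G.Adj a b ∧ s(a, b) ∉ w.edges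

/-- `G` is `k`-chordal: every cycle of length greater than `k` has a chord
(equivalently, `G` has no induced cycle of length greater than `k`). -/
def KChordal {V : Type*} (G : SimpleGraph V) (k : ℕ) : Prop :=
  ∀ (v : V) (w : G.Walk v v), w.IsCycle → k < w.length → HasChord w

open SimpleGraph

namespace OneHopAux

variable {V : Type*} {G : SimpleGraph V}

lemma dist_triangle_of_walks {x z y : V} (p : G.Walk x z) (q : G.Walk z y) :
    G.dist x y ≤ G.dist x z + G.dist z y := by
  obtain ⟨p1, hp1⟩ := p.reachable.exists_walk_length_eq_dist
  obtain ⟨p2, hp2⟩ := q.reachable.exists_walk_length_eq_dist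
  calc G.dist x y ≤ (p1.append p2).length := dist_le _
  _ = G.dist x z + G.dist z y := by rw [Walk.length_append, hp1, hp2]

lemma edge_mem_of_length_one {a b : V} {w : G.Walk a b} (h : w.length = 1) :
    s(a, b) ∈ w.edges := by
  cases w with
  | nil => simp at h
  | cons hadj w' =>
    cases w' with
    | nil => simp
    | cons h1 h2 => simp [Walk.length_cons] at h

lemma split_lengths [DecidableEq V] {x y z : V} (Q : G.Walk x y) (hz : z ∈ Q.support) :
    (Q.takeUntil z hz).length + (Q.dropUntil z hz).length = Q.length := by
  conv_rhs => rw [← Q.take_spec hz]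
  rw [Walk.length_append]

lemma length_takeUntil_eq [DecidableEq V] {x y z : V} (Q : G.Walk x y)
    (hs : Q.length = G.dist x y) (hz : z ∈ Q.support) :
    (Q.takeUntil z hz).length = G.dist x z ∧ (Q.dropUntil z hz).length = G.dist z y := by
  have hlen := split_lengths Q hz
  have h1 : G.dist x z ≤ (Q.takeUntil z hz).length := dist_le _
  have h2 : G.dist z y ≤ (Q.dropUntil z hz).length := dist_le _
  have h3 : G.dist x y ≤ G.dist x z + G.dist z y :=
    dist_triangle_of_walks (Q.takeUntil z hz) (Q.dropUntil z hz)
  omega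

lemma shortest_chord_mem [DecidableEq V] {x y a b : V} (Q : G.Walk x y)
    (hs : Q.length = G.dist x y) (ha : a ∈ Q.support) (hb : b ∈ Q.support)
    (hab : G.Adj a b) : s(a, b) ∈ Q.edges := by
  have hd : G.dist a b = 1 := dist_eq_one_iff_adj.mpr hab
  have hb' : b ∈ (Q.takeUntil a ha).support ∨ b ∈ (Q.dropUntil a ha).support := by
    have := hb
    rw [← Q.take_spec ha, Walk.mem_support_append_iff] at this
    exact this
  rcases hb' with hbT | hbD
  · have hT : (Q.takeUntil a ha).length = G.dist x a := (length_takeUntil_eq Q hs ha).1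
    have hS : ((Q.takeUntil a ha).dropUntil b hbT).length = G.dist b a :=
      (length_takeUntil_eq (Q.takeUntil a ha) hT hbT).2
    rw [dist_comm, hd] at hS
    have := edge_mem_of_length_one hS
    have := Walk.edges_dropUntil_subset _ hbT this
    have := Walk.edges_takeUntil_subset _ ha this
    rwa [Sym2.eq_swap] at this
  · have hD : (Q.dropUntil a ha).length = G.dist a y := (length_takeUntil_eq Q hs ha).2
    have hS : ((Q.dropUntil a ha).takeUntil b hbD).length = G.dist a b :=
      (length_takeUntil_eq (Q.dropUntil a ha) hD hbD).1
    rw [hd] at hS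
    have := edge_mem_of_length_one hS
    have := Walk.edges_takeUntil_subset _ hbD this
    exact Walk.edges_dropUntil_subset _ ha this

lemma start_not_mem_dropUntil_support [DecidableEq V] {y x b : V} {W : G.Walk y x}
    (hW : W.IsPath) (hb : b ∈ W.support) (hby : b ≠ y) :
    y ∉ (W.dropUntil b hb).support := by
  intro hy
  have hnd : W.support.Nodup := hW.support_nodup
  conv at hnd => rw [← W.take_spec hb, Walk.support_append]
  have hyT : y ∈ (W.takeUntil b hb).support := Walk.start_mem_support _
  have hytail : y ∈ (W.dropUntil b hb).support.tail := by
    rw [(W.dropUntil b hb).support_eq_cons, List.mem_cons] at hy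
    rcases hy with h | h
    · exact absurd h.symm hby
    · exact h
  exact (List.nodup_append'.mp hnd).2.2 hyT hytail

lemma end_not_mem_takeUntil_support [DecidableEq V] {y x b : V} {W : G.Walk y x}
    (hW : W.IsPath) (hb : b ∈ W.support) (hbx : b ≠ x) :
    x ∉ (W.takeUntil b hb).support := by
  intro hx
  have hnd : W.support.Nodup := hW.support_nodup
  conv at hnd => rw [← W.take_spec hb, Walk.support_append]
  have hxD : x ∈ (W.dropUntil b hb).support.tail := by
    have h1 : x ∈ (W.dropUntil b hb).support := Walk.end_mem_support _
    rw [(W.dropUntil b hb).support_eq_cons, List.mem_cons] at h1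
    rcases h1 with h | h
    · exact absurd h.symm hbx
    · exact h
  exact (List.nodup_append'.mp hnd).2.2 hx hxD

lemma length_eq_one_of_mem_edges {x y : V} {Q : G.Walk x y} (hp : Q.IsPath)
    (he : s(x, y) ∈ Q.edges) : Q.length = 1 := by
  cases Q with
  | nil => simp at he
  | @cons _ c _ hadj Q' =>
    rw [Walk.edges_cons, List.mem_cons] at he
    rw [Walk.cons_isPath_iff] at hp
    rcases he with h | h
    · rw [Sym2.eq_iff] at h
      rcases h with ⟨-, hyc⟩ | ⟨hxc, -⟩
      · subst hyc
        have := (Walk.isPath_iff_eq_nil (p := Q')).mp hp.1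
        subst this
        simp
      · exact absurd hxc hadj.ne
    · exact absurd (Walk.fst_mem_support_of_mem_edges Q' h) hp.2

lemma oneHopExt_le (G : SimpleGraph V) (P : Set V) : oneHopExt G P ≤ G :=
  fun _ _ h => h.1

lemma oneHopExt_adj {P : Set V} {a b : V} (h : G.Adj a b) (hm : a ∈ P ∨ b ∈ P) :
    (oneHopExt G P).Adj a b := ⟨h, hm⟩

lemma key (G : SimpleGraph V) (P : Set V) (k : ℕ) (hk : 3 ≤ k)
    (hchordal : KChordal G k) :
    ∀ s n : ℕ, ∀ (x y : V) (Q : G.Walk x y) (W : (oneHopExt G P).Walk y x),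
      Q.length = s → G.dist x y = s → W.length = n →
      (∀ z ∈ W.support, z ∈ P ∨ z = x ∨ z = y) →
      (oneHopExt G P).dist x y ≤ (k - 1) * s := by
  classical
  intro s
  induction s using Nat.strong_induction_on with
  | _ s ihs =>
  intro n
  induction n using Nat.strong_induction_on with
  | _ n ihn =>
  intro x y Q W hQl hdist hWl hWsup
  rcases Nat.eq_zero_or_pos s with hs0 | hspos
  · subst hs0
    obtain rfl : x = y := Walk.eq_of_length_eq_zero hQl
    simp
  have hQsd : Q.length = G.dist x y := hQl.trans hdist.symm
  have hQp : Q.IsPath := Q.isPath_of_length_eq_dist hQsd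
  set W₀ := W.bypass with hW₀def
  have hW₀p : W₀.IsPath := W.bypass_isPath
  have hW₀sup : ∀ z ∈ W₀.support, z ∈ P ∨ z = x ∨ z = y :=
    fun z hz => hWsup z (W.support_bypass_subset hz)
  have hW₀len : W₀.length ≤ n := by rw [← hWl]; exact W.length_bypass_le
  by_cases hshare : ∃ z, z ∈ W₀.support ∧ z ∈ Q.support ∧ z ≠ x ∧ z ≠ y
  · obtain ⟨z, hzW, hzQ, hzx, hzy⟩ := hshare
    have hQsplit := length_takeUntil_eq Q hQsd hzQ
    have hsum := split_lengths Q hzQ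
    have hs1pos : 0 < (Q.takeUntil z hzQ).length := by
      rcases Nat.eq_zero_or_pos (Q.takeUntil z hzQ).length with h | h
      · exact absurd (Walk.eq_of_length_eq_zero h).symm hzx
      · exact h
    have hs2pos : 0 < (Q.dropUntil z hzQ).length := by
      rcases Nat.eq_zero_or_pos (Q.dropUntil z hzQ).length with h | h
      · exact absurd (Walk.eq_of_length_eq_zero h) hzy
      · exact h
    have d1 := ihs (Q.takeUntil z hzQ).length (by omega) (W₀.dropUntil z hzW).length
        x z (Q.takeUntil z hzQ) (W₀.dropUntil z hzW) rfl hQsplit.1.symm rfl (by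
      intro w hw
      rcases hW₀sup w (Walk.support_dropUntil_subset _ _ hw) with h | h | h
      · exact Or.inl h
      · exact Or.inr (Or.inl h)
      · subst h
        exact absurd hw (start_not_mem_dropUntil_support hW₀p hzW hzy))
    have d2 := ihs (Q.dropUntil z hzQ).length (by omega) (W₀.takeUntil z hzW).length
        z y (Q.dropUntil z hzQ) (W₀.takeUntil z hzW) rfl hQsplit.2.symm rfl (by
      intro w hw
      rcases hW₀sup w (Walk.support_takeUntil_subset _ _ hw) with h | h | h
      · exact Or.inl h
      · subst h
        exact absurd hw (end_not_mem_takeUntil_support hW₀p hzW hzx)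
      · exact Or.inr (Or.inr h))
    have tri := dist_triangle_of_walks (W₀.dropUntil z hzW).reverse (W₀.takeUntil z hzW).reverse
    calc (oneHopExt G P).dist x y ≤ (oneHopExt G P).dist x z + (oneHopExt G P).dist z y := tri
    _ ≤ (k-1) * (Q.takeUntil z hzQ).length + (k-1) * (Q.dropUntil z hzQ).length :=
        add_le_add d1 d2
    _ = (k-1) * s := by rw [← Nat.mul_add, hsum, hQl]
  by_cases hsmall : s + W₀.length ≤ k
  · have hle : (oneHopExt G P).dist x y ≤ W₀.length := by
      have := dist_le W₀.reverse
      rwa [Walk.length_reverse] at this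
    have h1 : k - 1 ≤ (k - 1) * s := le_mul_of_one_le_right (Nat.zero_le _) hspos
    calc (oneHopExt G P).dist x y ≤ W₀.length := hle
    _ ≤ k - 1 := by omega
    _ ≤ (k-1) * s := h1
  push_neg at hsmall
  have hWedges : ∀ e ∈ W₀.edges, e ∈ G.edgeSet := fun e he =>
    SimpleGraph.edgeSet_mono (oneHopExt_le G P) (Walk.edges_subset_edgeSet _ he)
  set Wg := W₀.transfer G hWedges with hWgdef
  set C := Q.append Wg with hCdef
  have hClen : C.length = s + W₀.length := by
    rw [hCdef, Walk.length_append, Walk.length_transfer, hQl]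
  have hdisj : ∀ z, z ∈ W₀.support → z ∈ Q.support → z = x ∨ z = y := by
    intro z h1 h2
    by_contra hc
    push_neg at hc
    exact hshare ⟨z, h1, h2, hc.1, hc.2⟩
  have hnotboth : ¬ (s(x,y) ∈ Q.edges ∧ s(y,x) ∈ W₀.edges) := by
    rintro ⟨h1, h2⟩
    have l1 : Q.length = 1 := length_eq_one_of_mem_edges hQp h1
    have l2 : W₀.length = 1 := length_eq_one_of_mem_edges hW₀p h2
    omega
  have hCcyc : C.IsCycle := by
    rw [Walk.isCycle_def]
    refine ⟨⟨?_⟩, ?_, ?_⟩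
    · have hE : C.edges = Q.edges ++ W₀.edges := by
        rw [hCdef, Walk.edges_append, hWgdef, Walk.edges_transfer]
      rw [hE]
      refine List.Nodup.append hQp.isTrail.edges_nodup hW₀p.isTrail.edges_nodup ?_
      intro e he1 he2
      induction e using Sym2.ind with
      | _ c d =>
        have hcd : G.Adj c d := Q.edges_subset_edgeSet he1
        have hc1 : c ∈ Q.support := Walk.fst_mem_support_of_mem_edges _ he1
        have hd1 : d ∈ Q.support := Walk.snd_mem_support_of_mem_edges _ he1
        have hc2 : c ∈ W₀.support := Walk.fst_mem_support_of_mem_edges _ he2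
        have hd2 : d ∈ W₀.support := Walk.snd_mem_support_of_mem_edges _ he2
        rcases hdisj c hc2 hc1 with rfl | rfl <;> rcases hdisj d hd2 hd1 with rfl | rfl
        · exact hcd.ne rfl
        · exact hnotboth ⟨he1, by rwa [Sym2.eq_swap] at he2⟩
        · exact hnotboth ⟨by rwa [Sym2.eq_swap] at he1, he2⟩
        · exact hcd.ne rfl
    · intro h
      have h2 := congrArg Walk.length h
      simp only [Walk.length_nil] at h2
      omega
    · have hsup : C.support = Q.support ++ W₀.support.tail := by
        rw [hCdef, Walk.support_append, hWgdef, Walk.support_transfer]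
      have htail : C.support.tail = Q.support.tail ++ W₀.support.tail := by
        rw [hsup, List.tail_append_of_ne_nil (Q.support_ne_nil)]
      rw [htail]
      refine List.Nodup.append hQp.support_nodup.tail hW₀p.support_nodup.tail ?_
      intro w hw1 hw2
      have hwQ : w ∈ Q.support := List.mem_of_mem_tail hw1
      have hwW : w ∈ W₀.support := List.mem_of_mem_tail hw2
      rcases hdisj w hwW hwQ with rfl | rfl
      · have := hQp.support_nodup
        rw [Q.support_eq_cons] at this
        exact (List.nodup_cons.mp this).1 hw1
      · have := hW₀p.support_nodup
        rw [W₀.support_eq_cons] at this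
        exact (List.nodup_cons.mp this).1 hw2
  obtain ⟨a, b, haC, hbC, hab, habn⟩ := hchordal x C hCcyc (by rw [hClen]; omega)
  have hCsup : ∀ w, w ∈ C.support → w ∈ Q.support ∨ w ∈ W₀.support := by
    intro w hw
    rw [hCdef, Walk.mem_support_append_iff, hWgdef] at hw
    rcases hw with h | h
    · exact Or.inl h
    · right; rwa [Walk.support_transfer] at h
  have hnQ : s(a,b) ∉ Q.edges := fun h =>
    habn (by rw [hCdef, Walk.edges_append]; exact List.mem_append_left _ h)
  have hnW : s(a,b) ∉ W₀.edges := fun h =>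
    habn (by rw [hCdef, Walk.edges_append, hWgdef, Walk.edges_transfer]
             exact List.mem_append_right _ h)
  have hmain : ∀ a b : V, a ∈ Q.support → b ∈ W₀.support → b ∉ Q.support →
      G.Adj a b → s(a,b) ∉ W₀.edges → (oneHopExt G P).dist x y ≤ (k-1) * s := by
    clear hnQ hnW habn hab haC hbC
    intro a b haQ hbW hbQ hab hnW
    have hbx : b ≠ x := fun h => hbQ (h ▸ Q.start_mem_support)
    have hby : b ≠ y := fun h => hbQ (h ▸ Q.end_mem_support)
    have hbP : b ∈ P := by
      rcases hW₀sup b hbW with h | h | h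
      · exact h
      · exact absurd h hbx
      · exact absurd h hby
    have hW₀split := split_lengths W₀ hbW
    by_cases hax : a = x
    · subst hax
      have hdpos : 0 < (W₀.dropUntil b hbW).length := by
        rcases Nat.eq_zero_or_pos (W₀.dropUntil b hbW).length with h | h
        · exact absurd (Walk.eq_of_length_eq_zero h) hbx
        · exact h
      have hdne1 : (W₀.dropUntil b hbW).length ≠ 1 := by
        intro h
        have h1 := edge_mem_of_length_one h
        have h2 := Walk.edges_dropUntil_subset _ hbW h1
        rw [Sym2.eq_swap] at h2
        exact hnW h2
      set W' : (oneHopExt G P).Walk y a := (W₀.takeUntil b hbW).append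
        (Walk.cons (oneHopExt_adj hab.symm (Or.inl hbP)) Walk.nil) with hW'def
      have hW'len : W'.length = (W₀.takeUntil b hbW).length + 1 := by
        rw [hW'def, Walk.length_append]
        simp
      refine ihn W'.length (by rw [hW'len]; omega) a y Q W' hQl hdist rfl ?_
      intro w hw
      rw [hW'def, Walk.mem_support_append_iff] at hw
      rcases hw with h | h
      · exact hW₀sup w (Walk.support_takeUntil_subset _ _ h)
      · simp only [Walk.support_cons, Walk.support_nil, List.mem_cons,
          List.mem_singleton, List.not_mem_nil, or_false] at h
        rcases h with rfl | rfl
        · exact Or.inl hbP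
        · exact Or.inr (Or.inl rfl)
    · by_cases hay : a = y
      · subst hay
        have htpos : 0 < (W₀.takeUntil b hbW).length := by
          rcases Nat.eq_zero_or_pos (W₀.takeUntil b hbW).length with h | h
          · exact absurd (Walk.eq_of_length_eq_zero h).symm hby
          · exact h
        have htne1 : (W₀.takeUntil b hbW).length ≠ 1 := by
          intro h
          have h1 := edge_mem_of_length_one h
          have h2 := Walk.edges_takeUntil_subset _ hbW h1
          exact hnW h2
        set W' : (oneHopExt G P).Walk a x :=
          Walk.cons (oneHopExt_adj hab (Or.inr hbP)) (W₀.dropUntil b hbW) with hW'def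
        have hW'len : W'.length = (W₀.dropUntil b hbW).length + 1 := by
          rw [hW'def, Walk.length_cons]
        refine ihn W'.length (by rw [hW'len]; omega) x a Q W' hQl hdist rfl ?_
        intro w hw
        rw [hW'def, Walk.support_cons, List.mem_cons] at hw
        rcases hw with rfl | h
        · exact Or.inr (Or.inr rfl)
        · rcases hW₀sup w (Walk.support_dropUntil_subset _ _ h) with h' | h' | h'
          · exact Or.inl h'
          · exact Or.inr (Or.inl h')
          · subst h'
            exact absurd h (start_not_mem_dropUntil_support hW₀p hbW hby)
      · have hQsplit := length_takeUntil_eq Q hQsd haQ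
        have hsum := split_lengths Q haQ
        have hs1pos : 0 < (Q.takeUntil a haQ).length := by
          rcases Nat.eq_zero_or_pos (Q.takeUntil a haQ).length with h | h
          · exact absurd (Walk.eq_of_length_eq_zero h).symm hax
          · exact h
        have hs2pos : 0 < (Q.dropUntil a haQ).length := by
          rcases Nat.eq_zero_or_pos (Q.dropUntil a haQ).length with h | h
          · exact absurd (Walk.eq_of_length_eq_zero h) hay
          · exact h
        have d1 := ihs (Q.takeUntil a haQ).length (by omega)
            (Walk.cons (oneHopExt_adj hab (Or.inr hbP)) (W₀.dropUntil b hbW)).length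
            x a (Q.takeUntil a haQ)
            (Walk.cons (oneHopExt_adj hab (Or.inr hbP)) (W₀.dropUntil b hbW))
            rfl hQsplit.1.symm rfl (by
          intro w hw
          rw [Walk.support_cons, List.mem_cons] at hw
          rcases hw with rfl | h
          · exact Or.inr (Or.inr rfl)
          · rcases hW₀sup w (Walk.support_dropUntil_subset _ _ h) with h' | h' | h'
            · exact Or.inl h'
            · exact Or.inr (Or.inl h')
            · subst h'
              exact absurd h (start_not_mem_dropUntil_support hW₀p hbW hby))
        have d2 := ihs (Q.dropUntil a haQ).length (by omega)
            ((W₀.takeUntil b hbW).append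
              (Walk.cons (oneHopExt_adj hab.symm (Or.inl hbP)) Walk.nil)).length
            a y (Q.dropUntil a haQ)
            ((W₀.takeUntil b hbW).append
              (Walk.cons (oneHopExt_adj hab.symm (Or.inl hbP)) Walk.nil))
            rfl hQsplit.2.symm rfl (by
          intro w hw
          rw [Walk.mem_support_append_iff] at hw
          rcases hw with h | h
          · rcases hW₀sup w (Walk.support_takeUntil_subset _ _ h) with h' | h' | h'
            · exact Or.inl h'
            · subst h'
              exact absurd h (end_not_mem_takeUntil_support hW₀p hbW hbx)
            · exact Or.inr (Or.inr h')
          · simp only [Walk.support_cons, Walk.support_nil, List.mem_cons,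
              List.mem_singleton, List.not_mem_nil, or_false] at h
            rcases h with rfl | rfl
            · exact Or.inl hbP
            · exact Or.inr (Or.inl rfl))
        have tri := dist_triangle_of_walks
          (Walk.cons (oneHopExt_adj hab (Or.inr hbP)) (W₀.dropUntil b hbW)).reverse
          ((W₀.takeUntil b hbW).append
            (Walk.cons (oneHopExt_adj hab.symm (Or.inl hbP)) Walk.nil)).reverse
        calc (oneHopExt G P).dist x y
            ≤ (oneHopExt G P).dist x a + (oneHopExt G P).dist a y := tri
        _ ≤ (k-1) * (Q.takeUntil a haQ).length + (k-1) * (Q.dropUntil a haQ).length :=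
            add_le_add d1 d2
        _ = (k-1) * s := by rw [← Nat.mul_add, hsum, hQl]
  by_cases haQ : a ∈ Q.support <;> by_cases hbQ : b ∈ Q.support
  · exact absurd (shortest_chord_mem Q hQsd haQ hbQ hab) hnQ
  · exact hmain a b haQ ((hCsup b hbC).resolve_left hbQ) hbQ hab hnW
  · exact hmain b a hbQ ((hCsup a haC).resolve_left haQ) haQ hab.symm
      (by rwa [Sym2.eq_swap] at hnW)
  · have haW : a ∈ W₀.support := (hCsup a haC).resolve_left haQ
    have hbW : b ∈ W₀.support := (hCsup b hbC).resolve_left hbQ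
    have haP : a ∈ P := by
      rcases hW₀sup a haW with h | h | h
      · exact h
      · exact absurd (h ▸ Q.start_mem_support) haQ
      · exact absurd (h ▸ Q.end_mem_support) haQ
    have hbP : b ∈ P := by
      rcases hW₀sup b hbW with h | h | h
      · exact h
      · exact absurd (h ▸ Q.start_mem_support) hbQ
      · exact absurd (h ▸ Q.end_mem_support) hbQ
    have hsplit1 := split_lengths W₀ haW
    have hborder : b ∈ (W₀.takeUntil a haW).support ∨ b ∈ (W₀.dropUntil a haW).support := by
      have := hbW
      rw [← W₀.take_spec haW, Walk.mem_support_append_iff] at this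
      exact this
    rcases hborder with hbT | hbD
    · have hsplit2 := split_lengths (W₀.takeUntil a haW) hbT
      have hmid : 2 ≤ ((W₀.takeUntil a haW).dropUntil b hbT).length := by
        have h1 : ((W₀.takeUntil a haW).dropUntil b hbT).length ≠ 0 := fun h =>
          hab.ne.symm (Walk.eq_of_length_eq_zero h)
        have h2 : ((W₀.takeUntil a haW).dropUntil b hbT).length ≠ 1 := by
          intro h
          have he := edge_mem_of_length_one h
          have he2 := Walk.edges_takeUntil_subset _ haW (Walk.edges_dropUntil_subset _ hbT he)
          rw [Sym2.eq_swap] at he2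
          exact hnW he2
        omega
      set W' : (oneHopExt G P).Walk y x := ((W₀.takeUntil a haW).takeUntil b hbT).append
        (Walk.cons (oneHopExt_adj hab.symm (Or.inl hbP)) (W₀.dropUntil a haW)) with hW'def
      have hW'len : W'.length =
          ((W₀.takeUntil a haW).takeUntil b hbT).length + ((W₀.dropUntil a haW).length + 1) := by
        rw [hW'def, Walk.length_append, Walk.length_cons]
      refine ihn W'.length (by rw [hW'len]; omega) x y Q W' hQl hdist rfl ?_
      intro w hw
      rw [hW'def, Walk.mem_support_append_iff, Walk.support_cons, List.mem_cons] at hw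
      rcases hw with h | h
      · exact hW₀sup w (Walk.support_takeUntil_subset _ _ (Walk.support_takeUntil_subset _ _ h))
      · rcases h with h | h
        · exact Or.inl (by rw [h]; exact hbP)
        · exact hW₀sup w (Walk.support_dropUntil_subset _ _ h)
    · have hsplit2 := split_lengths (W₀.dropUntil a haW) hbD
      have hmid : 2 ≤ ((W₀.dropUntil a haW).takeUntil b hbD).length := by
        have h1 : ((W₀.dropUntil a haW).takeUntil b hbD).length ≠ 0 := fun h =>
          hab.ne (Walk.eq_of_length_eq_zero h)
        have h2 : ((W₀.dropUntil a haW).takeUntil b hbD).length ≠ 1 := by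
          intro h
          have he := edge_mem_of_length_one h
          have he2 := Walk.edges_dropUntil_subset _ haW (Walk.edges_takeUntil_subset _ hbD he)
          exact hnW he2
        omega
      set W' : (oneHopExt G P).Walk y x := (W₀.takeUntil a haW).append
        (Walk.cons (oneHopExt_adj hab (Or.inr hbP)) ((W₀.dropUntil a haW).dropUntil b hbD))
        with hW'def
      have hW'len : W'.length =
          (W₀.takeUntil a haW).length + (((W₀.dropUntil a haW).dropUntil b hbD).length + 1) := by
        rw [hW'def, Walk.length_append, Walk.length_cons]
      refine ihn W'.length (by rw [hW'len]; omega) x y Q W' hQl hdist rfl ?_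
      intro w hw
      rw [hW'def, Walk.mem_support_append_iff, Walk.support_cons, List.mem_cons] at hw
      rcases hw with h | h
      · exact hW₀sup w (Walk.support_takeUntil_subset _ _ h)
      · rcases h with h | h
        · exact Or.inl (by rw [h]; exact haP)
        · exact hW₀sup w
            (Walk.support_dropUntil_subset _ _ (Walk.support_dropUntil_subset _ _ h))

end OneHopAux

/-- For a connected `k`-chordal graph `G` (`k ≥ 3`) of diameter at most `D` and a set `P`
inducing a connected subgraph, any two vertices `u, v ∈ P` are at distance at most
`k · dist_G(u,v)`, in particular at most `k·D`, in the 1-hop extension of `P`. -/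
theorem oneHopExt_dist_le_of_kChordal {V : Type*} [Fintype V] (G : SimpleGraph V)
    (k D : ℕ) (hk : 3 ≤ k) (hconn : G.Connected) (hchordal : KChordal G k)
    (hdiam : ∀ u v : V, G.dist u v ≤ D)
    (P : Set V) (hP : (G.induce P).Connected)
    (u v : V) (hu : u ∈ P) (hv : v ∈ P) :
    (oneHopExt G P).dist u v ≤ k * G.dist u v ∧ (oneHopExt G P).dist u v ≤ k * D := by
  classical
  obtain ⟨Q, hQ⟩ := (hconn u v).exists_walk_length_eq_dist
  obtain ⟨w⟩ := hP.preconnected ⟨v, hv⟩ ⟨u, hu⟩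
  let f : (G.induce P) →g (oneHopExt G P) :=
    ⟨Subtype.val, fun {a b} h => ⟨h, Or.inl a.2⟩⟩
  have hWsup : ∀ z ∈ (w.map f).support, z ∈ P ∨ z = u ∨ z = v := by
    intro z hz
    rw [SimpleGraph.Walk.support_map] at hz
    obtain ⟨z', hz', rfl⟩ := List.mem_map.mp hz
    exact Or.inl z'.2
  have h1 : (oneHopExt G P).dist u v ≤ (k - 1) * G.dist u v :=
    OneHopAux.key G P k hk hchordal (G.dist u v) (w.map f).length u v Q (w.map f)
      hQ rfl rfl hWsup
  have h2 : (oneHopExt G P).dist u v ≤ k * G.dist u v :=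
    h1.trans (Nat.mul_le_mul (Nat.sub_le k 1) le_rfl)
  exact ⟨h2, h2.trans (Nat.mul_le_mul le_rfl (hdiam u v))⟩
end

section
/- Let k ≥ 3 and let G be a connected k-chordal finite simple graph of diameter at most D. Let P ⊆ V(G) be a set of vertices such that the subgraph of G induced by P is connected, and let G_P be the 1-hop extension of P in G. Then for all vertices u, v of G_P (i.e., u, v ∈ N⁺(P)), the distance between u and v in G_P is at most kD + 2. -/
/-- The closed neighborhood `N⁺(P) = P ∪ N(P)` of a vertex set `P`; this is the vertex
set of the 1-hop extension of `P`. -/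
def nbhdPlus {V : Type*} (G : SimpleGraph V) (P : Set V) : Set V :=
  P ∪ {v | ∃ p ∈ P, G.Adj p v}

namespace OneHopAux

open SimpleGraph

variable {V : Type*} {G : SimpleGraph V}

/-- walk along a chain of adjacent vertices -/
def chainWalk (G : SimpleGraph V) (f : ℕ → V) :
    ∀ n, (∀ i, i < n → G.Adj (f i) (f (i+1))) → G.Walk (f 0) (f n)
  | 0, _ => Walk.nil
  | (n+1), h => (chainWalk G f n (fun i hi => h i (by omega))).concat (h n (by omega))

theorem chainWalk_length (f : ℕ → V) (n : ℕ) (h : ∀ i, i < n → G.Adj (f i) (f (i+1))) :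
    (chainWalk G f n h).length = n := by
  induction n with
  | zero => rfl
  | succ n ih => simp [chainWalk, SimpleGraph.Walk.length_concat, ih]

theorem chainWalk_support (f : ℕ → V) (n : ℕ) (h : ∀ i, i < n → G.Adj (f i) (f (i+1))) :
    (chainWalk G f n h).support = (List.range (n+1)).map f := by
  induction n with
  | zero => rfl
  | succ n ih =>
    simp only [chainWalk, SimpleGraph.Walk.support_concat, ih]
    rw [show n+1+1 = (n+1)+1 from rfl, List.range_succ, List.range_succ]
    simp [List.range_succ]

theorem chainWalk_edges (f : ℕ → V) (n : ℕ) (h : ∀ i, i < n → G.Adj (f i) (f (i+1))) :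
    (chainWalk G f n h).edges = (List.range n).map (fun i => s(f i, f (i+1))) := by
  induction n with
  | zero => rfl
  | succ n ih =>
    simp only [chainWalk, SimpleGraph.Walk.edges_concat, ih]
    rw [List.range_succ]
    simp


theorem mem_support_chainWalk {f : ℕ → V} {n : ℕ} {h : ∀ i, i < n → G.Adj (f i) (f (i+1))}
    {a : V} (ha : a ∈ (chainWalk G f n h).support) : ∃ i, i ≤ n ∧ f i = a := by
  rw [chainWalk_support] at ha
  simp only [List.mem_map, List.mem_range] at ha
  obtain ⟨i, hi, rfl⟩ := ha
  exact ⟨i, by omega, rfl⟩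

theorem chordless_cycle_bound {k : ℕ} (hch : KChordal G k) (f : ℕ → V) (n : ℕ) (hn : 2 ≤ n)
    (hadj : ∀ i, i < n → G.Adj (f i) (f (i+1))) (hcl : G.Adj (f n) (f 0))
    (hinj : ∀ i j, i ≤ n → j ≤ n → f i = f j → i = j)
    (hchord : ∀ i j, i ≤ n → j ≤ n → i + 1 < j → ¬(i = 0 ∧ j = n) → ¬ G.Adj (f i) (f j)) :
    n + 1 ≤ k := by
  by_contra hcon
  push_neg at hcon
  set p := chainWalk G f n hadj with hp
  have hpath : p.IsPath := by
    apply SimpleGraph.Walk.IsPath.mk'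
    rw [chainWalk_support]
    apply List.Nodup.map_on
    · intro x hx y hy hxy
      simp only [List.mem_range] at hx hy
      exact hinj x y (by omega) (by omega) hxy
    · exact List.nodup_range
  have hene : s(f n, f 0) ∉ p.edges := by
    rw [chainWalk_edges]
    simp only [List.mem_map, List.mem_range]
    rintro ⟨i, hi, hse⟩
    rw [Sym2.eq_iff] at hse
    rcases hse with ⟨h1, h2⟩ | ⟨h1, h2⟩
    · have := hinj i n (by omega) le_rfl h1; omega
    · have := hinj i 0 (by omega) (by omega) h1
      have := hinj (i+1) n (by omega) le_rfl h2
      omega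
  set c : G.Walk (f n) (f n) := SimpleGraph.Walk.cons hcl p with hc
  have hcyc : c.IsCycle := (SimpleGraph.Walk.cons_isCycle_iff p hcl).2 ⟨hpath, hene⟩
  have hlen : k < c.length := by
    rw [hc, SimpleGraph.Walk.length_cons, hp, chainWalk_length]; omega
  obtain ⟨a, b, ha, hb, hab, hne⟩ := hch (f n) c hcyc hlen
  have hsup : ∀ x, x ∈ c.support → ∃ i, i ≤ n ∧ f i = x := by
    intro x hx
    rw [hc, SimpleGraph.Walk.support_cons] at hx
    rcases List.mem_cons.mp hx with hx | hx
    · exact ⟨n, le_rfl, hx.symm⟩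
    · exact mem_support_chainWalk hx
  obtain ⟨i, hi, rfl⟩ := hsup a ha
  obtain ⟨j, hj, rfl⟩ := hsup b hb
  have hedges : ∀ i', i' < n → s(f i', f (i'+1)) ∈ c.edges := by
    intro i' hi'
    rw [hc, SimpleGraph.Walk.edges_cons, hp, chainWalk_edges]
    simp only [List.mem_cons, List.mem_map, List.mem_range]
    exact Or.inr ⟨i', hi', rfl⟩
  have hene' : s(f n, f 0) ∈ c.edges := by
    rw [hc, SimpleGraph.Walk.edges_cons]; exact List.mem_cons_self
  have hij : i ≠ j := fun h => hab.ne (h ▸ rfl)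
  rcases Nat.lt_or_ge i j with hlt | hge
  · rcases Nat.lt_or_ge (i+1) j with h2 | h2
    · rcases Classical.em (i = 0 ∧ j = n) with ⟨rfl, rfl⟩ | hno
      · exact hne (by rw [Sym2.eq_swap]; exact hene')
      · exact hchord i j hi hj h2 hno hab
    · have : j = i + 1 := by omega
      subst this
      exact hne (hedges i (by omega))
  · have hlt : j < i := by omega
    rcases Nat.lt_or_ge (j+1) i with h2 | h2
    · rcases Classical.em (j = 0 ∧ i = n) with ⟨rfl, rfl⟩ | hno
      · exact hne hene'
      · exact hchord j i hj hi h2 hno hab.symm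
    · have : i = j + 1 := by omega
      subst this
      exact hne (by rw [Sym2.eq_swap]; exact hedges j (by omega))


theorem dist_getVert_le (hc : G.Connected) {u v : V} (w : G.Walk u v) :
    ∀ i j, i ≤ j → G.dist (w.getVert i) (w.getVert j) ≤ j - i := by
  induction w with
  | nil =>
    intro i j _
    simp [SimpleGraph.Walk.getVert, SimpleGraph.dist_self]
  | @cons a b c h q ih =>
    intro i j hij
    cases i with
    | zero =>
      cases j with
      | zero => simp
      | succ j =>
        have h1 : G.dist a (q.getVert j) ≤ G.dist a b + G.dist b (q.getVert j) :=
          hc.dist_triangle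
        have h2 : G.dist a b ≤ 1 := by
          have := SimpleGraph.dist_le h.toWalk
          simpa [SimpleGraph.Adj.toWalk] using this
        have h3 : G.dist b (q.getVert j) ≤ j - 0 := by
          have := ih 0 j (by omega)
          simpa [SimpleGraph.Walk.getVert_zero] using this
        calc G.dist ((SimpleGraph.Walk.cons h q).getVert 0) ((SimpleGraph.Walk.cons h q).getVert (j+1))
            = G.dist a (q.getVert j) := rfl
          _ ≤ G.dist a b + G.dist b (q.getVert j) := h1
          _ ≤ 1 + j := by omega
          _ = j + 1 - 0 := by omega
    | succ i =>
      cases j with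
      | zero => omega
      | succ j =>
        have := ih i j (by omega)
        calc G.dist ((SimpleGraph.Walk.cons h q).getVert (i+1)) ((SimpleGraph.Walk.cons h q).getVert (j+1))
            = G.dist (q.getVert i) (q.getVert j) := rfl
          _ ≤ j - i := this
          _ ≤ (j+1) - (i+1) := by omega

theorem exists_geodesic_chain (hc : G.Connected) (x y : V) :
    ∃ f : ℕ → V, f 0 = x ∧ f (G.dist x y) = y ∧
      (∀ i, i < G.dist x y → G.Adj (f i) (f (i+1))) ∧
      (∀ i j, i ≤ G.dist x y → j ≤ G.dist x y → G.dist (f i) (f j) = Nat.dist i j) := by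
  obtain ⟨w, hw⟩ := hc.exists_walk_length_eq_dist x y
  refine ⟨w.getVert, SimpleGraph.Walk.getVert_zero w, by rw [← hw]; exact w.getVert_length, ?_, ?_⟩
  · intro i hi
    exact w.adj_getVert_succ (by omega)
  · have key : ∀ i j, i ≤ j → j ≤ G.dist x y → G.dist (w.getVert i) (w.getVert j) = j - i := by
      intro i j hij hj
      have hle := dist_getVert_le hc w i j hij
      have h1 : G.dist x (w.getVert i) ≤ i := by
        have := dist_getVert_le hc w 0 i (by omega)
        simpa [SimpleGraph.Walk.getVert_zero] using this
      have h2 : G.dist (w.getVert j) y ≤ w.length - j := by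
        have := dist_getVert_le hc w j w.length (by omega)
        simpa [SimpleGraph.Walk.getVert_length] using this
      have h3 : G.dist x y ≤ G.dist x (w.getVert i) + G.dist (w.getVert i) (w.getVert j)
          + G.dist (w.getVert j) y := by
        calc G.dist x y ≤ G.dist x (w.getVert j) + G.dist (w.getVert j) y := hc.dist_triangle
          _ ≤ (G.dist x (w.getVert i) + G.dist (w.getVert i) (w.getVert j)) + G.dist (w.getVert j) y := by
              have : G.dist x (w.getVert j) ≤ G.dist x (w.getVert i) + G.dist (w.getVert i) (w.getVert j) :=
                hc.dist_triangle
              omega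
      omega
    intro i j hi hj
    rcases le_or_gt i j with hij | hij
    · rw [key i j hij hj, Nat.dist_eq_sub_of_le hij]
    · rw [SimpleGraph.dist_comm, key j i (by omega) hi, Nat.dist_eq_sub_of_le_right (by omega)]


theorem claim_pair {k : ℕ} (hch : KChordal G k) (hk : 3 ≤ k)
    (ρ ω : ℕ → V) (m d : ℕ)
    (hρadj : ∀ i, i < m → G.Adj (ρ i) (ρ (i+1)))
    (hρind : ∀ i j, i ≤ m → j ≤ m → G.Adj (ρ i) (ρ j) → Nat.dist i j = 1)
    (hρinj : ∀ i j, i ≤ m → j ≤ m → ρ i = ρ j → i = j)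
    (hωadj : ∀ t, t < d → G.Adj (ω t) (ω (t+1)))
    (hωind : ∀ t s, t ≤ d → s ≤ d → G.Adj (ω t) (ω s) → Nat.dist t s = 1)
    (hωinj : ∀ t s, t ≤ d → s ≤ d → ω t = ω s → t = s)
    (t t' : ℕ) (htt : t < t') (htd : t' ≤ d)
    (hGt : ∃ i, i ≤ m ∧ (ρ i = ω t ∨ G.Adj (ρ i) (ω t)))
    (hGt' : ∃ i, i ≤ m ∧ (ρ i = ω t' ∨ G.Adj (ρ i) (ω t')))
    (hempty : ∀ τ, t < τ → τ < t' → ¬ ∃ i, i ≤ m ∧ (ρ i = ω τ ∨ G.Adj (ρ i) (ω τ))) :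
    ∃ i₀ i₁, i₀ ≤ m ∧ i₁ ≤ m ∧ (ρ i₀ = ω t ∨ G.Adj (ρ i₀) (ω t)) ∧
      (ρ i₁ = ω t' ∨ G.Adj (ρ i₁) (ω t')) ∧ Nat.dist i₀ i₁ + 2 ≤ k := by
  classical
  by_contra hcon
  push_neg at hcon
  set S : Set ℕ := {c | ∃ i₀ i₁, i₀ ≤ m ∧ i₁ ≤ m ∧ (ρ i₀ = ω t ∨ G.Adj (ρ i₀) (ω t)) ∧
      (ρ i₁ = ω t' ∨ G.Adj (ρ i₁) (ω t')) ∧ Nat.dist i₀ i₁ = c} with hS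
  have hSne : S.Nonempty := by
    obtain ⟨a, ham, ha⟩ := hGt
    obtain ⟨b, hbm, hb⟩ := hGt'
    exact ⟨Nat.dist a b, a, b, ham, hbm, ha, hb, rfl⟩
  obtain ⟨i₀, i₁, h0m, h1m, h0, h1, hdc⟩ := Nat.sInf_mem hSne
  set c := sInf S with hcdef
  have hmin : ∀ a b, a ≤ m → b ≤ m → (ρ a = ω t ∨ G.Adj (ρ a) (ω t)) →
      (ρ b = ω t' ∨ G.Adj (ρ b) (ω t')) → c ≤ Nat.dist a b :=
    fun a b ham hbm ha hb => Nat.sInf_le ⟨a, b, ham, hbm, ha, hb, rfl⟩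
  have hck : k ≤ c + 1 := by
    have := hcon i₀ i₁ h0m h1m h0 h1
    omega
  have hc2 : 2 ≤ c := by omega
  have htd' : t < d := lt_of_lt_of_le htt htd
  have heq_t : ∀ x, x ≤ m → ρ x ≠ ω t := by
    intro x hxm hxe
    rcases Nat.lt_or_ge (t+1) t' with hs | hs
    · exact hempty (t+1) (by omega) hs ⟨x, hxm, Or.inr (by rw [hxe]; exact hωadj t htd')⟩
    · have ht1 : t' = t + 1 := by omega
      have hxA' : G.Adj (ρ x) (ω t') := by rw [hxe, ht1]; exact hωadj t htd'
      have := hmin x x hxm hxm (Or.inl hxe) (Or.inr hxA')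
      rw [Nat.dist_self] at this
      omega
  have heq_t' : ∀ x, x ≤ m → ρ x ≠ ω t' := by
    intro x hxm hxe
    rcases Nat.lt_or_ge t (t'-1) with hs | hs
    · refine hempty (t'-1) hs (by omega) ⟨x, hxm, Or.inr ?_⟩
      rw [hxe]
      have h2 := hωadj (t'-1) (by omega)
      rw [show t'-1+1 = t' by omega] at h2
      exact h2.symm
    · have ht1 : t' = t + 1 := by omega
      have hxA : G.Adj (ρ x) (ω t) := by rw [hxe, ht1]; exact (hωadj t htd').symm
      have := hmin x x hxm hxm (Or.inr hxA) (Or.inl hxe)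
      rw [Nat.dist_self] at this
      omega
  have h0adj : G.Adj (ρ i₀) (ω t) := h0.resolve_left (heq_t i₀ h0m)
  have h1adj : G.Adj (ρ i₁) (ω t') := h1.resolve_left (heq_t' i₁ h1m)
  have hd01 : i₀ - i₁ + (i₁ - i₀) = c := by simpa [Nat.dist] using hdc
  set y : ℕ → ℕ := fun j => if i₀ ≤ i₁ then i₀ + j else i₀ - j with hy
  have hy0 : y 0 = i₀ := by simp [hy]
  have hyc : y c = i₁ := by
    simp only [hy]
    rcases le_or_gt i₀ i₁ with h | h
    · rw [if_pos h]; omega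
    · rw [if_neg (by omega)]; omega
  have hym : ∀ a, a ≤ c → y a ≤ m := by
    intro a ha
    simp only [hy]
    rcases le_or_gt i₀ i₁ with h | h
    · rw [if_pos h]; omega
    · rw [if_neg (by omega)]; omega
  have hydist : ∀ a b, a ≤ c → b ≤ c → Nat.dist (y a) (y b) = Nat.dist a b := by
    intro a b ha hb
    simp only [hy, Nat.dist]
    rcases le_or_gt i₀ i₁ with h | h
    · rw [if_pos h, if_pos h]; omega
    · rw [if_neg (by omega), if_neg (by omega)]; omega
  have hyadj : ∀ a, a < c → G.Adj (ρ (y a)) (ρ (y (a+1))) := by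
    intro a ha
    simp only [hy]
    rcases le_or_gt i₀ i₁ with h | h
    · rw [if_pos h, if_pos h, show i₀ + (a+1) = (i₀+a)+1 from rfl]
      exact hρadj (i₀+a) (by omega)
    · rw [if_neg (by omega), if_neg (by omega)]
      have h1' : i₀ - (a+1) + 1 = i₀ - a := by omega
      have h2 := hρadj (i₀ - (a+1)) (by omega)
      rw [h1'] at h2
      exact h2.symm
  set n := c + (t' - t) + 1 with hn
  set f : ℕ → V := fun z => if z = 0 then ω t else if z ≤ c + 1 then ρ (y (z - 1))
      else ω (t' - (z - (c+2))) with hf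
  have hf0 : f 0 = ω t := by simp [hf]
  have hfZ1 : ∀ z, 1 ≤ z → z ≤ c + 1 → f z = ρ (y (z-1)) := by
    intro z hz1 hz2
    simp only [hf]
    rw [if_neg (by omega), if_pos hz2]
  have hfZ2 : ∀ z, c + 2 ≤ z → f z = ω (t' - (z - (c+2))) := by
    intro z hz
    simp only [hf]
    rw [if_neg (by omega), if_neg (by omega)]
  have hσrange : ∀ z, c + 2 ≤ z → z ≤ n → t + 1 ≤ t' - (z - (c+2)) ∧ t' - (z - (c+2)) ≤ t' := by
    intro z h1 h2
    omega
  -- the cycle is chordless, hence short: contradiction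
  have hbound : n + 1 ≤ k := by
    apply chordless_cycle_bound hch f n (by omega)
    · -- chain adjacency
      intro z hz
      rcases Nat.eq_or_lt_of_le (Nat.zero_le z) with hz0 | hz0
      · rw [← hz0, hf0, hfZ1 1 le_rfl (by omega)]
        simpa [hy0] using h0adj.symm
      · rcases Nat.lt_or_ge z (c+1) with hz1 | hz1
        · rw [hfZ1 z (by omega) (by omega), hfZ1 (z+1) (by omega) (by omega)]
          have := hyadj (z-1) (by omega)
          rw [show z-1+1 = z+1-1 by omega] at this
          exact this
        · rcases Nat.eq_or_lt_of_le hz1 with hz2 | hz2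
          · rw [hfZ1 z (by omega) (by omega), hfZ2 (z+1) (by omega)]
            rw [show z - 1 = c by omega, hyc, show z+1-(c+2) = 0 by omega]
            simpa using h1adj
          · rw [hfZ2 z (by omega), hfZ2 (z+1) (by omega)]
            have ha : z + 1 - (c+2) ≤ t' - t - 1 := by omega
            have h2 := hωadj (t' - (z+1-(c+2))) (by omega)
            rw [show t' - (z+1-(c+2)) + 1 = t' - (z-(c+2)) by omega] at h2
            exact h2.symm
    · -- closing edge
      rw [hfZ2 n (by omega), hf0, show t' - (n - (c+2)) = t + 1 by omega]
      exact (hωadj t htd').symm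
    · -- injectivity
      have key : ∀ a b, a ≤ n → b ≤ n → a < b → f a = f b → False := by
        intro a b ham hbm hab heq
        rcases Nat.eq_or_lt_of_le (Nat.zero_le a) with ha0 | ha0
        · rw [← ha0, hf0] at heq
          rcases Nat.lt_or_ge b (c+2) with hb1 | hb1
          · rw [hfZ1 b (by omega) (by omega)] at heq
            exact heq_t (y (b-1)) (hym (b-1) (by omega)) heq.symm
          · rw [hfZ2 b hb1] at heq
            have := hωinj t (t' - (b-(c+2))) (by omega) (by omega) heq
            have := (hσrange b hb1 hbm).1
            omega
        · rcases Nat.lt_or_ge a (c+2) with ha1 | ha1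
          · rcases Nat.lt_or_ge b (c+2) with hb1 | hb1
            · rw [hfZ1 a (by omega) (by omega), hfZ1 b (by omega) (by omega)] at heq
              have := hρinj _ _ (hym (a-1) (by omega)) (hym (b-1) (by omega)) heq
              have h2 := hydist (a-1) (b-1) (by omega) (by omega)
              rw [this, Nat.dist_self] at h2
              simp only [Nat.dist] at h2
              omega
            · rw [hfZ1 a (by omega) (by omega), hfZ2 b hb1] at heq
              rcases Nat.eq_or_lt_of_le hb1 with hb2 | hb2
              · rw [show b - (c+2) = 0 by omega] at heq
                simp only [Nat.sub_zero] at heq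
                exact heq_t' (y (a-1)) (hym (a-1) (by omega)) heq
              · have hr := hσrange b hb1 hbm
                refine hempty (t' - (b-(c+2))) (by omega) (by omega)
                  ⟨y (a-1), hym (a-1) (by omega), Or.inl heq⟩
          · rw [hfZ2 a ha1, hfZ2 b (by omega)] at heq
            have := hωinj _ _ (by omega) (by omega) heq
            omega
      intro a b ham hbm heq
      rcases lt_trichotomy a b with h | h | h
      · exact absurd heq (fun hq => key a b ham hbm h hq)
      · exact h
      · exact absurd heq.symm (fun hq => key b a hbm ham h hq)
    · -- chordfree
      intro a b ham hbm hab hne hadj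
      rcases Nat.eq_or_lt_of_le (Nat.zero_le a) with ha0 | ha0
      · rw [← ha0, hf0] at hadj
        rcases Nat.lt_or_ge b (c+2) with hb1 | hb1
        · rw [hfZ1 b (by omega) (by omega)] at hadj
          have hmem := hmin (y (b-1)) i₁ (hym (b-1) (by omega)) h1m (Or.inr hadj.symm) h1
          have h2 := hydist (b-1) c (by omega) le_rfl
          rw [hyc] at h2
          rw [h2] at hmem
          simp only [Nat.dist] at hmem
          omega
        · rw [hfZ2 b hb1] at hadj
          have hbn : b < n := by
            rcases Nat.eq_or_lt_of_le hbm with h | h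
            · exact absurd ⟨ha0.symm, h⟩ hne
            · exact h
          have := hωind t (t' - (b-(c+2))) (by omega) (by omega) hadj
          simp only [Nat.dist] at this
          omega
      · rcases Nat.lt_or_ge a (c+2) with ha1 | ha1
        · rcases Nat.lt_or_ge b (c+2) with hb1 | hb1
          · rw [hfZ1 a (by omega) (by omega), hfZ1 b (by omega) (by omega)] at hadj
            have := hρind _ _ (hym (a-1) (by omega)) (hym (b-1) (by omega)) hadj
            rw [hydist (a-1) (b-1) (by omega) (by omega)] at this
            simp only [Nat.dist] at this
            omega
          · rw [hfZ1 a (by omega) (by omega), hfZ2 b hb1] at hadj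
            rcases Nat.eq_or_lt_of_le hb1 with hb2 | hb2
            · rw [show b - (c+2) = 0 by omega] at hadj
              simp only [Nat.sub_zero] at hadj
              have hmem := hmin i₀ (y (a-1)) h0m (hym (a-1) (by omega)) h0 (Or.inr hadj)
              have h2 := hydist 0 (a-1) (by omega) (by omega)
              rw [hy0] at h2
              rw [h2] at hmem
              simp only [Nat.dist] at hmem
              omega
            · have hr := hσrange b hb1 hbm
              refine hempty (t' - (b-(c+2))) (by omega) (by omega)
                ⟨y (a-1), hym (a-1) (by omega), Or.inr hadj⟩
        · rw [hfZ2 a ha1, hfZ2 b (by omega)] at hadj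
          have := hωind _ _ (by omega) (by omega) hadj
          simp only [Nat.dist] at this
          omega
  omega


theorem chain_walk_between {H : SimpleGraph V} (g : ℕ → V) (M : ℕ)
    (hadj : ∀ i, i < M → H.Adj (g i) (g (i+1))) (a b : ℕ) (ha : a ≤ M) (hb : b ≤ M) :
    ∃ w : H.Walk (g a) (g b), w.length = Nat.dist a b := by
  rcases le_or_gt a b with hab | hab
  · have hch : ∀ i, i < b - a → H.Adj ((fun j => g (a+j)) i) ((fun j => g (a+j)) (i+1)) := by
      intro i hi
      simpa [show a + (i+1) = (a+i)+1 from rfl] using hadj (a+i) (by omega)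
    refine ⟨(chainWalk H (fun j => g (a+j)) (b-a) hch).copy (by simp)
      (by rw [show a + (b-a) = b by omega]), ?_⟩
    rw [SimpleGraph.Walk.length_copy, chainWalk_length, Nat.dist_eq_sub_of_le hab]
  · have hch : ∀ i, i < a - b → H.Adj ((fun j => g (a-j)) i) ((fun j => g (a-j)) (i+1)) := by
      intro i hi
      have h2 := hadj (a - (i+1)) (by omega)
      rw [show a - (i+1) + 1 = a - i by omega] at h2
      exact h2.symm
    refine ⟨(chainWalk H (fun j => g (a-j)) (a-b) hch).copy (by simp)
      (by rw [show a - (a-b) = b by omega]), ?_⟩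
    rw [SimpleGraph.Walk.length_copy, chainWalk_length, Nat.dist_eq_sub_of_le_right (by omega)]

end OneHopAux

/-- For a connected `k`-chordal graph `G` (`k ≥ 3`) of diameter at most `D` and a set `P`
inducing a connected subgraph, any two vertices of the 1-hop extension of `P`
(i.e. vertices of `N⁺(P)`) are at distance at most `k·D + 2` in the 1-hop extension. -/
theorem oneHopExt_dist_le_of_kChordal_nbhd {V : Type*} [Fintype V] (G : SimpleGraph V)
    (k D : ℕ) (hk : 3 ≤ k) (hconn : G.Connected) (hchordal : KChordal G k)
    (hdiam : ∀ u v : V, G.dist u v ≤ D)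
    (P : Set V) (hP : (G.induce P).Connected)
    (u v : V) (hu : u ∈ nbhdPlus G P) (hv : v ∈ nbhdPlus G P) :
    (oneHopExt G P).dist u v ≤ k * D + 2 := by
  classical
  have key : ∀ p q : V, ∀ hp : p ∈ P, ∀ hq : q ∈ P,
      ∃ w : (oneHopExt G P).Walk p q, w.length ≤ k * G.dist p q := by
    intro p q hp hq
    obtain ⟨ω, hω0, hωd, hωadj, hωdist⟩ := OneHopAux.exists_geodesic_chain hconn p q
    set d := G.dist p q with hd
    rcases Nat.eq_zero_or_pos d with hd0 | hd1
    · have : p = q := hconn.dist_eq_zero_iff.mp hd0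
      subst this
      exact ⟨SimpleGraph.Walk.nil, by simp⟩
    obtain ⟨f', hf'0, hf'm, hf'adj, hf'dist⟩ :=
      OneHopAux.exists_geodesic_chain hP ⟨p, hp⟩ ⟨q, hq⟩
    set m := (G.induce P).dist ⟨p,hp⟩ ⟨q,hq⟩ with hm
    set ρ : ℕ → V := fun i => (f' i : V) with hρ
    have hρP : ∀ i, ρ i ∈ P := fun i => (f' i).2
    have hρ0 : ρ 0 = p := by rw [hρ]; simp only [hf'0]
    have hρm : ρ m = q := by rw [hρ]; simp only [hf'm]
    have hρadjG : ∀ i, i < m → G.Adj (ρ i) (ρ (i+1)) := by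
      intro i hi
      exact hf'adj i hi
    have hρind : ∀ i j, i ≤ m → j ≤ m → G.Adj (ρ i) (ρ j) → Nat.dist i j = 1 := by
      intro i j hi hj hadj
      have hadj' : (G.induce P).Adj (f' i) (f' j) := hadj
      have h1 : (G.induce P).dist (f' i) (f' j) ≤ 1 := by
        have := SimpleGraph.dist_le hadj'.toWalk
        simpa [SimpleGraph.Adj.toWalk] using this
      have h2 := hf'dist i j hi hj
      have h3 : Nat.dist i j ≠ 0 := by
        intro h0
        have : i = j := by simp only [Nat.dist] at h0; omega
        subst this
        exact G.loopless.irrefl _ hadj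
      omega
    have hρinj : ∀ i j, i ≤ m → j ≤ m → ρ i = ρ j → i = j := by
      intro i j hi hj heq
      have heq' : f' i = f' j := Subtype.ext heq
      have h2 := hf'dist i j hi hj
      rw [heq', SimpleGraph.dist_self] at h2
      simp only [Nat.dist] at h2
      omega
    have hωind : ∀ t s, t ≤ d → s ≤ d → G.Adj (ω t) (ω s) → Nat.dist t s = 1 := by
      intro t s ht hs hadj
      have h1 : G.dist (ω t) (ω s) ≤ 1 := by
        have := SimpleGraph.dist_le hadj.toWalk
        simpa [SimpleGraph.Adj.toWalk] using this
      have h2 := hωdist t s ht hs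
      have h3 : Nat.dist t s ≠ 0 := by
        intro h0
        have : t = s := by simp only [Nat.dist] at h0; omega
        subst this
        exact G.loopless.irrefl _ hadj
      omega
    have hωinj : ∀ t s, t ≤ d → s ≤ d → ω t = ω s → t = s := by
      intro t s ht hs heq
      have h2 := hωdist t s ht hs
      rw [heq, SimpleGraph.dist_self] at h2
      simp only [Nat.dist] at h2
      omega
    have hρH : ∀ i, i < m → (oneHopExt G P).Adj (ρ i) (ρ (i+1)) :=
      fun i hi => ⟨hρadjG i hi, Or.inl (hρP i)⟩
    have hGood0 : ∃ i, i ≤ m ∧ (ρ i = ω 0 ∨ G.Adj (ρ i) (ω 0)) :=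
      ⟨0, Nat.zero_le _, Or.inl (by rw [hρ0, hω0])⟩
    have Phi : ∀ t, t ≤ d → 1 ≤ t → (∃ i, i ≤ m ∧ (ρ i = ω t ∨ G.Adj (ρ i) (ω t))) →
        ∃ i, i ≤ m ∧ (ρ i = ω t ∨ G.Adj (ρ i) (ω t)) ∧
          ∃ w : (oneHopExt G P).Walk p (ρ i), w.length + 1 ≤ k * t := by
      intro t
      induction t using Nat.strong_induction_on with
      | _ t IH =>
        intro htd ht1 hGood
        set Q : ℕ → Prop := fun τ => ∃ i, i ≤ m ∧ (ρ i = ω τ ∨ G.Adj (ρ i) (ω τ)) with hQ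
        set t₀ := Nat.findGreatest Q (t-1) with ht₀
        have ht₀G : Q t₀ := Nat.findGreatest_spec (Nat.zero_le _) (by rw [hQ]; exact hGood0)
        have ht₀le : t₀ ≤ t - 1 := Nat.findGreatest_le _
        have hemp : ∀ τ, t₀ < τ → τ < t → ¬ Q τ := by
          intro τ h1 h2
          exact Nat.findGreatest_is_greatest h1 (by omega)
        obtain ⟨i₀, i₁, h0m, h1m, h0, h1, hdk⟩ :=
          OneHopAux.claim_pair hchordal hk ρ ω m d hρadjG hρind hρinj hωadj hωind hωinj
            t₀ t (by omega) htd ht₀G hGood hemp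
        obtain ⟨wR, hwR⟩ := OneHopAux.chain_walk_between ρ m hρH i₀ i₁ h0m h1m
        refine ⟨i₁, h1m, h1, ?_⟩
        rcases Nat.eq_zero_or_pos t₀ with ht₀0 | ht₀1
        · -- first segment: from p directly
          have hstart : ∃ ws : (oneHopExt G P).Walk p (ρ i₀), ws.length ≤ 1 := by
            rw [ht₀0, hω0] at h0
            rcases h0 with h0 | h0
            · exact ⟨SimpleGraph.Walk.nil.copy rfl h0.symm, by simp⟩
            · exact ⟨(show (oneHopExt G P).Adj p (ρ i₀) from
                ⟨h0.symm, Or.inl hp⟩).toWalk, le_rfl⟩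
          obtain ⟨ws, hws⟩ := hstart
          refine ⟨ws.append wR, ?_⟩
          rw [SimpleGraph.Walk.length_append]
          have hkt : k ≤ k * t := by
            calc k = k * 1 := (mul_one k).symm
            _ ≤ k * t := Nat.mul_le_mul_left k ht1
          omega
        · obtain ⟨i, him, hi, w₀, hw₀⟩ := IH t₀ (by omega) (by omega) ht₀1 ht₀G
          -- connector from ρ i to ρ i₀ of length ≤ 2
          have hcon2 : ∃ wc : (oneHopExt G P).Walk (ρ i) (ρ i₀), wc.length ≤ 2 := by
            rcases hi with hi | hi
            · rcases h0 with h0 | h0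
              · exact ⟨SimpleGraph.Walk.nil.copy rfl (by rw [hi, ← h0]), by simp⟩
              · refine ⟨(show (oneHopExt G P).Adj (ρ i) (ρ i₀) from ?_).toWalk,
                  by simp [SimpleGraph.Adj.toWalk]⟩
                exact ⟨by rw [hi]; exact h0.symm, Or.inr (hρP i₀)⟩
            · rcases h0 with h0 | h0
              · refine ⟨(show (oneHopExt G P).Adj (ρ i) (ρ i₀) from ?_).toWalk,
                  by simp [SimpleGraph.Adj.toWalk]⟩
                exact ⟨by rw [h0]; exact hi, Or.inl (hρP i)⟩
              · refine ⟨SimpleGraph.Walk.cons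
                  (show (oneHopExt G P).Adj (ρ i) (ω t₀) from ⟨hi, Or.inl (hρP i)⟩)
                  (show (oneHopExt G P).Adj (ω t₀) (ρ i₀) from ⟨h0.symm, Or.inr (hρP i₀)⟩).toWalk,
                  by simp [SimpleGraph.Adj.toWalk]⟩
          obtain ⟨wc, hwc⟩ := hcon2
          refine ⟨(w₀.append wc).append wR, ?_⟩
          rw [SimpleGraph.Walk.length_append, SimpleGraph.Walk.length_append]
          have hmul : k * t₀ + k ≤ k * t := by
            calc k * t₀ + k = k * (t₀ + 1) := by ring
            _ ≤ k * t := Nat.mul_le_mul_left k (by omega)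
          omega
    have hGoodd : ∃ i, i ≤ m ∧ (ρ i = ω d ∨ G.Adj (ρ i) (ω d)) :=
      ⟨m, le_rfl, Or.inl (by rw [hρm, hωd])⟩
    obtain ⟨i, him, hi, w, hw⟩ := Phi d le_rfl hd1 hGoodd
    rcases hi with hi | hi
    · exact ⟨w.copy rfl (by rw [hi, hωd]), by rw [SimpleGraph.Walk.length_copy]; omega⟩
    · rw [hωd] at hi
      exact ⟨w.concat (show (oneHopExt G P).Adj (ρ i) q from ⟨hi, Or.inl (hρP i)⟩), by rw [SimpleGraph.Walk.length_concat]; omega⟩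
  -- assemble
  have hu' : ∃ p₀, ∃ _ : p₀ ∈ P, ∃ w : (oneHopExt G P).Walk u p₀, w.length ≤ 1 := by
    rcases hu with hu | hu
    · exact ⟨u, hu, SimpleGraph.Walk.nil, by simp⟩
    · obtain ⟨p₀, hp₀, hadj⟩ := hu
      exact ⟨p₀, hp₀, (show (oneHopExt G P).Adj u p₀ from
        ⟨hadj.symm, Or.inr hp₀⟩).toWalk, le_rfl⟩
  have hv' : ∃ p₁, ∃ _ : p₁ ∈ P, ∃ w : (oneHopExt G P).Walk p₁ v, w.length ≤ 1 := by
    rcases hv with hv | hv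
    · exact ⟨v, hv, SimpleGraph.Walk.nil, by simp⟩
    · obtain ⟨p₁, hp₁, hadj⟩ := hv
      exact ⟨p₁, hp₁, (show (oneHopExt G P).Adj p₁ v from
        ⟨hadj, Or.inl hp₁⟩).toWalk, le_rfl⟩
  obtain ⟨p₀, hp₀, wu, hwu⟩ := hu'
  obtain ⟨p₁, hp₁, wv, hwv⟩ := hv'
  obtain ⟨wm, hwm⟩ := key p₀ p₁ hp₀ hp₁
  have hmid : wm.length ≤ k * D := by
    have h1 : k * G.dist p₀ p₁ ≤ k * D := Nat.mul_le_mul_left k (hdiam p₀ p₁)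
    omega
  have := SimpleGraph.dist_le ((wu.append wm).append wv)
  rw [SimpleGraph.Walk.length_append, SimpleGraph.Walk.length_append] at this
  omega
end

section
/- Let k ≥ 3 and let G be a connected k-chordal finite simple graph of diameter at most D. Let P_1, …, P_N be pairwise disjoint subsets of V(G) whose union is V(G), each inducing a connected subgraph of G, and for each i let G_i be the 1-hop extension of P_i in G. Then: (1) for every i, any two vertices of G_i are at distance at most kD + 2 in G_i (dilation at most kD+2); and (2) every edge of G belongs to at most two of the subgraphs G_1, …, G_N (congestion at most 2). In other words, the 1-hop extension yields a (kD+2, 2)-shortcut for the partition {P_1, …, P_N}. -/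
namespace ShortcutAux

open SimpleGraph

variable {V : Type*}

/-- The graph induced on `P`, viewed as a graph on the ambient vertex type. -/
def inP (G : SimpleGraph V) (P : Set V) : SimpleGraph V where
  Adj a b := G.Adj a b ∧ a ∈ P ∧ b ∈ P
  symm := ⟨fun a b h => ⟨h.1.symm, h.2.2, h.2.1⟩⟩
  loopless := ⟨fun a h => G.loopless.irrefl a h.1⟩

lemma inP_le (G : SimpleGraph V) (P : Set V) : inP G P ≤ G := fun _ _ h => h.1

lemma inP_le_oneHop (G : SimpleGraph V) (P : Set V) : inP G P ≤ oneHopExt G P :=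
  fun _ _ h => ⟨h.1, Or.inl h.2.1⟩

lemma mapLe_support {G G' : SimpleGraph V} (h : G ≤ G') {u v : V} (p : G.Walk u v) :
    (p.mapLe h).support = p.support := by
  induction p with
  | nil => rfl
  | cons ha p ih => simp_all [Walk.mapLe]

lemma mapLe_edges {G G' : SimpleGraph V} (h : G ≤ G') {u v : V} (p : G.Walk u v) :
    (p.mapLe h).edges = p.edges := by
  induction p with
  | nil => rfl
  | cons ha p ih => simp_all [Walk.mapLe]

lemma mapLe_length {G G' : SimpleGraph V} (h : G ≤ G') {u v : V} (p : G.Walk u v) :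
    (p.mapLe h).length = p.length := by
  induction p with
  | nil => rfl
  | cons ha p ih => simp_all [Walk.mapLe]

lemma edges_of_length_one {G : SimpleGraph V} {u v : V} {p : G.Walk u v} (h : p.length = 1) :
    s(u, v) ∈ p.edges := by
  cases p with
  | nil => simp at h
  | cons ha q =>
    cases q with
    | nil => simp
    | cons hb r => simp [Walk.length_cons] at h

/-- On a length-minimal walk, any two adjacent support vertices are joined by an
edge of the walk (no "chords"). -/
lemma chord_mem_of_min [DecidableEq V] {G : SimpleGraph V} {u v : V} (w : G.Walk u v)
    (hmin : ∀ w' : G.Walk u v, w.length ≤ w'.length) {a b : V}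
    (ha : a ∈ w.support) (hb : b ∈ w.support) (hab : G.Adj a b) :
    s(a, b) ∈ w.edges := by
  have hspec := w.take_spec ha
  have hb' : b ∈ (w.takeUntil a ha).support ∨ b ∈ (w.dropUntil a ha).support := by
    rw [← Walk.mem_support_append_iff, hspec]; exact hb
  have e0 : (w.takeUntil a ha).length + (w.dropUntil a ha).length = w.length := by
    rw [← Walk.length_append, hspec]
  rcases hb' with hb1 | hb2
  · -- b occurs on the first part
    have hspec1 := (w.takeUntil a ha).take_spec hb1
    have e1 : ((w.takeUntil a ha).takeUntil b hb1).length
        + ((w.takeUntil a ha).dropUntil b hb1).length = (w.takeUntil a ha).length := by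
      rw [← Walk.length_append, hspec1]
    have hmin' := hmin (((w.takeUntil a ha).takeUntil b hb1).append
      (Walk.cons hab.symm (w.dropUntil a ha)))
    rw [Walk.length_append, Walk.length_cons] at hmin'
    have h1 : ((w.takeUntil a ha).dropUntil b hb1).length ≤ 1 := by omega
    rcases Nat.le_one_iff_eq_zero_or_eq_one.mp h1 with h0 | hone
    · exact absurd (Walk.eq_of_length_eq_zero h0).symm hab.ne
    · have hmem : s(b, a) ∈ ((w.takeUntil a ha).dropUntil b hb1).edges :=
        edges_of_length_one hone
      have hmem2 : s(b, a) ∈ w.edges :=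
        (Walk.edges_takeUntil_subset w ha)
          ((Walk.edges_dropUntil_subset _ hb1) hmem)
      rwa [Sym2.eq_swap] at hmem2
  · -- b occurs on the second part
    have hspec2 := (w.dropUntil a ha).take_spec hb2
    have e2 : ((w.dropUntil a ha).takeUntil b hb2).length
        + ((w.dropUntil a ha).dropUntil b hb2).length = (w.dropUntil a ha).length := by
      rw [← Walk.length_append, hspec2]
    have hmin' := hmin ((w.takeUntil a ha).append
      (Walk.cons hab ((w.dropUntil a ha).dropUntil b hb2)))
    rw [Walk.length_append, Walk.length_cons] at hmin'
    have h1 : ((w.dropUntil a ha).takeUntil b hb2).length ≤ 1 := by omega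
    rcases Nat.le_one_iff_eq_zero_or_eq_one.mp h1 with h0 | hone
    · exact absurd (Walk.eq_of_length_eq_zero h0) hab.ne
    · have hmem : s(a, b) ∈ ((w.dropUntil a ha).takeUntil b hb2).edges :=
        edges_of_length_one hone
      exact (Walk.edges_dropUntil_subset w ha)
        ((Walk.edges_takeUntil_subset _ hb2) hmem)

lemma inP_walk_support {G : SimpleGraph V} {P : Set V} {a b : V}
    (w : (inP G P).Walk a b) (hb : b ∈ P) : ∀ x ∈ w.support, x ∈ P := by
  induction w with
  | nil =>
    intro x hx
    rw [Walk.support_nil, List.mem_singleton] at hx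
    subst hx; exact hb
  | cons h q ih =>
    intro x hx
    rw [Walk.support_cons] at hx
    rcases List.mem_cons.mp hx with rfl | hx
    · exact h.2.1
    · exact ih hb x hx


/-- Key lemma: given `p, q ∈ P` joined to the endpoints `z, z'` of a shortest
`G`-path `τ` avoiding `P`, there is a short walk from `z` to `z'` in the 1-hop
extension of `P`. -/
lemma claimW [DecidableEq V] {G : SimpleGraph V} {P : Set V} {k : ℕ} (hk : 3 ≤ k)
    (hconn : G.Connected) (hchordal : KChordal G k)
    (hreach : ∀ ⦃a b : V⦄, a ∈ P → b ∈ P → (inP G P).Reachable a b) :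
    ∀ β μ (z z' : V) (τ : G.Walk z z') (p q : V), p ∈ P → q ∈ P →
      G.Adj p z → G.Adj z' q → τ.IsPath → (∀ x ∈ τ.support, x ∉ P) →
      τ.length = G.dist z z' → τ.length = β → (inP G P).dist p q ≤ μ →
      ∃ w : (oneHopExt G P).Walk z z', w.length ≤ k * β := by
  intro β
  induction β using Nat.strong_induction_on with
  | _ β ihβ =>
  intro μ
  induction μ using Nat.strong_induction_on with
  | _ μ ihμ =>
  intro z z' τ p q hp hq hpz hz'q hτpath hτP hτdist hτlen hdistμ
  rcases Nat.eq_zero_or_pos β with hβ0 | hβpos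
  · -- τ is trivial
    subst hβ0
    have hzz : z = z' := Walk.eq_of_length_eq_zero hτlen
    subst hzz
    exact ⟨Walk.nil, by simp⟩
  have hzP : z ∉ P := hτP z τ.start_mem_support
  have hz'P : z' ∉ P := hτP z' τ.end_mem_support
  by_cases hpq : p = q
  · -- degenerate: walk z - p - z'
    subst hpq
    refine ⟨Walk.cons (show (oneHopExt G P).Adj _ _ from ⟨hpz.symm, Or.inr hp⟩) (Walk.cons (show (oneHopExt G P).Adj _ _ from ⟨hz'q.symm, Or.inl hp⟩) Walk.nil), ?_⟩
    have hkb : k ≤ k * β := Nat.le_mul_of_pos_right k hβpos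
    simp only [Walk.length_cons, Walk.length_nil]
    omega
  -- now p ≠ q; get a shortest path R₀ in the induced graph
  obtain ⟨R₀, hR₀len⟩ := (hreach hp hq).exists_walk_length_eq_dist
  have hRpath : R₀.IsPath := R₀.isPath_of_length_eq_dist hR₀len
  have hm1 : 1 ≤ R₀.length := by
    rcases Nat.eq_zero_or_pos R₀.length with h0 | h
    · exact absurd (Walk.eq_of_length_eq_zero h0) hpq
    · exact h
  have hmμ : R₀.length ≤ μ := by rw [hR₀len]; exact hdistμ
  by_cases hshort : R₀.length + 2 ≤ k * β
  · -- R itself (plus the two connecting edges) is short enough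
    refine ⟨Walk.cons (show (oneHopExt G P).Adj _ _ from ⟨hpz.symm, Or.inr hp⟩)
      ((R₀.mapLe (inP_le_oneHop G P)).concat (show (oneHopExt G P).Adj _ _ from ⟨hz'q.symm, Or.inl hq⟩)), ?_⟩
    simp only [Walk.length_cons, Walk.length_concat, mapLe_length]
    omega
  -- otherwise build the cycle W and find a chord
  push_neg at hshort
  set RG : G.Walk p q := R₀.mapLe (inP_le G P) with hRGdef
  set W : G.Walk p p := Walk.cons hpz (τ.append (Walk.cons hz'q RG.reverse)) with hWdef
  have hRsupP : ∀ x ∈ R₀.support, x ∈ P := inP_walk_support R₀ hq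
  have hτmin : ∀ w' : G.Walk z z', τ.length ≤ w'.length := by
    intro w'; rw [hτdist]; exact SimpleGraph.dist_le w'
  have hRmin : ∀ w' : (inP G P).Walk p q, R₀.length ≤ w'.length := by
    intro w'; rw [hR₀len]; exact SimpleGraph.dist_le w'
  have hWedges : W.edges = s(p, z) :: (τ.edges ++ s(z', q) :: R₀.edges.reverse) := by
    have hcoe : ⇑(SimpleGraph.Hom.ofLE (inP_le G P)) = id := rfl
    rw [hWdef, hRGdef]
    simp [Walk.edges_append, Walk.edges_reverse, hcoe, Sym2.map_id]
  have hmemτ : ∀ e ∈ τ.edges, e ∈ W.edges := by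
    intro e he; rw [hWedges]; simp [he]
  have hmemR : ∀ e ∈ R₀.edges, e ∈ W.edges := by
    intro e he; rw [hWedges]; simp [he]
  have hmem_pz : s(p, z) ∈ W.edges := by rw [hWedges]; simp
  have hmem_zq : s(z', q) ∈ W.edges := by rw [hWedges]; simp
  have hclass : ∀ x ∈ W.support, x ∈ τ.support ∨ x ∈ R₀.support := by
    intro x hx
    rw [hWdef, Walk.support_cons] at hx
    rcases List.mem_cons.mp hx with rfl | hx
    · exact Or.inr R₀.start_mem_support
    · rcases (Walk.mem_support_append_iff _ _).mp hx with h | h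
      · exact Or.inl h
      · rw [Walk.support_cons] at h
        rcases List.mem_cons.mp h with rfl | h
        · exact Or.inl τ.end_mem_support
        · have hcoe : ⇑(SimpleGraph.Hom.ofLE (inP_le G P)) = id := rfl
          rw [Walk.support_reverse, List.mem_reverse, hRGdef, Walk.mapLe,
            Walk.support_map, hcoe, List.map_id] at h
          exact Or.inr h
  have hWcyc : W.IsCycle := by
    refine ⟨⟨⟨?_⟩, by simp [hWdef]⟩, ?_⟩
    · -- edges are nodup
      rw [hWedges, List.nodup_cons, List.nodup_append', List.nodup_cons]
      refine ⟨?_, Walk.edges_nodup_of_support_nodup hτpath.support_nodup,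
        ⟨?_, List.nodup_reverse.mpr (Walk.edges_nodup_of_support_nodup hRpath.support_nodup)⟩, ?_⟩
      · intro hmem
        rcases List.mem_append.mp hmem with h | h
        · exact hτP p (τ.fst_mem_support_of_mem_edges h) hp
        · rcases List.mem_cons.mp h with h | h
          · rcases Sym2.eq_iff.mp h with ⟨h1, h2⟩ | ⟨h1, h2⟩
            · exact hz'P (h1 ▸ hp)
            · exact hpq h1
          · rw [List.mem_reverse] at h
            exact hzP (hRsupP z (R₀.snd_mem_support_of_mem_edges h))
      · intro hmem
        rw [List.mem_reverse] at hmem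
        exact hz'P (hRsupP z' (R₀.fst_mem_support_of_mem_edges hmem))
      · intro e he1 he2
        rcases List.mem_cons.mp he2 with rfl | he2
        · exact hτP q (τ.snd_mem_support_of_mem_edges he1) hq
        · rw [List.mem_reverse] at he2
          revert he1 he2
          induction e using Sym2.ind with
          | _ x y =>
            intro he1 he2
            exact hτP x (τ.fst_mem_support_of_mem_edges he1)
              (hRsupP x (R₀.fst_mem_support_of_mem_edges he2))
    · -- support tail is nodup
      have hsupp : W.support.tail = τ.support ++ R₀.support.reverse := by
        have hcoe : ⇑(SimpleGraph.Hom.ofLE (inP_le G P)) = id := rfl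
        rw [hWdef, hRGdef]
        simp [Walk.support_append, Walk.support_reverse, Walk.support_map, hcoe]
      rw [hsupp, List.nodup_append']
      exact ⟨hτpath.support_nodup, List.nodup_reverse.mpr hRpath.support_nodup,
        fun x hx1 hx2 => hτP x hx1 (hRsupP x (List.mem_reverse.mp hx2))⟩
  have hWlength : W.length = τ.length + R₀.length + 2 := by
    rw [hWdef]
    simp only [Walk.length_cons, Walk.length_append, Walk.length_reverse, hRGdef, mapLe_length]
    omega
  have hklt : k < W.length := by
    have hkb : k ≤ k * β := Nat.le_mul_of_pos_right k hβpos
    omega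
  obtain ⟨a, b, haW, hbW, hab, habW⟩ := hchordal p W hWcyc hklt
  -- the main splitting construction for a chord from τ to R
  have key : ∀ a b, a ∈ τ.support → b ∈ R₀.support → a ∉ P → b ∈ P →
      G.Adj a b → s(a, b) ∉ W.edges →
      ∃ w : (oneHopExt G P).Walk z z', w.length ≤ k * β := by
    intro a b haτ hbR haP hbP hab habW
    have e1 : (τ.takeUntil a haτ).length + (τ.dropUntil a haτ).length = τ.length := by
      rw [← Walk.length_append, Walk.take_spec]
    have e2 : (R₀.takeUntil b hbR).length + (R₀.dropUntil b hbR).length = R₀.length := by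
      rw [← Walk.length_append, Walk.take_spec]
    have hd1 : G.dist z a ≤ (τ.takeUntil a haτ).length := SimpleGraph.dist_le _
    have hd2 : G.dist a z' ≤ (τ.dropUntil a haτ).length := SimpleGraph.dist_le _
    have htri : G.dist z z' ≤ G.dist z a + G.dist a z' := hconn.dist_triangle
    have hd1' : G.dist z a = (τ.takeUntil a haτ).length := by omega
    have hd2' : G.dist a z' = (τ.dropUntil a haτ).length := by omega
    by_cases hz_a : (τ.takeUntil a haτ).length = 0
    · -- a = z : replace p by b and recurse on a shorter R
      have hza : z = a := Walk.eq_of_length_eq_zero hz_a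
      subst hza
      have hbp : b ≠ p := by
        rintro rfl
        apply habW
        rw [Sym2.eq_swap]
        exact hmem_pz
      have hj : 1 ≤ (R₀.takeUntil b hbR).length := by
        rcases Nat.eq_zero_or_pos (R₀.takeUntil b hbR).length with h0 | h
        · exact absurd (Walk.eq_of_length_eq_zero h0).symm hbp
        · exact h
      have hdb : (inP G P).dist b q ≤ (R₀.dropUntil b hbR).length := SimpleGraph.dist_le _
      exact ihμ (μ - 1) (by omega) z z' τ b q hbP hq hab.symm hz'q hτpath hτP hτdist hτlen
        (by omega)
    by_cases ha_z' : (τ.dropUntil a haτ).length = 0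
    · -- a = z' : replace q by b and recurse on a shorter R
      have haz' : a = z' := Walk.eq_of_length_eq_zero ha_z'
      subst haz'
      have hbq : b ≠ q := by
        rintro rfl
        exact habW hmem_zq
      have hj : 1 ≤ (R₀.dropUntil b hbR).length := by
        rcases Nat.eq_zero_or_pos (R₀.dropUntil b hbR).length with h0 | h
        · exact absurd (Walk.eq_of_length_eq_zero h0) hbq
        · exact h
      have hdb : (inP G P).dist p b ≤ (R₀.takeUntil b hbR).length := SimpleGraph.dist_le _
      exact ihμ (μ - 1) (by omega) z a τ p b hp hbP hpz hab hτpath hτP hτdist hτlen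
        (by omega)
    · -- a is interior to τ: split into two strictly shorter instances
      have hlt1 : (τ.takeUntil a haτ).length < β := by omega
      have hlt2 : (τ.dropUntil a haτ).length < β := by omega
      obtain ⟨w1, hw1⟩ := ihβ _ hlt1 ((inP G P).dist p b) z a (τ.takeUntil a haτ) p b hp hbP
        hpz hab (hτpath.takeUntil _) (fun x hx => hτP x (Walk.support_takeUntil_subset _ _ hx))
        hd1'.symm rfl le_rfl
      obtain ⟨w2, hw2⟩ := ihβ _ hlt2 ((inP G P).dist b q) a z' (τ.dropUntil a haτ) b q hbP hq
        hab.symm hz'q (hτpath.dropUntil _) (fun x hx => hτP x (Walk.support_dropUntil_subset _ _ hx))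
        hd2'.symm rfl le_rfl
      refine ⟨w1.append w2, ?_⟩
      rw [Walk.length_append]
      have hmul : k * (τ.takeUntil a haτ).length + k * (τ.dropUntil a haτ).length = k * β := by
        rw [← Nat.mul_add, e1, hτlen]
      omega
  -- classify the chord
  by_cases haP : a ∈ P
  · have haR : a ∈ R₀.support := (hclass a haW).resolve_left (fun h => hτP a h haP)
    by_cases hbP : b ∈ P
    · have hbR : b ∈ R₀.support := (hclass b hbW).resolve_left (fun h => hτP b h hbP)
      exact absurd (hmemR _ (chord_mem_of_min R₀ hRmin haR hbR ⟨hab, haP, hbP⟩)) habW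
    · have hbτ : b ∈ τ.support := (hclass b hbW).resolve_right (fun h => hbP (hRsupP b h))
      exact key b a hbτ haR hbP haP hab.symm (by rwa [Sym2.eq_swap])
  · have haτ : a ∈ τ.support := (hclass a haW).resolve_right (fun h => haP (hRsupP a h))
    by_cases hbP : b ∈ P
    · have hbR : b ∈ R₀.support := (hclass b hbW).resolve_left (fun h => hτP b h hbP)
      exact key a b haτ hbR haP hbP hab habW
    · have hbτ : b ∈ τ.support := (hclass b hbW).resolve_right (fun h => hbP (hRsupP b h))
      exact absurd (hmemτ _ (chord_mem_of_min τ hτmin haτ hbτ hab)) habW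


/-- Between any two vertices of `P`, there is a walk in the 1-hop extension of
length at most `k` times their distance in `G`. -/
lemma lemT [DecidableEq V] {G : SimpleGraph V} {P : Set V} {k : ℕ} (hk : 3 ≤ k)
    (hconn : G.Connected) (hchordal : KChordal G k)
    (hreach : ∀ ⦃a b : V⦄, a ∈ P → b ∈ P → (inP G P).Reachable a b) :
    ∀ d (p q : V), p ∈ P → q ∈ P → G.dist p q ≤ d →
      ∃ w : (oneHopExt G P).Walk p q, w.length ≤ k * d := by
  intro d
  induction d using Nat.strong_induction_on with
  | _ d ihd =>
  intro p q hp hq hpq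
  obtain ⟨π, hπpath, hπlen⟩ := hconn.exists_path_of_dist p q
  have hπd : π.length ≤ d := by rw [hπlen]; exact hpq
  by_cases h0 : π.length = 0
  · have : p = q := Walk.eq_of_length_eq_zero h0
    subst this
    exact ⟨Walk.nil, by simp⟩
  by_cases hmid : ∃ c, c ∈ π.support ∧ c ∈ P ∧ c ≠ p ∧ c ≠ q
  · -- split at an interior vertex of P
    obtain ⟨c, hcs, hcP, hcp, hcq⟩ := hmid
    have e1 : (π.takeUntil c hcs).length + (π.dropUntil c hcs).length = π.length := by
      rw [← Walk.length_append, Walk.take_spec]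
    have h1 : 1 ≤ (π.takeUntil c hcs).length := by
      rcases Nat.eq_zero_or_pos (π.takeUntil c hcs).length with hh | hh
      · exact absurd (Walk.eq_of_length_eq_zero hh).symm hcp
      · exact hh
    have h2 : 1 ≤ (π.dropUntil c hcs).length := by
      rcases Nat.eq_zero_or_pos (π.dropUntil c hcs).length with hh | hh
      · exact absurd (Walk.eq_of_length_eq_zero hh) hcq
      · exact hh
    have hd1 : G.dist p c ≤ (π.takeUntil c hcs).length := SimpleGraph.dist_le _
    have hd2 : G.dist c q ≤ (π.dropUntil c hcs).length := SimpleGraph.dist_le _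
    obtain ⟨w1, hw1⟩ := ihd (π.takeUntil c hcs).length (by omega) p c hp hcP hd1
    obtain ⟨w2, hw2⟩ := ihd (π.dropUntil c hcs).length (by omega) c q hcP hq hd2
    refine ⟨w1.append w2, ?_⟩
    rw [Walk.length_append]
    have hmul : k * (π.takeUntil c hcs).length + k * (π.dropUntil c hcs).length ≤ k * d := by
      rw [← Nat.mul_add, e1]
      exact Nat.mul_le_mul_left k hπd
    omega
  · push_neg at hmid
    by_cases h1 : π.length = 1
    · have hadj : G.Adj p q := Walk.adj_of_length_eq_one h1
      refine ⟨Walk.cons (show (oneHopExt G P).Adj _ _ from ⟨hadj, Or.inl hp⟩) Walk.nil, ?_⟩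
      have hd1 : 1 ≤ d := by omega
      have : 1 * 1 ≤ k * d := Nat.mul_le_mul (by omega) hd1
      simpa using this
    -- length at least two: peel off the first and last edges
    cases π with
    | nil => simp at h0
    | cons hpz rest =>
      obtain ⟨x, qwalk, h', hc⟩ := Walk.exists_cons_eq_concat hpz rest
      cases qwalk with
      | nil =>
        exfalso
        have := congrArg Walk.length hc
        rw [Walk.length_cons, Walk.concat_nil, Walk.length_cons, Walk.length_nil] at this
        rw [Walk.length_cons] at h0 h1
        omega
      | cons hpz2 τ =>
        rw [Walk.concat_cons] at hc
        -- names: hpz2 : G.Adj p z ; τ : G.Walk z x ; h' : G.Adj x q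
        rename_i z₁ z
        have hπeq : Walk.cons hpz rest = Walk.cons hpz2 (τ.concat h') := hc
        have hsup : (Walk.cons hpz rest).support = p :: (τ.support ++ [q]) := by
          rw [hπeq, Walk.support_cons, Walk.support_concat]
        have hnodup : (p :: (τ.support ++ [q])).Nodup := by
          rw [← hsup]; exact hπpath.support_nodup
        have hpτ : p ∉ τ.support := by
          have := (List.nodup_cons.mp hnodup).1
          intro hmem; exact this (List.mem_append.mpr (Or.inl hmem))
        have hqτ : q ∉ τ.support := by
          have := (List.nodup_append'.mp (List.nodup_cons.mp hnodup).2).2.2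
          intro hmem; exact this hmem (List.mem_singleton.mpr rfl)
        have hτnodup : τ.support.Nodup := (List.nodup_append'.mp (List.nodup_cons.mp hnodup).2).1
        have hτpath : τ.IsPath := (Walk.isPath_def τ).mpr hτnodup
        have hτnoP : ∀ y ∈ τ.support, y ∉ P := by
          intro y hy hyP
          have hyπ : y ∈ (Walk.cons hpz rest).support := by
            rw [hsup]
            exact List.mem_cons.mpr (Or.inr (List.mem_append.mpr (Or.inl hy)))
          rcases em (y = p) with rfl | hyp
          · exact hpτ hy
          · exact hqτ (hmid y hyπ hyP hyp ▸ hy)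
        have hlen2 : (Walk.cons hpz rest).length = τ.length + 2 := by
          rw [hπeq, Walk.length_cons, Walk.length_concat]
        have hdpz : G.dist p z ≤ 1 := by
          have := SimpleGraph.dist_le (Walk.cons hpz2 Walk.nil)
          simpa using this
        have hdxq : G.dist x q ≤ 1 := by
          have := SimpleGraph.dist_le (Walk.cons h' Walk.nil)
          simpa using this
        have hdzx : G.dist z x ≤ τ.length := SimpleGraph.dist_le τ
        have htri1 : G.dist p q ≤ G.dist p z + G.dist z q := hconn.dist_triangle
        have htri2 : G.dist z q ≤ G.dist z x + G.dist x q := hconn.dist_triangle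
        have hτdist : τ.length = G.dist z x := by
          rw [hπlen] at hlen2
          omega
        obtain ⟨w0, hw0⟩ := claimW hk hconn hchordal hreach τ.length ((inP G P).dist p q)
          z x τ p q hp hq hpz2 h' hτpath hτnoP hτdist rfl le_rfl
        refine ⟨Walk.cons (show (oneHopExt G P).Adj _ _ from ⟨hpz2, Or.inl hp⟩) (w0.concat (show (oneHopExt G P).Adj _ _ from ⟨h', Or.inr hq⟩)), ?_⟩
        rw [Walk.length_cons, Walk.length_concat]
        have h2d : τ.length + 2 ≤ d := by
          rw [← hlen2]; exact hπd
        have hmul : k * (τ.length + 2) ≤ k * d := Nat.mul_le_mul_left k h2d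
        rw [Nat.mul_add] at hmul
        omega

end ShortcutAux

/-- For a connected `k`-chordal graph `G` (`k ≥ 3`) of diameter at most `D` and a partition
of the vertex set into parts `P 1, …, P N`, each inducing a connected subgraph, the 1-hop
extensions `G_i = oneHopExt G (P i)` form a `(kD+2, 2)`-shortcut: (1) any two vertices of
`G_i` are at distance at most `kD + 2` in `G_i` (dilation), and (2) every edge of `G` lies
in at most two of the subgraphs `G_i` (congestion). -/
theorem oneHopExt_shortcut_of_kChordal {V : Type*} [Fintype V] (G : SimpleGraph V)
    (k D N : ℕ) (hk : 3 ≤ k) (hconn : G.Connected) (hchordal : KChordal G k)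
    (hdiam : ∀ u v : V, G.dist u v ≤ D)
    (P : Fin N → Set V)
    (hdisj : ∀ i j : Fin N, i ≠ j → Disjoint (P i) (P j))
    (hcover : (⋃ i, P i) = Set.univ)
    (hpart : ∀ i, (G.induce (P i)).Connected) :
    (∀ i : Fin N, ∀ u ∈ nbhdPlus G (P i), ∀ v ∈ nbhdPlus G (P i),
        (oneHopExt G (P i)).dist u v ≤ k * D + 2) ∧
    (∀ u v : V, G.Adj u v →
        {i : Fin N | (oneHopExt G (P i)).Adj u v}.ncard ≤ 2) := by
  classical
  constructor
  · intro i u hu v hv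
    have hreach : ∀ ⦃a b : V⦄, a ∈ P i → b ∈ P i →
        (ShortcutAux.inP G (P i)).Reachable a b := by
      intro a b ha hb
      have h := (hpart i).preconnected ⟨a, ha⟩ ⟨b, hb⟩
      exact SimpleGraph.Reachable.map
        (⟨Subtype.val, fun {x y} hxy => ⟨hxy, x.2, y.2⟩⟩ :
          SimpleGraph.Hom (G.induce (P i)) (ShortcutAux.inP G (P i))) h
    have hu' : ∃ p, p ∈ P i ∧ ∃ w : (oneHopExt G (P i)).Walk u p, w.length ≤ 1 := by
      rcases hu with hu | hu
      · exact ⟨u, hu, SimpleGraph.Walk.nil, by simp⟩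
      · obtain ⟨p, hpP, hpu⟩ := hu
        exact ⟨p, hpP, SimpleGraph.Walk.cons (show (oneHopExt G (P i)).Adj _ _ from ⟨hpu.symm, Or.inr hpP⟩) SimpleGraph.Walk.nil,
          by simp⟩
    have hv' : ∃ q, q ∈ P i ∧ ∃ w : (oneHopExt G (P i)).Walk q v, w.length ≤ 1 := by
      rcases hv with hv | hv
      · exact ⟨v, hv, SimpleGraph.Walk.nil, by simp⟩
      · obtain ⟨q, hqP, hqv⟩ := hv
        exact ⟨q, hqP, SimpleGraph.Walk.cons (show (oneHopExt G (P i)).Adj _ _ from ⟨hqv, Or.inl hqP⟩) SimpleGraph.Walk.nil, by simp⟩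
    obtain ⟨p, hpP, w1, hw1⟩ := hu'
    obtain ⟨q, hqP, w2, hw2⟩ := hv'
    obtain ⟨wm, hwm⟩ := ShortcutAux.lemT hk hconn hchordal hreach D p q hpP hqP (hdiam p q)
    have hle := SimpleGraph.dist_le (w1.append (wm.append w2))
    rw [SimpleGraph.Walk.length_append, SimpleGraph.Walk.length_append] at hle
    omega
  · intro u v huv
    have hsub : {i : Fin N | (oneHopExt G (P i)).Adj u v} ⊆
        {i : Fin N | u ∈ P i} ∪ {i : Fin N | v ∈ P i} := by
      intro i hi
      rcases hi.2 with h | h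
      · exact Or.inl h
      · exact Or.inr h
    have hcard1 : {i : Fin N | u ∈ P i}.ncard ≤ 1 := by
      rw [Set.ncard_le_one (Set.toFinite _)]
      intro i hi j hj
      by_contra hne
      exact (Set.disjoint_left.mp (hdisj i j hne) hi) hj
    have hcard2 : {i : Fin N | v ∈ P i}.ncard ≤ 1 := by
      rw [Set.ncard_le_one (Set.toFinite _)]
      intro i hi j hj
      by_contra hne
      exact (Set.disjoint_left.mp (hdisj i j hne) hi) hj
    calc {i : Fin N | (oneHopExt G (P i)).Adj u v}.ncard
        ≤ ({i : Fin N | u ∈ P i} ∪ {i : Fin N | v ∈ P i}).ncard :=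
          Set.ncard_le_ncard hsub (Set.toFinite _)
      _ ≤ {i : Fin N | u ∈ P i}.ncard + {i : Fin N | v ∈ P i}.ncard :=
          Set.ncard_union_le _ _
      _ ≤ 2 := by omega
end

section
/- Let k ≥ 4 be an even integer and set K = k/2 − 1, and let x ≥ 0 and N ≥ 2 be integers. Then the graph G(k,x,N) is k-chordal, i.e., G(k,x,N) contains no induced cycle of length greater than k. -/
/-- Vertices of the graph `G(k,x,N)`: pairs `(i,j)` with either `i = 1`, `0 ≤ j ≤ x`
(the first row) or `2 ≤ i ≤ N`, `0 ≤ j ≤ x·K` where `K = k/2 - 1` (the other rows). -/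
def GkxNVertex (k x N : ℕ) : Type :=
  {p : ℕ × ℕ // (p.1 = 1 ∧ p.2 ≤ x) ∨ (2 ≤ p.1 ∧ p.1 ≤ N ∧ p.2 ≤ x * (k / 2 - 1))}

/-- The (pre-symmetrization) edge relation of `G(k,x,N)`, with `K = k/2 - 1`:
`E₁`: consecutive vertices of row 1; `E₂`: consecutive vertices of a row `i ≥ 2`;
`E₃`: `v_{1,j}` joined to `v_{i,jK}` for `i ≥ 2`; `E₄`: `v_{i,h}` joined to `v_{j,h}`
for `i ≠ j ≥ 2` whenever `K ∣ h`. -/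
def GkxNRel (k : ℕ) (p q : ℕ × ℕ) : Prop :=
  (p.1 = 1 ∧ q.1 = 1 ∧ q.2 = p.2 + 1) ∨
  (2 ≤ p.1 ∧ q.1 = p.1 ∧ q.2 = p.2 + 1) ∨
  (p.1 = 1 ∧ 2 ≤ q.1 ∧ q.2 = p.2 * (k / 2 - 1)) ∨
  (2 ≤ p.1 ∧ 2 ≤ q.1 ∧ p.1 ≠ q.1 ∧ p.2 = q.2 ∧ (k / 2 - 1) ∣ p.2)

/-- The graph `G(k,x,N)`. -/
def GkxN (k x N : ℕ) : SimpleGraph (GkxNVertex k x N) :=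
  SimpleGraph.fromRel (fun p q => GkxNRel k p.val q.val)

namespace CycAux
open SimpleGraph Walk

variable {V : Type*} {G : SimpleGraph V}

lemma support_getElem {u v : V} (w : G.Walk u v) (i : ℕ) (h : i < w.support.length) :
    w.support[i] = w.getVert i := by
  induction w generalizing i with
  | nil =>
    cases i with
    | zero => simp [Walk.getVert]
    | succ n => simp at h
  | @cons a b c h' p ih =>
    cases i with
    | zero => simp [Walk.getVert]
    | succ n =>
      simp only [Walk.support_cons, List.getElem_cons_succ, Walk.getVert_cons_succ]
      exact ih n (by simp only [Walk.length_support, Walk.length_cons] at h ⊢; omega)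

lemma edges_exists {u v : V} (w : G.Walk u v) {e} (he : e ∈ w.edges) :
    ∃ i < w.length, e = s(w.getVert i, w.getVert (i+1)) := by
  induction w with
  | nil => simp at he
  | @cons a b c h' p ih =>
    rw [Walk.edges_cons, List.mem_cons] at he
    rcases he with rfl | he
    · exact ⟨0, by simp, by simp [Walk.getVert_cons_succ, Walk.getVert_zero]⟩
    · obtain ⟨i, hi, rfl⟩ := ih he
      exact ⟨i + 1, by simp [Walk.length_cons]; omega, by simp [Walk.getVert_cons_succ]⟩

lemma getVert_injOn {v : V} {w : G.Walk v v} (hc : w.IsCycle) {i j : ℕ}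
    (hi : i < w.length) (hj : j < w.length) (h : w.getVert i = w.getVert j) : i = j := by
  have hnd := hc.support_nodup
  have hlen : w.support.tail.length = w.length := by
    have := w.length_support
    cases ws : w.support with
    | nil => simp [ws] at this
    | cons a l => simp [ws] at this ⊢; omega
  have htail : ∀ (n : ℕ) (hn : n < w.length), w.support.tail[n]'(by omega) = w.getVert (n+1) := by
    intro n hn
    rw [List.getElem_tail]
    exact support_getElem w (n+1) (by rw [Walk.length_support]; omega)
  have key : ∀ a b : ℕ, a ≤ w.length → b ≤ w.length → 1 ≤ a → 1 ≤ b →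
      w.getVert a = w.getVert b → a = b := by
    intro a b ha hb ha1 hb1 hab
    have h3 := hc.three_le_length
    have := List.Nodup.getElem_inj_iff hnd (i := a-1) (j := b-1)
      (hi := by omega) (hj := by omega)
    rw [htail (a-1) (by omega), htail (b-1) (by omega)] at this
    have h2 : a - 1 + 1 = a := by omega
    have h3 : b - 1 + 1 = b := by omega
    rw [h2, h3] at this
    have := this.mp hab
    omega
  rcases Nat.eq_zero_or_pos i with rfl | hi1
  · rcases Nat.eq_zero_or_pos j with rfl | hj1
    · rfl
    · exfalso
      have h0 : w.getVert j = w.getVert w.length :=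
        (h.symm.trans (w.getVert_zero)).trans (w.getVert_length).symm
      have := key j w.length (by omega) le_rfl hj1 (by omega) h0
      omega
  · rcases Nat.eq_zero_or_pos j with rfl | hj1
    · exfalso
      have h0 : w.getVert i = w.getVert w.length :=
        (h.trans (w.getVert_zero)).trans (w.getVert_length).symm
      have := key i w.length (by omega) le_rfl hi1 (by omega) h0
      omega
    · exact key i j (by omega) (by omega) hi1 hj1 h


variable {v : V} (w : G.Walk v v)

/-- The vertices of a closed walk indexed cyclically by `ℤ`. -/
def cyc (t : ℤ) : V := w.getVert ((t % w.length).toNat)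

variable {w}

lemma cyc_congr {s t : ℤ} (h : s % w.length = t % w.length) : cyc w s = cyc w t := by
  unfold cyc; rw [h]

lemma cyc_natCast (i : ℕ) (h : i < w.length) : cyc w i = w.getVert i := by
  unfold cyc
  rw [Int.emod_eq_of_lt (by positivity) (by exact_mod_cast h)]
  simp

lemma emod_add_one (a n : ℤ) : (a + 1) % n = (a % n + 1) % n := by
  have h : (a % n) ≡ a [ZMOD n] := Int.emod_emod_of_dvd a dvd_rfl
  exact (h.add_right 1).symm

lemma cyc_mem_support (hL : 0 < w.length) (t : ℤ) : cyc w t ∈ w.support := by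
  have hL' : (0:ℤ) < (w.length : ℤ) := by exact_mod_cast hL
  have hi0 : 0 ≤ t % w.length := Int.emod_nonneg t (by omega)
  have hiL : t % w.length < w.length := Int.emod_lt_of_pos t hL'
  have hb : (t % w.length).toNat < w.support.length := by
    rw [Walk.length_support]; omega
  rw [show cyc w t = w.support[(t % w.length).toNat]'hb from
    (support_getElem w _ hb).symm]
  exact List.getElem_mem hb

lemma cyc_adj (hL : 0 < w.length) (t : ℤ) : G.Adj (cyc w t) (cyc w (t + 1)) := by
  have hL' : (0:ℤ) < (w.length : ℤ) := by exact_mod_cast hL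
  set i : ℕ := ((t % w.length).toNat) with hi
  have hi0 : 0 ≤ t % w.length := Int.emod_nonneg t (by omega)
  have hiL : t % w.length < w.length := Int.emod_lt_of_pos t hL'
  have hiL' : i < w.length := by omega
  have key : (t+1) % w.length = ((i:ℤ)+1) % w.length := by
    rw [emod_add_one]; congr 1; omega
  have h1 : cyc w (t+1) = w.getVert (i+1) := by
    rcases Nat.lt_or_ge (i+1) w.length with h | h
    · have h2 : ((t+1) % w.length).toNat = i + 1 := by
        rw [key, Int.emod_eq_of_lt (by positivity) (by push_cast; omega)]
        omega
      unfold cyc; rw [h2]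
    · have hieq : i + 1 = w.length := by omega
      have h2 : ((t+1) % w.length).toNat = 0 := by
        rw [key, show ((i:ℤ)+1) = (w.length:ℤ) by push_cast; omega, Int.emod_self]
        rfl
      unfold cyc
      rw [h2, Walk.getVert_zero, show i + 1 = w.length from hieq, Walk.getVert_length]
  rw [h1]
  show G.Adj (cyc w t) _
  rw [show cyc w t = w.getVert i from rfl]
  exact w.adj_getVert_succ hiL'

lemma cyc_modEq (hc : w.IsCycle) {s t : ℤ} (h : cyc w s = cyc w t) :
    s ≡ t [ZMOD (w.length : ℤ)] := by
  have hL : 0 < w.length := by have := hc.three_le_length; omega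
  have hL' : (0:ℤ) < (w.length : ℤ) := by exact_mod_cast hL
  have hs0 : 0 ≤ s % w.length := Int.emod_nonneg s (by omega)
  have hsL : s % w.length < w.length := Int.emod_lt_of_pos s hL'
  have ht0 : 0 ≤ t % w.length := Int.emod_nonneg t (by omega)
  have htL : t % w.length < w.length := Int.emod_lt_of_pos t hL'
  have := getVert_injOn hc (i := (s % w.length).toNat) (j := (t % w.length).toNat)
    (by omega) (by omega) h
  show s % _ = t % _
  omega

lemma cyc_shift (hc : w.IsCycle) {s t : ℤ} (h : cyc w s = cyc w t) (d : ℤ) :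
    cyc w (s + d) = cyc w (t + d) :=
  cyc_congr ((cyc_modEq hc h).add_right d)

lemma cyc_nonper (hc : w.IsCycle) {t d : ℤ} (h0 : 0 < d) (hd : d < w.length)
    (h : cyc w (t + d) = cyc w t) : False := by
  have hdvd : (w.length : ℤ) ∣ d := by
    have h2 := (cyc_modEq hc h).dvd
    rw [show t - (t + d) = -d by ring] at h2
    exact (dvd_neg).mp h2
  have := Int.le_of_dvd h0 hdvd
  omega

end CycAux

namespace GkxNAux
open SimpleGraph

variable {k x N : ℕ}

/-- The "fine coordinate" of a vertex. -/
def Flev (k x N : ℕ) (p : GkxNVertex k x N) : ℕ :=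
  if p.val.1 = 1 then p.val.2 * (k / 2 - 1) else p.val.2

lemma row_cases (p : GkxNVertex k x N) : p.val.1 = 1 ∨ 2 ≤ p.val.1 :=
  p.property.elim (fun h => Or.inl h.1) (fun h => Or.inr h.1)

lemma Flev_row1 (p : GkxNVertex k x N) (h : p.val.1 = 1) :
    Flev k x N p = p.val.2 * (k / 2 - 1) := if_pos h

lemma Flev_row2 (p : GkxNVertex k x N) (h : 2 ≤ p.val.1) : Flev k x N p = p.val.2 :=
  if_neg (by omega)

lemma Flev_dvd_row1 (p : GkxNVertex k x N) (h : p.val.1 = 1) :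
    (k / 2 - 1) ∣ Flev k x N p := by
  rw [Flev_row1 p h]; exact dvd_mul_left _ _

lemma adjF (p q : GkxNVertex k x N) (h : (GkxN k x N).Adj p q) :
    (Flev k x N q = Flev k x N p + (k/2-1) ∧ (k/2-1) ∣ Flev k x N p) ∨
    (Flev k x N p = Flev k x N q + (k/2-1) ∧ (k/2-1) ∣ Flev k x N q) ∨
    (2 ≤ p.val.1 ∧ q.val.1 = p.val.1 ∧ (q.val.2 = p.val.2 + 1 ∨ p.val.2 = q.val.2 + 1)) ∨
    (Flev k x N p = Flev k x N q ∧ (k/2-1) ∣ Flev k x N p) := by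
  rw [GkxN, SimpleGraph.fromRel_adj] at h
  obtain ⟨hne, h | h⟩ := h <;> rw [GkxNRel] at h <;>
    rcases h with ⟨h1, h2, h3⟩ | ⟨h1, h2, h3⟩ | ⟨h1, h2, h3⟩ | ⟨h1, h2, h3, h4, h5⟩
  · left
    constructor
    · rw [Flev_row1 p h1, Flev_row1 q h2, h3]; ring
    · rw [Flev_row1 p h1]; exact dvd_mul_left _ _
  · right; right; left; exact ⟨h1, h2, Or.inl h3⟩
  · right; right; right
    constructor
    · rw [Flev_row1 p h1, Flev_row2 q h2, h3]
    · rw [Flev_row1 p h1]; exact dvd_mul_left _ _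
  · right; right; right
    constructor
    · rw [Flev_row2 p h1, Flev_row2 q h2, h4]
    · rw [Flev_row2 p h1]; exact h5
  · right; left
    constructor
    · rw [Flev_row1 p h2, Flev_row1 q h1, h3]; ring
    · rw [Flev_row1 q h1]; exact dvd_mul_left _ _
  · right; right; left; exact ⟨by omega, h2.symm, Or.inr h3⟩
  · right; right; right
    constructor
    · rw [Flev_row1 q h1, Flev_row2 p h2, h3]
    · rw [Flev_row2 p h2, h3]; exact dvd_mul_left _ _
  · right; right; right
    constructor
    · rw [Flev_row2 p h2, Flev_row2 q h1, h4]
    · rw [Flev_row2 p h2, ← h4]; exact h5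

lemma adj_of_level (hk : 4 ≤ k) (p q : GkxNVertex k x N) (hne : p ≠ q)
    (hF : Flev k x N p = Flev k x N q) (hd : (k/2-1) ∣ Flev k x N p) :
    (GkxN k x N).Adj p q := by
  have hK1 : 1 ≤ k / 2 - 1 := by omega
  rw [GkxN, SimpleGraph.fromRel_adj]
  refine ⟨hne, ?_⟩
  rcases row_cases p with hp | hp <;> rcases row_cases q with hq | hq
  · exfalso
    apply hne
    rw [Flev_row1 p hp, Flev_row1 q hq] at hF
    have h2 : p.val.2 = q.val.2 := Nat.eq_of_mul_eq_mul_right (by omega) hF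
    exact Subtype.ext (Prod.ext_iff.mpr ⟨hp.trans hq.symm, h2⟩)
  · left; rw [GkxNRel]
    right; right; left
    refine ⟨hp, hq, ?_⟩
    rw [Flev_row1 p hp, Flev_row2 q hq] at hF
    omega
  · right; rw [GkxNRel]
    right; right; left
    refine ⟨hq, hp, ?_⟩
    rw [Flev_row2 p hp, Flev_row1 q hq] at hF
    omega
  · by_cases hpq : p.val.1 = q.val.1
    · exfalso
      apply hne
      rw [Flev_row2 p hp, Flev_row2 q hq] at hF
      exact Subtype.ext (Prod.ext_iff.mpr ⟨hpq, hF⟩)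
    · left; rw [GkxNRel]
      right; right; right
      rw [Flev_row2 p hp, Flev_row2 q hq] at hF
      rw [Flev_row2 p hp] at hd
      exact ⟨hp, hq, hpq, hF, hd⟩

lemma adj_interior (p q : GkxNVertex k x N) (h : (GkxN k x N).Adj p q)
    (hnd : ¬ (k/2-1) ∣ Flev k x N p) :
    2 ≤ p.val.1 ∧ q.val.1 = p.val.1 ∧ (q.val.2 = p.val.2 + 1 ∨ p.val.2 = q.val.2 + 1) := by
  rcases adjF p q h with ⟨h1, h2⟩ | ⟨h1, h2⟩ | h | ⟨h1, h2⟩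
  · exact absurd h2 hnd
  · exact absurd (h1 ▸ Nat.dvd_add h2 dvd_rfl) hnd
  · exact h
  · exact absurd h2 hnd

end GkxNAux

theorem GkxN_kchordal (k x N : ℕ) (hk : 4 ≤ k) (hke : Even k) (hN : 2 ≤ N) :
    KChordal (GkxN k x N) k := by
  classical
  intro v w hcyc hlen
  by_contra hnc
  have hkk : k / 2 * 2 = k := Nat.div_mul_cancel hke.two_dvd
  have hK1 : 1 ≤ k / 2 - 1 := by omega
  have hk2 : k = 2 * (k / 2 - 1) + 2 := by omega
  have hL5 : 5 ≤ w.length := by omega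
  have hL0 : 0 < w.length := by omega
  set F := GkxNAux.Flev k x N with hFdef
  set g : ℤ → GkxNVertex k x N := CycAux.cyc w with hgdef
  have hadj : ∀ t : ℤ, (GkxN k x N).Adj (g t) (g (t + 1)) := fun t => CycAux.cyc_adj hL0 t
  have hmem : ∀ t : ℤ, g t ∈ w.support := fun t => CycAux.cyc_mem_support hL0 t
  have hshift : ∀ {s t : ℤ}, g s = g t → ∀ d : ℤ, g (s + d) = g (t + d) :=
    fun h d => CycAux.cyc_shift hcyc h d
  have hnonper : ∀ (t d : ℤ), 0 < d → d < (w.length : ℤ) → g (t + d) = g t → False :=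
    fun t d h1 h2 h3 => CycAux.cyc_nonper hcyc h1 h2 h3
  have hnc' : ∀ a b, a ∈ w.support → b ∈ w.support → (GkxN k x N).Adj a b →
      s(a, b) ∈ w.edges := by
    intro a b ha hb hab
    by_contra hmm
    exact hnc ⟨a, b, ha, hb, hab, hmm⟩
  have hg0 : ∀ (i : ℕ), i < w.length → g (i : ℤ) = w.getVert i :=
    fun i h => CycAux.cyc_natCast i h
  have hconsec : ∀ s t : ℤ, (GkxN k x N).Adj (g s) (g t) → g t = g (s + 1) ∨ g s = g (t + 1) := by
    intro s t hab
    obtain ⟨i, hi, he⟩ := CycAux.edges_exists w (hnc' _ _ (hmem s) (hmem t) hab)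
    have hgi : w.getVert i = g (i : ℤ) := (hg0 i hi).symm
    have hgi1 : w.getVert (i + 1) = g ((i : ℤ) + 1) := by
      rcases Nat.lt_or_ge (i + 1) w.length with h | h
      · rw [← hg0 (i + 1) h]
        exact CycAux.cyc_congr (by rw [Nat.cast_add, Nat.cast_one])
      · have hieq : i + 1 = w.length := by omega
        have h1 : g ((i : ℤ) + 1) = g 0 := CycAux.cyc_congr (by
          rw [show (i : ℤ) + 1 = (w.length : ℤ) by omega, Int.emod_self, Int.zero_emod])
        have hv : g (0 : ℤ) = v := by have := hg0 0 hL0; simpa using this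
        rw [h1, hv, hieq, w.getVert_length]
    rw [hgi, hgi1] at he
    rw [Sym2.eq_iff] at he
    rcases he with ⟨h1, h2⟩ | ⟨h1, h2⟩
    · left; rw [h2]; exact (hshift h1 1).symm
    · right; rw [h1]; exact (hshift h2 1).symm
  set S : Finset (GkxNVertex k x N) := (Finset.range w.length).image (fun i : ℕ => g (i : ℤ))
    with hSdef
  have hgS : ∀ t : ℤ, g t ∈ S := by
    intro t
    have h0 : 0 ≤ t % (w.length : ℤ) := Int.emod_nonneg t (by exact_mod_cast hL0.ne')
    have h1 : t % (w.length : ℤ) < w.length := Int.emod_lt_of_pos t (by exact_mod_cast hL0)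
    refine Finset.mem_image.mpr ⟨(t % (w.length : ℤ)).toNat, Finset.mem_range.mpr (by omega), ?_⟩
    apply CycAux.cyc_congr
    rw [Int.toNat_of_nonneg h0]
    exact Int.emod_emod_of_dvd t dvd_rfl
  have hcardS : S.card = w.length := by
    rw [hSdef, Finset.card_image_of_injOn, Finset.card_range]
    intro i hi j hj hij
    simp only [Finset.coe_range, Set.mem_Iio] at hi hj
    have h1 : (i : ℤ) % (w.length : ℤ) = (j : ℤ) % (w.length : ℤ) := CycAux.cyc_modEq hcyc hij
    rw [Int.emod_eq_of_lt (by positivity) (by exact_mod_cast hi),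
      Int.emod_eq_of_lt (by positivity) (by exact_mod_cast hj)] at h1
    exact_mod_cast h1
  have hSex : ∀ a ∈ S, ∃ t : ℤ, g t = a := by
    intro a ha
    obtain ⟨i, _, hi⟩ := Finset.mem_image.mp ha
    exact ⟨i, hi⟩
  have hSne : (S.image F).Nonempty := ⟨F (g 0), Finset.mem_image_of_mem F (hgS 0)⟩
  set m := (S.image F).min' hSne with hmdef
  set M := (S.image F).max' hSne with hMdef
  have hmle : ∀ t : ℤ, m ≤ F (g t) := fun t =>
    Finset.min'_le _ _ (Finset.mem_image_of_mem F (hgS t))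
  have hMge : ∀ t : ℤ, F (g t) ≤ M := fun t =>
    Finset.le_max' _ _ (Finset.mem_image_of_mem F (hgS t))
  obtain ⟨am, hamS, hamF⟩ := Finset.mem_image.mp (Finset.min'_mem _ hSne)
  obtain ⟨aM, haMS, haMF⟩ := Finset.mem_image.mp (Finset.max'_mem _ hSne)
  obtain ⟨i₀, hi₀⟩ := hSex am hamS
  obtain ⟨i₁, hi₁⟩ := hSex aM haMS
  have hFm : F (g i₀) = m := by rw [hi₀]; exact hamF
  have hFM : F (g i₁) = M := by rw [hi₁]; exact haMF
  -- the minimum and maximum are at "levels"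
  have hKm : (k/2-1) ∣ m := by
    by_contra hnd
    have hnd' : ¬ (k/2-1) ∣ F (g i₀) := by rw [hFm]; exact hnd
    have hp := GkxNAux.adj_interior _ _ (hadj i₀) hnd'
    have hadj' : (GkxN k x N).Adj (g i₀) (g (i₀ - 1)) := by
      have := hadj (i₀ - 1)
      rw [show i₀ - 1 + 1 = i₀ by ring] at this
      exact this.symm
    have hq := GkxNAux.adj_interior _ _ hadj' hnd'
    have hrow : 2 ≤ (g i₀).val.1 := hp.1
    have hFp : F (g i₀) = (g i₀).val.2 := GkxNAux.Flev_row2 _ hrow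
    have hFp1 : F (g (i₀ + 1)) = (g (i₀ + 1)).val.2 :=
      GkxNAux.Flev_row2 _ (by rw [hp.2.1]; exact hrow)
    have hFq1 : F (g (i₀ - 1)) = (g (i₀ - 1)).val.2 :=
      GkxNAux.Flev_row2 _ (by rw [hq.2.1]; exact hrow)
    have hm1 := hmle (i₀ + 1)
    have hm2 := hmle (i₀ - 1)
    rcases hp.2.2 with h1 | h1
    · rcases hq.2.2 with h2 | h2
      · -- both neighbours one step up: they coincide
        have heq : g (i₀ + 1) = g (i₀ - 1) := by
          apply Subtype.ext
          apply Prod.ext_iff.mpr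
          constructor
          · rw [hp.2.1, hq.2.1]
          · omega
        refine hnonper (i₀ - 1) 2 (by norm_num) (by omega) ?_
        rw [show i₀ - 1 + 2 = i₀ + 1 by ring]
        exact heq
      · omega
    · omega
  have hKM : (k/2-1) ∣ M := by
    by_contra hnd
    have hnd' : ¬ (k/2-1) ∣ F (g i₁) := by rw [hFM]; exact hnd
    have hp := GkxNAux.adj_interior _ _ (hadj i₁) hnd'
    have hadj' : (GkxN k x N).Adj (g i₁) (g (i₁ - 1)) := by
      have := hadj (i₁ - 1)
      rw [show i₁ - 1 + 1 = i₁ by ring] at this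
      exact this.symm
    have hq := GkxNAux.adj_interior _ _ hadj' hnd'
    have hrow : 2 ≤ (g i₁).val.1 := hp.1
    have hFp : F (g i₁) = (g i₁).val.2 := GkxNAux.Flev_row2 _ hrow
    have hFp1 : F (g (i₁ + 1)) = (g (i₁ + 1)).val.2 :=
      GkxNAux.Flev_row2 _ (by rw [hp.2.1]; exact hrow)
    have hFq1 : F (g (i₁ - 1)) = (g (i₁ - 1)).val.2 :=
      GkxNAux.Flev_row2 _ (by rw [hq.2.1]; exact hrow)
    have hm1 := hMge (i₁ + 1)
    have hm2 := hMge (i₁ - 1)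
    rcases hp.2.2 with h1 | h1
    · omega
    · rcases hq.2.2 with h2 | h2
      · omega
      · have heq : g (i₁ + 1) = g (i₁ - 1) := by
          apply Subtype.ext
          apply Prod.ext_iff.mpr
          constructor
          · rw [hp.2.1, hq.2.1]
          · omega
        refine hnonper (i₁ - 1) 2 (by norm_num) (by omega) ?_
        rw [show i₁ - 1 + 2 = i₁ + 1 by ring]
        exact heq
  -- no three pairwise adjacent vertices on the cycle
  have htri : ∀ a b c, a ∈ S → b ∈ S → c ∈ S → a ≠ b → a ≠ c → b ≠ c →
      (GkxN k x N).Adj a b → (GkxN k x N).Adj a c → (GkxN k x N).Adj b c → False := by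
    intro a b c ha hb hc hab hac hbc Aab Aac Abc
    obtain ⟨s, rfl⟩ := hSex a ha
    obtain ⟨t, rfl⟩ := hSex b hb
    obtain ⟨u, rfl⟩ := hSex c hc
    have conv2 : ∀ {t' : ℤ}, g s = g (t' + 1) → g t' = g (s + (-1)) := by
      intro t' h
      have := hshift h (-1)
      rw [show t' + 1 + (-1) = t' by ring] at this
      exact this.symm
    have hb2 : g t = g (s + 1) ∨ g t = g (s + (-1)) := by
      rcases hconsec s t Aab with h | h
      · exact Or.inl h
      · exact Or.inr (conv2 h)
    have hc2 : g u = g (s + 1) ∨ g u = g (s + (-1)) := by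
      rcases hconsec s u Aac with h | h
      · exact Or.inl h
      · exact Or.inr (conv2 h)
    have hno3 : g (s + (-1)) ≠ g (s + 2) := by
      intro hx
      refine hnonper (s + (-1)) 3 (by norm_num) (by omega) ?_
      rw [show s + (-1) + 3 = s + 2 by ring]
      exact hx.symm
    rcases hb2 with hb2 | hb2 <;> rcases hc2 with hc2 | hc2
    · exact hbc (hb2.trans hc2.symm)
    · rcases hconsec t u Abc with h | h
      · -- g u = g (t+1) = g (s+2)
        have h1 : g (t + 1) = g (s + 1 + 1) := hshift hb2 1
        rw [show s + 1 + 1 = s + 2 by ring] at h1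
        exact hno3 ((hc2.symm.trans h).trans h1)
      · -- g t = g (u+1) = g (s-1+1) = g s
        have h1 : g (u + 1) = g (s + (-1) + 1) := hshift hc2 1
        rw [show s + (-1) + 1 = s by ring] at h1
        exact hab ((h.trans h1).symm)
    · rcases hconsec t u Abc with h | h
      · -- g u = g (t+1) = g (s-1+1) = g s
        have h1 : g (t + 1) = g (s + (-1) + 1) := hshift hb2 1
        rw [show s + (-1) + 1 = s by ring] at h1
        exact hac ((h.trans h1).symm)
      · -- g t = g (u+1) = g (s+2)
        have h1 : g (u + 1) = g (s + 1 + 1) := hshift hc2 1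
        rw [show s + 1 + 1 = s + 2 by ring] at h1
        exact hno3 (hb2.symm.trans (h.trans h1))
    · exact hbc (hb2.trans hc2.symm)
  have hcard2 : ∀ c0 : ℕ, (k/2-1) ∣ c0 → (S.filter (fun a => F a = c0)).card ≤ 2 := by
    intro c0 hdvd
    by_contra hgt
    obtain ⟨a, b, c, ha, hb, hc, hab, hac, hbc⟩ :=
      (Finset.two_lt_card_iff (s := S.filter (fun a => F a = c0))).mp (by omega)
    rw [Finset.mem_filter] at ha hb hc
    exact htri a b c ha.1 hb.1 hc.1 hab hac hbc
      (GkxNAux.adj_of_level hk a b hab (by rw [hFdef] at ha hb; rw [ha.2, hb.2]) (by rw [hFdef] at ha; rw [ha.2]; exact hdvd))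
      (GkxNAux.adj_of_level hk a c hac (by rw [hFdef] at ha hc; rw [ha.2, hc.2]) (by rw [hFdef] at ha; rw [ha.2]; exact hdvd))
      (GkxNAux.adj_of_level hk b c hbc (by rw [hFdef] at hb hc; rw [hb.2, hc.2]) (by rw [hFdef] at hb; rw [hb.2]; exact hdvd))
  rcases le_or_gt M (m + (k/2-1)) with hcase | hcase
  · -- Case A : everything lives between two adjacent levels; count vertices
    have hdesc : ∀ d : ℕ, ∀ a, a ∈ S → 2 ≤ a.val.1 → a.val.2 = m + d → d < k/2-1 →
        ∃ b ∈ S, b.val = (a.val.1, m) := by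
      intro d
      induction d with
      | zero =>
        intro a ha h2 hpos _
        refine ⟨a, ha, ?_⟩
        rw [show m = a.val.2 by omega]
      | succ d ih =>
        intro a ha h2 hpos hlt
        obtain ⟨t, rfl⟩ := hSex a ha
        have hFa : F (g t) = m + d + 1 := by
          rw [hFdef, GkxNAux.Flev_row2 _ h2]; omega
        have hnd : ¬ (k/2-1) ∣ F (g t) := by
          rw [hFa]
          intro hdd
          have h3 := Nat.dvd_sub hdd hKm
          rw [show m + d + 1 - m = d + 1 by omega] at h3
          have := Nat.le_of_dvd (by omega) h3
          omega
        have hp := GkxNAux.adj_interior _ _ (hadj t) hnd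
        have hadj' : (GkxN k x N).Adj (g t) (g (t - 1)) := by
          have := hadj (t - 1)
          rw [show t - 1 + 1 = t by ring] at this
          exact this.symm
        have hq := GkxNAux.adj_interior _ _ hadj' hnd
        rcases hp.2.2 with h1 | h1
        · rcases hq.2.2 with h2' | h2'
          · exfalso
            have heq : g (t + 1) = g (t - 1) := by
              apply Subtype.ext
              apply Prod.ext_iff.mpr
              exact ⟨by rw [hp.2.1, hq.2.1], by omega⟩
            refine hnonper (t - 1) 2 (by norm_num) (by omega) ?_
            rw [show t - 1 + 2 = t + 1 by ring]
            exact heq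
          · -- g (t-1) is one step down
            obtain ⟨b, hbS, hbval⟩ := ih (g (t - 1)) (hgS _)
              (by rw [hq.2.1]; exact h2) (by omega) (by omega)
            exact ⟨b, hbS, by rw [hbval, hq.2.1]⟩
        · -- g (t+1) is one step down
          obtain ⟨b, hbS, hbval⟩ := ih (g (t + 1)) (hgS _)
            (by rw [hp.2.1]; exact h2) (by omega) (by omega)
          exact ⟨b, hbS, by rw [hbval, hp.2.1]⟩
    set SA := S.filter (fun a => F a = m) with hSA
    set SB := S.filter (fun a => F a = M) with hSB
    set SI := S.filter (fun a => m < F a ∧ F a < M) with hSI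
    have hsub : S ⊆ SA ∪ SB ∪ SI := by
      intro a ha
      obtain ⟨t, rfl⟩ := hSex a ha
      have h1 := hmle t
      have h2 := hMge t
      simp only [hSA, hSB, hSI, Finset.mem_union, Finset.mem_filter]
      by_cases e1 : F (g t) = m
      · exact Or.inl (Or.inl ⟨ha, e1⟩)
      by_cases e2 : F (g t) = M
      · exact Or.inl (Or.inr ⟨ha, e2⟩)
      exact Or.inr ⟨ha, by omega, by omega⟩
    have hIrow : ∀ a ∈ SI, 2 ≤ a.val.1 ∧ F a = a.val.2 := by
      intro a haI
      rw [hSI, Finset.mem_filter] at haI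
      obtain ⟨haS, h1, h2⟩ := haI
      have hnd : ¬ (k/2-1) ∣ F a := by
        intro hdd
        have h3 := Nat.dvd_sub hdd hKm
        have hle := Nat.le_of_dvd (by omega) h3
        omega
      rcases GkxNAux.row_cases a with h | h
      · exact absurd (GkxNAux.Flev_dvd_row1 a h) (by rw [hFdef] at hnd; exact hnd)
      · exact ⟨h, GkxNAux.Flev_row2 a h⟩
    set Rows := SA.image (fun a => a.val.1) with hRows
    have hSIcard : SI.card ≤ Rows.card * (k/2-1-1) := by
      have hinj : SI.card ≤ (Rows ×ˢ Finset.Ioo m M).card := by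
        apply Finset.card_le_card_of_injOn (fun a => (a.val.1, a.val.2))
        · intro a haI
          obtain ⟨h2a, hFa⟩ := hIrow a haI
          rw [hSI, Finset.mem_coe, Finset.mem_filter] at haI
          simp only [Finset.mem_coe]
          refine Finset.mem_product.mpr ⟨?_, Finset.mem_Ioo.mpr ⟨by omega, by omega⟩⟩
          obtain ⟨b, hbS, hbval⟩ := hdesc (a.val.2 - m) a haI.1 h2a (by omega) (by omega)
          refine Finset.mem_image.mpr ⟨b, ?_, by rw [hbval]⟩
          rw [hSA, Finset.mem_filter]
          refine ⟨hbS, ?_⟩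
          have hb2 : 2 ≤ b.val.1 := by rw [hbval]; exact h2a
          rw [hFdef, GkxNAux.Flev_row2 b hb2, hbval]
        · intro a _ b _ hab
          apply Subtype.ext
          have h1 : a.val.1 = b.val.1 := congrArg Prod.fst hab
          have h2 : a.val.2 = b.val.2 := congrArg Prod.snd hab
          exact Prod.ext_iff.mpr ⟨h1, h2⟩
      calc SI.card ≤ (Rows ×ˢ Finset.Ioo m M).card := hinj
        _ = Rows.card * (Finset.Ioo m M).card := Finset.card_product _ _
        _ ≤ Rows.card * (k/2-1-1) := by
            rw [Nat.card_Ioo]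
            exact Nat.mul_le_mul_left _ (by omega)
    have hRcard : Rows.card ≤ 2 := le_trans Finset.card_image_le (by rw [hSA] at *; exact hcard2 m hKm)
    have hSA2 : SA.card ≤ 2 := by rw [hSA]; exact hcard2 m hKm
    have hSB2 : SB.card ≤ 2 := by rw [hSB]; exact hcard2 M hKM
    have hIC : SI.card ≤ 2 * (k/2-1-1) :=
      le_trans hSIcard (Nat.mul_le_mul_right _ hRcard)
    have hfin : w.length ≤ 2 + 2 + 2 * (k/2-1-1) := by
      calc w.length = S.card := hcardS.symm
        _ ≤ (SA ∪ SB ∪ SI).card := Finset.card_le_card hsub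
        _ ≤ (SA ∪ SB).card + SI.card := Finset.card_union_le _ _
        _ ≤ SA.card + SB.card + SI.card := by
            have := Finset.card_union_le SA SB
            omega
        _ ≤ 2 + 2 + 2 * (k/2-1-1) := by omega
    omega
  · -- Case B : the level c := m + K is an internal level; find a chord there
    set c : ℕ := m + (k/2-1) with hcdef
    have hKc : (k/2-1) ∣ c := Nat.dvd_add hKm dvd_rfl
    have hmc : m < c := by omega
    have hdvdm : ∀ t : ℤ, (k/2-1) ∣ F (g t) → F (g t) < c → F (g t) = m := by
      intro t h1 h2
      have h3 := hmle t
      have h4 := Nat.dvd_sub h1 hKm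
      rcases Nat.eq_zero_or_pos (F (g t) - m) with h | h
      · omega
      · have := Nat.le_of_dvd h h4; omega
    have stepup : ∀ t : ℤ, F (g t) < c → F (g (t + 1)) ≤ c := by
      intro t hlt
      have hA := GkxNAux.adjF _ _ (hadj t)
      rw [← hFdef] at hA
      rcases hA with ⟨h1, h2⟩ | ⟨h1, h2⟩ | ⟨h1, h2, h3⟩ | ⟨h1, h2⟩
      · have := hdvdm t h2 hlt
        omega
      · omega
      · have hFp : F (g t) = (g t).val.2 := by
          rw [hFdef]; exact GkxNAux.Flev_row2 _ h1
        have hFq : F (g (t + 1)) = (g (t + 1)).val.2 := by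
          rw [hFdef]; exact GkxNAux.Flev_row2 _ (by rw [h2]; exact h1)
        omega
      · omega
    have stepdown : ∀ t : ℤ, c < F (g t) → c ≤ F (g (t + 1)) := by
      intro t hgt
      have hA := GkxNAux.adjF _ _ (hadj t)
      rw [← hFdef] at hA
      rcases hA with ⟨h1, h2⟩ | ⟨h1, h2⟩ | ⟨h1, h2, h3⟩ | ⟨h1, h2⟩
      · omega
      · by_contra hlt
        push_neg at hlt
        have := hdvdm (t + 1) h2 hlt
        omega
      · have hFp : F (g t) = (g t).val.2 := by
          rw [hFdef]; exact GkxNAux.Flev_row2 _ h1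
        have hFq : F (g (t + 1)) = (g (t + 1)).val.2 := by
          rw [hFdef]; exact GkxNAux.Flev_row2 _ (by rw [h2]; exact h1)
        omega
      · omega
    have chainlt : ∀ (d : ℕ) (t : ℤ), (∀ e : ℕ, e ≤ d → F (g (t + e)) ≠ c) →
        F (g t) < c → F (g (t + d)) < c := by
      intro d
      induction d with
      | zero => intro t _ h; simpa using h
      | succ d ih =>
        intro t hne h
        have h1 := ih t (fun e he => hne e (by omega)) h
        have h2 := stepup (t + d) h1
        have h3 := hne (d + 1) le_rfl
        rw [show t + ((d + 1 : ℕ) : ℤ) = t + (d : ℤ) + 1 by push_cast; ring] at h3 ⊢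
        omega
    have chaingt : ∀ (d : ℕ) (t : ℤ), (∀ e : ℕ, e ≤ d → F (g (t + e)) ≠ c) →
        c < F (g t) → c < F (g (t + d)) := by
      intro d
      induction d with
      | zero => intro t _ h; simpa using h
      | succ d ih =>
        intro t hne h
        have h1 := ih t (fun e he => hne e (by omega)) h
        have h2 := stepdown (t + d) h1
        have h3 := hne (d + 1) le_rfl
        rw [show t + ((d + 1 : ℕ) : ℤ) = t + (d : ℤ) + 1 by push_cast; ring] at h3 ⊢
        omega
    have hfinal : ∀ (s : ℤ) (lo : ℕ),
        (∀ e : ℕ, lo ≤ e → e ≤ w.length - 1 → F (g (s + e)) ≠ c) →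
        ∀ e₀ e₁ : ℕ, lo ≤ e₀ → e₀ ≤ w.length - 1 → lo ≤ e₁ → e₁ ≤ w.length - 1 →
        F (g (s + e₀)) < c → c < F (g (s + e₁)) → False := by
      intro s lo harc e₀ e₁ h00 h01 h10 h11 hm0 hM1
      rcases lt_trichotomy e₀ e₁ with h | h | h
      · have hch := chainlt (e₁ - e₀) (s + e₀) (fun e he => by
          have h' := harc (e₀ + e) (by omega) (by omega)
          rwa [show s + ((e₀ + e : ℕ) : ℤ) = s + (e₀ : ℤ) + (e : ℤ) by push_cast; ring] at h') hm0
        rw [show s + (e₀ : ℤ) + ((e₁ - e₀ : ℕ) : ℤ) = s + (e₁ : ℤ) by omega] at hch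
        omega
      · subst h; omega
      · have hch := chaingt (e₀ - e₁) (s + e₁) (fun e he => by
          have h' := harc (e₁ + e) (by omega) (by omega)
          rwa [show s + ((e₁ + e : ℕ) : ℤ) = s + (e₁ : ℤ) + (e : ℤ) by push_cast; ring] at h') hM1
        rw [show s + (e₁ : ℤ) + ((e₀ - e₁ : ℕ) : ℤ) = s + (e₀ : ℤ) by omega] at hch
        omega
    have hoff : ∀ s t : ℤ, ∃ e : ℕ, e ≤ w.length - 1 ∧ g (s + e) = g t := by
      intro s t
      have h0 : 0 ≤ (t - s) % (w.length : ℤ) := Int.emod_nonneg _ (by exact_mod_cast hL0.ne')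
      have h1 : (t - s) % (w.length : ℤ) < w.length :=
        Int.emod_lt_of_pos _ (by exact_mod_cast hL0)
      refine ⟨((t - s) % (w.length : ℤ)).toNat, by omega, ?_⟩
      apply CycAux.cyc_congr
      rw [Int.toNat_of_nonneg h0]
      conv_lhs => rw [Int.add_emod, Int.emod_emod_of_dvd _ dvd_rfl, ← Int.add_emod]
      rw [show s + (t - s) = t by ring]
    set Sc := S.filter (fun a => F a = c) with hScdef
    have hSc2 : Sc.card ≤ 2 := by rw [hScdef]; exact hcard2 c hKc
    rcases Nat.lt_or_ge Sc.card 1 with hc0 | hc1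
    · -- no vertex at level c at all
      have hnoc : ∀ t : ℤ, F (g t) ≠ c := by
        intro t hFt
        have hmem' : g t ∈ Sc := by rw [hScdef]; exact Finset.mem_filter.mpr ⟨hgS t, hFt⟩
        have := Finset.card_pos.mpr ⟨_, hmem'⟩
        omega
      obtain ⟨e₁, he₁L, he₁⟩ := hoff i₀ i₁
      refine hfinal i₀ 0 (fun e _ _ => hnoc _) 0 e₁ (by omega) (by omega) (by omega) he₁L ?_ ?_
      · rw [show i₀ + ((0 : ℕ) : ℤ) = i₀ by norm_num]
        omega
      · rw [he₁]
        omega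
    rcases Nat.lt_or_ge Sc.card 2 with hc1' | hc2'
    · -- exactly one vertex at level c
      obtain ⟨p, hp⟩ := Finset.card_eq_one.mp (show Sc.card = 1 by omega)
      have hpSc : p ∈ Sc := by rw [hp]; exact Finset.mem_singleton_self p
      rw [hScdef, Finset.mem_filter] at hpSc
      obtain ⟨s, hs⟩ := hSex p hpSc.1
      have hsF : F (g s) = c := by rw [hs]; exact hpSc.2
      have honly : ∀ t : ℤ, F (g t) = c → g t = g s := by
        intro t hFt
        have hmem' : g t ∈ Sc := by rw [hScdef]; exact Finset.mem_filter.mpr ⟨hgS t, hFt⟩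
        rw [hp, Finset.mem_singleton] at hmem'
        rw [hmem', hs]
      have harc : ∀ e : ℕ, 1 ≤ e → e ≤ w.length - 1 → F (g (s + e)) ≠ c := by
        intro e he1 he2 hFe
        exact hnonper s e (by omega) (by omega) (honly _ hFe)
      obtain ⟨e₀, he₀L, he₀⟩ := hoff s i₀
      obtain ⟨e₁, he₁L, he₁⟩ := hoff s i₁
      have hFe₀ : F (g (s + (e₀ : ℤ))) = m := by rw [he₀]; exact hFm
      have hFe₁ : F (g (s + (e₁ : ℤ))) = M := by rw [he₁]; exact hFM
      have he₀1 : 1 ≤ e₀ := by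
        rcases Nat.eq_zero_or_pos e₀ with h | h
        · subst h
          rw [show s + ((0 : ℕ) : ℤ) = s by norm_num] at hFe₀
          omega
        · omega
      have he₁1 : 1 ≤ e₁ := by
        rcases Nat.eq_zero_or_pos e₁ with h | h
        · subst h
          rw [show s + ((0 : ℕ) : ℤ) = s by norm_num] at hFe₁
          omega
        · omega
      exact hfinal s 1 harc e₀ e₁ he₀1 he₀L he₁1 he₁L (by omega) (by omega)
    · -- exactly two vertices at level c
      obtain ⟨p, q, hpq, hpq2⟩ := Finset.card_eq_two.mp (show Sc.card = 2 by omega)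
      have hpSc : p ∈ Sc := by rw [hpq2]; exact Finset.mem_insert_self _ _
      have hqSc : q ∈ Sc := by rw [hpq2]; exact Finset.mem_insert_of_mem (Finset.mem_singleton_self q)
      rw [hScdef, Finset.mem_filter] at hpSc hqSc
      have hadjpq : (GkxN k x N).Adj p q :=
        GkxNAux.adj_of_level hk p q hpq
          (by rw [hFdef] at hpSc hqSc; rw [hpSc.2, hqSc.2])
          (by rw [hFdef] at hpSc; rw [hpSc.2]; exact hKc)
      obtain ⟨a, ha⟩ := hSex p hpSc.1
      obtain ⟨b, hb⟩ := hSex q hqSc.1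
      have hkey : ∃ s : ℤ, F (g s) = c ∧ F (g (s + 1)) = c ∧
          ∀ t : ℤ, F (g t) = c → (g t = g s ∨ g t = g (s + 1)) := by
        have honly2 : ∀ t : ℤ, F (g t) = c → g t = p ∨ g t = q := by
          intro t hFt
          have hmem' : g t ∈ Sc := by rw [hScdef]; exact Finset.mem_filter.mpr ⟨hgS t, hFt⟩
          rw [hpq2] at hmem'
          rcases Finset.mem_insert.mp hmem' with h | h
          · exact Or.inl h
          · exact Or.inr (Finset.mem_singleton.mp h)
        rcases hconsec a b (by rw [ha, hb]; exact hadjpq) with h | h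
        · refine ⟨a, by rw [ha]; exact hpSc.2, by rw [← h, hb]; exact hqSc.2, ?_⟩
          intro t hFt
          rcases honly2 t hFt with h' | h'
          · exact Or.inl (by rw [h', ← ha])
          · exact Or.inr (by rw [h', ← hb, h])
        · refine ⟨b, by rw [hb]; exact hqSc.2, by rw [← h, ha]; exact hpSc.2, ?_⟩
          intro t hFt
          rcases honly2 t hFt with h' | h'
          · exact Or.inr (by rw [h', ← ha, h])
          · exact Or.inl (by rw [h', ← hb])
      obtain ⟨s, hs0, hs1, honly⟩ := hkey
      have harc : ∀ e : ℕ, 2 ≤ e → e ≤ w.length - 1 → F (g (s + e)) ≠ c := by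
        intro e he1 he2 hFe
        rcases honly _ hFe with h | h
        · exact hnonper s e (by omega) (by omega) h
        · refine hnonper (s + 1) ((e : ℤ) - 1) (by omega) (by omega) ?_
          rw [show s + 1 + ((e : ℤ) - 1) = s + e by ring]
          exact h
      obtain ⟨e₀, he₀L, he₀⟩ := hoff s i₀
      obtain ⟨e₁, he₁L, he₁⟩ := hoff s i₁
      have hFe₀ : F (g (s + (e₀ : ℤ))) = m := by rw [he₀]; exact hFm
      have hFe₁ : F (g (s + (e₁ : ℤ))) = M := by rw [he₁]; exact hFM
      have he₀1 : 2 ≤ e₀ := by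
        by_contra hcon
        interval_cases e₀
        · rw [show s + ((0 : ℕ) : ℤ) = s by norm_num] at hFe₀; omega
        · rw [show s + ((1 : ℕ) : ℤ) = s + 1 by norm_num] at hFe₀; omega
      have he₁1 : 2 ≤ e₁ := by
        by_contra hcon
        interval_cases e₁
        · rw [show s + ((0 : ℕ) : ℤ) = s by norm_num] at hFe₁; omega
        · rw [show s + ((1 : ℕ) : ℤ) = s + 1 by norm_num] at hFe₁; omega
      exact hfinal s 2 harc e₀ e₁ he₀1 he₀L he₁1 he₁L (by omega) (by omega)
end

section
/- Let k ≥ 4 be an even integer and set K = k/2 − 1, and let x ≥ 0 and N ≥ 2 be integers. Then the graph G(k,x,N) is connected and its diameter is at most K + 1 + x. -/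
namespace GkxNaux

variable {k x N : ℕ}

lemma adj_mk {p q : ℕ × ℕ} (hp) (hq) (hne : p ≠ q)
    (h : GkxNRel k p q ∨ GkxNRel k q p) :
    (GkxN k x N).Adj ⟨p, hp⟩ ⟨q, hq⟩ := by
  rw [GkxN]
  exact (SimpleGraph.fromRel_adj _ _ _).2 ⟨fun hc => hne (congrArg Subtype.val hc), h⟩

lemma adj_row1 {a : ℕ} (ha : a + 1 ≤ x) :
    (GkxN k x N).Adj ⟨(1, a), Or.inl ⟨rfl, by omega⟩⟩ ⟨(1, a + 1), Or.inl ⟨rfl, ha⟩⟩ :=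
  adj_mk _ _ (by simp) (Or.inl (Or.inl ⟨rfl, rfl, rfl⟩))

lemma adj_rowi {i a : ℕ} (hi2 : 2 ≤ i) (hiN : i ≤ N) (ha : a + 1 ≤ x * (k / 2 - 1)) :
    (GkxN k x N).Adj ⟨(i, a), Or.inr ⟨hi2, hiN, by omega⟩⟩
      ⟨(i, a + 1), Or.inr ⟨hi2, hiN, ha⟩⟩ :=
  adj_mk _ _ (by simp) (Or.inl (Or.inr (Or.inl ⟨hi2, rfl, rfl⟩)))

lemma adj_cross {i a : ℕ} (hi2 : 2 ≤ i) (hiN : i ≤ N) (ha : a ≤ x) :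
    (GkxN k x N).Adj ⟨(1, a), Or.inl ⟨rfl, ha⟩⟩
      ⟨(i, a * (k / 2 - 1)), Or.inr ⟨hi2, hiN, Nat.mul_le_mul_right _ ha⟩⟩ :=
  adj_mk _ _ (by simp; omega) (Or.inl (Or.inr (Or.inr (Or.inl ⟨rfl, hi2, rfl⟩))))

lemma adj_swap {i j c : ℕ} (hi2 : 2 ≤ i) (hiN : i ≤ N) (hj2 : 2 ≤ j) (hjN : j ≤ N)
    (hij : i ≠ j) (hc : c ≤ x * (k / 2 - 1)) (hd : (k / 2 - 1) ∣ c) :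
    (GkxN k x N).Adj ⟨(i, c), Or.inr ⟨hi2, hiN, hc⟩⟩ ⟨(j, c), Or.inr ⟨hj2, hjN, hc⟩⟩ :=
  adj_mk _ _ (by simp [hij]) (Or.inl (Or.inr (Or.inr (Or.inr ⟨hi2, hj2, hij, rfl, hd⟩))))

lemma reach1 (j : ℕ) (hj : j ≤ x) (h) :
    (GkxN k x N).Reachable ⟨(1, 0), Or.inl ⟨rfl, Nat.zero_le x⟩⟩ ⟨(1, j), h⟩ := by
  induction j with
  | zero => exact SimpleGraph.Reachable.refl _
  | succ n ih => exact (ih (by omega) (Or.inl ⟨rfl, by omega⟩)).trans (adj_row1 hj).reachable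

lemma reachi (i j : ℕ) (hi2 : 2 ≤ i) (hiN : i ≤ N) (hj : j ≤ x * (k / 2 - 1)) (h) :
    (GkxN k x N).Reachable ⟨(1, 0), Or.inl ⟨rfl, Nat.zero_le x⟩⟩ ⟨(i, j), h⟩ := by
  induction j with
  | zero =>
      have h0 := adj_cross (k := k) (x := x) (a := 0) hi2 hiN (Nat.zero_le x)
      simpa using h0.reachable
  | succ n ih =>
      exact (ih (by omega) (Or.inr ⟨hi2, hiN, by omega⟩)).trans
        (adj_rowi hi2 hiN hj).reachable

/-- Every vertex is reachable from `(1,0)`. -/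
lemma reach (u : GkxNVertex k x N) :
    (GkxN k x N).Reachable ⟨(1, 0), Or.inl ⟨rfl, Nat.zero_le x⟩⟩ u := by
  obtain ⟨⟨i, j⟩, hu⟩ := u
  rcases hu with ⟨hi1, hj⟩ | ⟨hi2, hiN, hj⟩
  · have he : (⟨(i, j), Or.inl ⟨hi1, hj⟩⟩ : GkxNVertex k x N) =
        ⟨(1, j), Or.inl ⟨rfl, hj⟩⟩ := Subtype.ext (by simp only [Prod.mk.injEq]; exact ⟨hi1, trivial⟩)
    rw [he]
    exact reach1 j hj _
  · exact reachi i j hi2 hiN hj _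

lemma connected : (GkxN k x N).Connected := by
  rw [SimpleGraph.connected_iff]
  refine ⟨fun u v => (reach u).symm.trans (reach v), ⟨⟨(1, 0), Or.inl ⟨rfl, Nat.zero_le x⟩⟩⟩⟩

lemma dist_adj {u v : GkxNVertex k x N} (h : (GkxN k x N).Adj u v) :
    (GkxN k x N).dist u v ≤ 1 := by
  simpa using SimpleGraph.dist_le h.toWalk

lemma tri (u v w : GkxNVertex k x N) :
    (GkxN k x N).dist u w ≤ (GkxN k x N).dist u v + (GkxN k x N).dist v w :=
  (connected (k := k) (x := x) (N := N)).dist_triangle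

/-- walking along row 1. -/
lemma dist_row1 {a b : ℕ} (ha : a ≤ x) (hb : b ≤ x) (hua) (hub) :
    (GkxN k x N).dist ⟨(1, a), hua⟩ ⟨(1, b), hub⟩ ≤ Nat.dist a b := by
  -- wlog a ≤ b via two-step
  suffices H : ∀ d a' : ℕ, a' + d ≤ x → ∀ (h1) (h2),
      (GkxN k x N).dist ⟨(1, a'), h1⟩ ⟨(1, a' + d), h2⟩ ≤ d by
    rcases le_total a b with hab | hab
    · obtain ⟨d, rfl⟩ := Nat.exists_eq_add_of_le hab
      have := H d a hb hua hub
      simpa [Nat.dist] using this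
    · obtain ⟨d, rfl⟩ := Nat.exists_eq_add_of_le hab
      have := H d b ha hub hua
      refine SimpleGraph.dist_comm.trans_le ?_
      simpa [Nat.dist] using this
  intro d
  induction d with
  | zero => intro a' _ h1 h2; simp; exact SimpleGraph.dist_self
  | succ n ih =>
      intro a' hle h1 h2
      have step : (GkxN k x N).dist ⟨(1, a' + n), Or.inl ⟨rfl, by omega⟩⟩
          ⟨(1, a' + (n + 1)), h2⟩ ≤ 1 := by
        have := dist_adj (adj_row1 (k := k) (x := x) (N := N) (a := a' + n) (by omega))
        exact this
      calc (GkxN k x N).dist ⟨(1, a'), h1⟩ ⟨(1, a' + (n + 1)), h2⟩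
          ≤ _ + _ := tri _ (⟨(1, a' + n), Or.inl ⟨rfl, by omega⟩⟩ : GkxNVertex k x N) _
        _ ≤ n + 1 := by
            have := ih a' (by omega) h1 (Or.inl ⟨rfl, by omega⟩)
            omega

/-- walking along row `i ≥ 2`. -/
lemma dist_rowi {i a b : ℕ} (hi2 : 2 ≤ i) (hiN : i ≤ N)
    (ha : a ≤ x * (k / 2 - 1)) (hb : b ≤ x * (k / 2 - 1)) (hua) (hub) :
    (GkxN k x N).dist ⟨(i, a), hua⟩ ⟨(i, b), hub⟩ ≤ Nat.dist a b := by
  suffices H : ∀ d a' : ℕ, a' + d ≤ x * (k / 2 - 1) → ∀ (h1) (h2),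
      (GkxN k x N).dist ⟨(i, a'), h1⟩ ⟨(i, a' + d), h2⟩ ≤ d by
    rcases le_total a b with hab | hab
    · obtain ⟨d, rfl⟩ := Nat.exists_eq_add_of_le hab
      have := H d a hb hua hub
      simpa [Nat.dist] using this
    · obtain ⟨d, rfl⟩ := Nat.exists_eq_add_of_le hab
      have := H d b ha hub hua
      refine SimpleGraph.dist_comm.trans_le ?_
      simpa [Nat.dist] using this
  intro d
  induction d with
  | zero => intro a' _ h1 h2; simp; exact SimpleGraph.dist_self
  | succ n ih =>
      intro a' hle h1 h2
      have step : (GkxN k x N).dist ⟨(i, a' + n), Or.inr ⟨hi2, hiN, by omega⟩⟩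
          ⟨(i, a' + (n + 1)), h2⟩ ≤ 1 := by
        have := dist_adj (adj_rowi (k := k) (x := x) (N := N) (a := a' + n) hi2 hiN (by omega))
        exact this
      calc (GkxN k x N).dist ⟨(i, a'), h1⟩ ⟨(i, a' + (n + 1)), h2⟩
          ≤ _ + _ := tri _ (⟨(i, a' + n), Or.inr ⟨hi2, hiN, by omega⟩⟩ : GkxNVertex k x N) _
        _ ≤ n + 1 := by
            have := ih a' (by omega) h1 (Or.inr ⟨hi2, hiN, by omega⟩)
            omega

/-- route from `(1,b)` to `(i,h)` via `(1,a)` and `(i,aK)`. -/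
lemma route1 {b i h a : ℕ} (hb : b ≤ x) (hi2 : 2 ≤ i) (hiN : i ≤ N)
    (hh : h ≤ x * (k / 2 - 1)) (ha : a ≤ x) (hub) (huh) :
    (GkxN k x N).dist ⟨(1, b), hub⟩ ⟨(i, h), huh⟩ ≤
      Nat.dist b a + 1 + Nat.dist (a * (k / 2 - 1)) h := by
  have haK : a * (k / 2 - 1) ≤ x * (k / 2 - 1) := Nat.mul_le_mul_right _ ha
  have t1 : (GkxN k x N).dist ⟨(1, b), hub⟩ ⟨(1, a), Or.inl ⟨rfl, ha⟩⟩ ≤ Nat.dist b a :=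
    dist_row1 hb ha _ _
  have t2 : (GkxN k x N).dist (⟨(1, a), Or.inl ⟨rfl, ha⟩⟩ : GkxNVertex k x N)
      ⟨(i, a * (k / 2 - 1)), Or.inr ⟨hi2, hiN, haK⟩⟩ ≤ 1 :=
    dist_adj (adj_cross hi2 hiN ha)
  have t3 : (GkxN k x N).dist (⟨(i, a * (k / 2 - 1)), Or.inr ⟨hi2, hiN, haK⟩⟩ :
      GkxNVertex k x N) ⟨(i, h), huh⟩ ≤ Nat.dist (a * (k / 2 - 1)) h :=
    dist_rowi hi2 hiN haK hh _ _
  have := tri (⟨(1, b), hub⟩ : GkxNVertex k x N)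
    ⟨(1, a), Or.inl ⟨rfl, ha⟩⟩ ⟨(i, h), huh⟩
  have := tri (⟨(1, a), Or.inl ⟨rfl, ha⟩⟩ : GkxNVertex k x N)
    ⟨(i, a * (k / 2 - 1)), Or.inr ⟨hi2, hiN, haK⟩⟩ ⟨(i, h), huh⟩
  omega

/-- route from `(i,h)` to `(i',h')` via row 1: `(i,aK) - (1,a) - (1,b) - (i',bK)`. -/
lemma route2 {i h i' h' a b : ℕ} (hi2 : 2 ≤ i) (hiN : i ≤ N) (hi2' : 2 ≤ i') (hiN' : i' ≤ N)
    (hh : h ≤ x * (k / 2 - 1)) (hh' : h' ≤ x * (k / 2 - 1)) (ha : a ≤ x) (hb : b ≤ x)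
    (huh) (huh') :
    (GkxN k x N).dist ⟨(i, h), huh⟩ ⟨(i', h'), huh'⟩ ≤
      Nat.dist h (a * (k / 2 - 1)) + 1 + Nat.dist a b + 1 +
        Nat.dist (b * (k / 2 - 1)) h' := by
  have haK : a * (k / 2 - 1) ≤ x * (k / 2 - 1) := Nat.mul_le_mul_right _ ha
  have t1 : (GkxN k x N).dist ⟨(i, h), huh⟩
      ⟨(i, a * (k / 2 - 1)), Or.inr ⟨hi2, hiN, haK⟩⟩ ≤ Nat.dist h (a * (k / 2 - 1)) :=
    dist_rowi hi2 hiN hh haK _ _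
  have t2 : (GkxN k x N).dist (⟨(i, a * (k / 2 - 1)), Or.inr ⟨hi2, hiN, haK⟩⟩ :
      GkxNVertex k x N) ⟨(1, a), Or.inl ⟨rfl, ha⟩⟩ ≤ 1 := by
    refine SimpleGraph.dist_comm.trans_le ?_
    exact dist_adj (adj_cross hi2 hiN ha)
  have t3 : (GkxN k x N).dist (⟨(1, a), Or.inl ⟨rfl, ha⟩⟩ : GkxNVertex k x N)
      ⟨(i', h'), huh'⟩ ≤ Nat.dist a b + 1 + Nat.dist (b * (k / 2 - 1)) h' :=
    route1 ha hi2' hiN' hh' hb _ _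
  have u1 := tri (⟨(i, h), huh⟩ : GkxNVertex k x N)
    ⟨(i, a * (k / 2 - 1)), Or.inr ⟨hi2, hiN, haK⟩⟩ ⟨(i', h'), huh'⟩
  have u2 := tri (⟨(i, a * (k / 2 - 1)), Or.inr ⟨hi2, hiN, haK⟩⟩ : GkxNVertex k x N)
    ⟨(1, a), Or.inl ⟨rfl, ha⟩⟩ ⟨(i', h'), huh'⟩
  omega

/-- route from `(i,h)` to `(i',h')`, `i ≠ i'`, via the `E₄` edge at level `cK`. -/
lemma route3 {i h i' h' c : ℕ} (hi2 : 2 ≤ i) (hiN : i ≤ N) (hi2' : 2 ≤ i') (hiN' : i' ≤ N)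
    (hii' : i ≠ i') (hh : h ≤ x * (k / 2 - 1)) (hh' : h' ≤ x * (k / 2 - 1)) (hc : c ≤ x)
    (huh) (huh') :
    (GkxN k x N).dist ⟨(i, h), huh⟩ ⟨(i', h'), huh'⟩ ≤
      Nat.dist h (c * (k / 2 - 1)) + 1 + Nat.dist (c * (k / 2 - 1)) h' := by
  have hcK : c * (k / 2 - 1) ≤ x * (k / 2 - 1) := Nat.mul_le_mul_right _ hc
  have t1 : (GkxN k x N).dist ⟨(i, h), huh⟩
      ⟨(i, c * (k / 2 - 1)), Or.inr ⟨hi2, hiN, hcK⟩⟩ ≤ Nat.dist h (c * (k / 2 - 1)) :=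
    dist_rowi hi2 hiN hh hcK _ _
  have t2 : (GkxN k x N).dist (⟨(i, c * (k / 2 - 1)), Or.inr ⟨hi2, hiN, hcK⟩⟩ :
      GkxNVertex k x N) ⟨(i', c * (k / 2 - 1)), Or.inr ⟨hi2', hiN', hcK⟩⟩ ≤ 1 :=
    dist_adj (adj_swap hi2 hiN hi2' hiN' hii' hcK (dvd_mul_left _ _))
  have t3 : (GkxN k x N).dist (⟨(i', c * (k / 2 - 1)), Or.inr ⟨hi2', hiN', hcK⟩⟩ :
      GkxNVertex k x N) ⟨(i', h'), huh'⟩ ≤ Nat.dist (c * (k / 2 - 1)) h' :=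
    dist_rowi hi2' hiN' hcK hh' _ _
  have u1 := tri (⟨(i, h), huh⟩ : GkxNVertex k x N)
    ⟨(i, c * (k / 2 - 1)), Or.inr ⟨hi2, hiN, hcK⟩⟩ ⟨(i', h'), huh'⟩
  have u2 := tri (⟨(i, c * (k / 2 - 1)), Or.inr ⟨hi2, hiN, hcK⟩⟩ : GkxNVertex k x N)
    ⟨(i', c * (k / 2 - 1)), Or.inr ⟨hi2', hiN', hcK⟩⟩ ⟨(i', h'), huh'⟩
  omega

/-- core bound when both vertices in rows ≥ 2, with `h = qK + r`, `h' = q'K + r'`,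
`q ≤ q'`. -/
lemma main_ii_core {i h i' h' q r q' r' : ℕ} (hK : 1 ≤ k / 2 - 1)
    (hi2 : 2 ≤ i) (hiN : i ≤ N) (hi2' : 2 ≤ i') (hiN' : i' ≤ N)
    (hh : h ≤ x * (k / 2 - 1)) (hh' : h' ≤ x * (k / 2 - 1))
    (hhd : h = q * (k / 2 - 1) + r) (hhd' : h' = q' * (k / 2 - 1) + r')
    (hrK : r < k / 2 - 1) (hrK' : r' < k / 2 - 1) (hqq : q ≤ q') (huh) (huh') :
    (GkxN k x N).dist ⟨(i, h), huh⟩ ⟨(i', h'), huh'⟩ ≤ (k / 2 - 1) + 1 + x := by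
  have e0 : (q + 1) * (k / 2 - 1) = q * (k / 2 - 1) + (k / 2 - 1) := by ring
  have e0' : (q' + 1) * (k / 2 - 1) = q' * (k / 2 - 1) + (k / 2 - 1) := by ring
  have hqx : q ≤ x := by
    by_contra hc
    have h1 : (x + 1) * (k / 2 - 1) ≤ q * (k / 2 - 1) := Nat.mul_le_mul_right _ (by omega)
    have h2 : (x + 1) * (k / 2 - 1) = x * (k / 2 - 1) + (k / 2 - 1) := by ring
    omega
  have hqx' : q' ≤ x := by
    by_contra hc
    have h1 : (x + 1) * (k / 2 - 1) ≤ q' * (k / 2 - 1) := Nat.mul_le_mul_right _ (by omega)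
    have h2 : (x + 1) * (k / 2 - 1) = x * (k / 2 - 1) + (k / 2 - 1) := by ring
    omega
  have hqltx : 0 < r → q < x := by
    intro h0
    by_contra hc
    have h1 : x * (k / 2 - 1) ≤ q * (k / 2 - 1) := Nat.mul_le_mul_right _ (by omega)
    omega
  have hqltx' : 0 < r' → q' < x := by
    intro h0
    by_contra hc
    have h1 : x * (k / 2 - 1) ≤ q' * (k / 2 - 1) := Nat.mul_le_mul_right _ (by omega)
    omega
  rcases eq_or_lt_of_le hqq with hqe | hqlt2
  · -- q = q'
    subst hqe
    rcases eq_or_ne i i' with rfl | hii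
    · have hw := dist_rowi (k := k) (x := x) (N := N) hi2 hiN hh hh' huh huh'
      have hd : Nat.dist h h' ≤ (k / 2 - 1) := by simp [Nat.dist]; omega
      omega
    · rcases le_or_gt (r + r') (k / 2 - 1) with hs | hs
      · have hw := route3 (k := k) (x := x) (N := N) (c := q)
          hi2 hiN hi2' hiN' hii hh hh' hqx huh huh'
        have e1 : Nat.dist h (q * (k / 2 - 1)) = r := by simp [Nat.dist]; omega
        have e2 : Nat.dist (q * (k / 2 - 1)) h' = r' := by simp [Nat.dist]; omega
        omega
      · have hqx1 : q + 1 ≤ x := by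
          rcases Nat.lt_or_ge 0 r with h0 | h0
          · exact hqltx h0
          · exact hqltx' (by omega)
        have hw := route3 (k := k) (x := x) (N := N) (c := q + 1)
          hi2 hiN hi2' hiN' hii hh hh' hqx1 huh huh'
        have e1 : Nat.dist h ((q + 1) * (k / 2 - 1)) = (k / 2 - 1) - r := by simp [Nat.dist]; omega
        have e2 : Nat.dist ((q + 1) * (k / 2 - 1)) h' = (k / 2 - 1) - r' := by simp [Nat.dist]; omega
        omega
  · -- q < q'
    have hq1q' : q + 1 ≤ q' := hqlt2
    have hmono : q * (k / 2 - 1) + (k / 2 - 1) ≤ q' * (k / 2 - 1) := by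
      have := Nat.mul_le_mul_right (k / 2 - 1) hq1q'
      omega
    rcases le_or_gt r' r with hrr | hrr
    · -- up at u, down at v
      have hw := route2 (k := k) (x := x) (N := N) (a := q + 1) (b := q')
        hi2 hiN hi2' hiN' hh hh' (by omega) hqx' huh huh'
      have e1 : Nat.dist h ((q + 1) * (k / 2 - 1)) = (k / 2 - 1) - r := by simp [Nat.dist]; omega
      have e2 : Nat.dist (q + 1) q' = q' - q - 1 := by simp [Nat.dist]; omega
      have e3 : Nat.dist (q' * (k / 2 - 1)) h' = r' := by simp [Nat.dist]; omega
      omega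
    · have hq'x : q' < x := hqltx' (by omega)
      rcases le_or_gt (r + r') (k / 2 - 1) with hs | hs
      · -- down, down
        have hw := route2 (k := k) (x := x) (N := N) (a := q) (b := q')
          hi2 hiN hi2' hiN' hh hh' hqx hqx' huh huh'
        have e1 : Nat.dist h (q * (k / 2 - 1)) = r := by simp [Nat.dist]; omega
        have e2 : Nat.dist q q' = q' - q := by simp [Nat.dist]; omega
        have e3 : Nat.dist (q' * (k / 2 - 1)) h' = r' := by simp [Nat.dist]; omega
        omega
      · -- up, up
        have hw := route2 (k := k) (x := x) (N := N) (a := q + 1) (b := q' + 1)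
          hi2 hiN hi2' hiN' hh hh' (by omega) (by omega) huh huh'
        have e1 : Nat.dist h ((q + 1) * (k / 2 - 1)) = (k / 2 - 1) - r := by simp [Nat.dist]; omega
        have e2 : Nat.dist (q + 1) (q' + 1) = q' - q := by simp [Nat.dist]; omega
        have e3 : Nat.dist ((q' + 1) * (k / 2 - 1)) h' = (k / 2 - 1) - r' := by simp [Nat.dist]; omega
        omega

lemma main_ii {i h i' h' : ℕ} (hK : 1 ≤ k / 2 - 1)
    (hi2 : 2 ≤ i) (hiN : i ≤ N) (hi2' : 2 ≤ i') (hiN' : i' ≤ N)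
    (hh : h ≤ x * (k / 2 - 1)) (hh' : h' ≤ x * (k / 2 - 1))
    (hqq : h / (k / 2 - 1) ≤ h' / (k / 2 - 1)) (huh) (huh') :
    (GkxN k x N).dist ⟨(i, h), huh⟩ ⟨(i', h'), huh'⟩ ≤ (k / 2 - 1) + 1 + x :=
  main_ii_core hK hi2 hiN hi2' hiN' hh hh'
    (Nat.div_add_mod' h _).symm (Nat.div_add_mod' h' _).symm
    (Nat.mod_lt _ hK) (Nat.mod_lt _ hK) hqq huh huh'

lemma main_1i {b i h : ℕ} (hK : 1 ≤ k / 2 - 1) (hb : b ≤ x)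
    (hi2 : 2 ≤ i) (hiN : i ≤ N) (hh : h ≤ x * (k / 2 - 1)) (hub) (huh) :
    (GkxN k x N).dist ⟨(1, b), hub⟩ ⟨(i, h), huh⟩ ≤ (k / 2 - 1) + 1 + x := by
  obtain ⟨q, r, hhd, hrK⟩ : ∃ q r, h = q * (k / 2 - 1) + r ∧ r < (k / 2 - 1) :=
    ⟨h / (k / 2 - 1), h % (k / 2 - 1), (Nat.div_add_mod' h (k / 2 - 1)).symm, Nat.mod_lt _ hK⟩
  have hqx : q ≤ x := by
    by_contra hc
    have h1 : (x + 1) * (k / 2 - 1) ≤ q * (k / 2 - 1) := Nat.mul_le_mul_right _ (by omega)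
    have h2 : (x + 1) * (k / 2 - 1) = x * (k / 2 - 1) + (k / 2 - 1) := by ring
    omega
  have hw := route1 (k := k) (x := x) (N := N) (a := q) hb hi2 hiN hh hqx hub huh
  have e1 : Nat.dist b q ≤ x := by simp [Nat.dist]; omega
  have e2 : Nat.dist (q * (k / 2 - 1)) h = r := by simp [Nat.dist]; omega
  omega

end GkxNaux

/-- For an even `k ≥ 4`, `K = k/2 - 1`, `x ≥ 0`, `N ≥ 2`, the graph `G(k,x,N)` is
connected and its diameter is at most `K + 1 + x`. -/
theorem GkxN_connected_diam (k x N : ℕ) (hk : 4 ≤ k) (hke : Even k) (hN : 2 ≤ N) :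
    (GkxN k x N).Connected ∧
    ∀ u v : GkxNVertex k x N, (GkxN k x N).dist u v ≤ (k / 2 - 1) + 1 + x := by
  have hK : 1 ≤ k / 2 - 1 := by omega
  refine ⟨GkxNaux.connected, ?_⟩
  rintro ⟨⟨a, b⟩, hu⟩ ⟨⟨c, d⟩, hv⟩
  rcases hu with ⟨ha1, hb⟩ | ⟨ha2, haN, hb⟩ <;>
    rcases hv with ⟨hc1, hd⟩ | ⟨hc2, hcN, hd⟩
  · have e1 : (⟨(a, b), Or.inl ⟨ha1, hb⟩⟩ : GkxNVertex k x N) = ⟨(1, b), Or.inl ⟨rfl, hb⟩⟩ :=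
      Subtype.ext (by simp only [Prod.mk.injEq]; exact ⟨ha1, trivial⟩)
    have e2 : (⟨(c, d), Or.inl ⟨hc1, hd⟩⟩ : GkxNVertex k x N) = ⟨(1, d), Or.inl ⟨rfl, hd⟩⟩ :=
      Subtype.ext (by simp only [Prod.mk.injEq]; exact ⟨hc1, trivial⟩)
    rw [e1, e2]
    have hw := GkxNaux.dist_row1 (k := k) (N := N) (a := b) (b := d) hb hd
      (Or.inl ⟨rfl, hb⟩) (Or.inl ⟨rfl, hd⟩)
    have hnd : Nat.dist b d ≤ x := by simp [Nat.dist]; omega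
    omega
  · have e1 : (⟨(a, b), Or.inl ⟨ha1, hb⟩⟩ : GkxNVertex k x N) = ⟨(1, b), Or.inl ⟨rfl, hb⟩⟩ :=
      Subtype.ext (by simp only [Prod.mk.injEq]; exact ⟨ha1, trivial⟩)
    rw [e1]
    exact GkxNaux.main_1i hK hb hc2 hcN hd _ _
  · have e2 : (⟨(c, d), Or.inl ⟨hc1, hd⟩⟩ : GkxNVertex k x N) = ⟨(1, d), Or.inl ⟨rfl, hd⟩⟩ :=
      Subtype.ext (by simp only [Prod.mk.injEq]; exact ⟨hc1, trivial⟩)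
    rw [e2]; refine SimpleGraph.dist_comm.trans_le ?_
    exact GkxNaux.main_1i hK hd ha2 haN hb _ _
  · rcases le_total (b / (k / 2 - 1)) (d / (k / 2 - 1)) with hq | hq
    · exact GkxNaux.main_ii hK ha2 haN hc2 hcN hb hd hq _ _
    · refine SimpleGraph.dist_comm.trans_le ?_
      exact GkxNaux.main_ii hK hc2 hcN ha2 haN hd hb hq _ _
end

section
/- Let k ≥ 4 be an even integer, K = k/2 − 1, and let D and N be integers with D > 2K and N ≥ 2kD; set x = D − K. Then the graph G(k,x,N) belongs to the class 𝒢(n, N, xK + 3, 1), where n is the number of vertices of G(k,x,N). That is, there exist a partition X_1, …, X_{xK+3} of the vertex set with X_1 and X_{xK+3} singletons and a partition Q_1, …, Q_N of the remaining vertices satisfying conditions (C1), (C2), and (C3) with c = 1. -/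
/-- `R_i = X_{i+1} ∪ ⋯ ∪ X_l` (1-based indexing of the parts `X`). -/
def Rset {V : Type*} (X : ℕ → Set V) (l i : ℕ) : Set V :=
  ⋃ j ∈ Finset.Icc (i + 1) l, X j

/-- `L_i = X_1 ∪ ⋯ ∪ X_{l-i}` (1-based indexing of the parts `X`). -/
def Lset {V : Type*} (X : ℕ → Set V) (l i : ℕ) : Set V :=
  ⋃ j ∈ Finset.Icc 1 (l - i), X j

/-- Membership of `G` in the class `𝒢(n,b,l,c)` of Das Sarma et al., with prescribed
endpoint vertices `s` and `r`: there are partitions `X_1, …, X_l` of `V` (1-based, with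
`X_1 = {s}` and `X_l = {r}` singletons) and `Q_1, …, Q_b` of `V ∖ {s,r}` satisfying
conditions (C1), (C2) and (C3). -/
def InGClassWith {V : Type*} (G : SimpleGraph V) (n b l c : ℕ) (s r : V) : Prop :=
  Nat.card V = n ∧ 3 ≤ l ∧
  ∃ (X : ℕ → Set V) (Q : ℕ → Set V),
    -- (C1): `X_1, …, X_l` is a partition of `V` with `X_1 = {s}`, `X_l = {r}` singletons
    (∀ i j, 1 ≤ i → i < j → j ≤ l → Disjoint (X i) (X j)) ∧
    (⋃ i ∈ Finset.Icc 1 l, X i) = Set.univ ∧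
    X 1 = {s} ∧ X l = {r} ∧
    -- (C2): `Q_1, …, Q_b` is a partition of `V ∖ {s,r}` into connected sets,
    -- each with an edge to `s` and an edge to `r`
    (∀ i j, 1 ≤ i → i < j → j ≤ b → Disjoint (Q i) (Q j)) ∧
    (⋃ i ∈ Finset.Icc 1 b, Q i) = Set.univ \ {s, r} ∧
    (∀ i, 1 ≤ i → i ≤ b → (G.induce (Q i)).Connected) ∧
    (∀ i, 1 ≤ i → i ≤ b → ∃ q ∈ Q i, G.Adj s q) ∧
    (∀ i, 1 ≤ i → i ≤ b → ∃ q ∈ Q i, G.Adj r q) ∧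
    -- (C3): for `2 ≤ i ≤ l/2 - 1`, at most `c` edges join `R_i` to the outside of
    -- `R_{i-1}`, and at most `c` edges join `L_i` to the outside of `L_{i-1}`
    (∀ i, 2 ≤ i → i ≤ l / 2 - 1 →
      {e : Sym2 V | ∃ u v, G.Adj u v ∧ u ∈ Rset X l i ∧ v ∉ Rset X l (i - 1) ∧
        e = s(u, v)}.ncard ≤ c ∧
      {e : Sym2 V | ∃ u v, G.Adj u v ∧ u ∈ Lset X l i ∧ v ∉ Lset X l (i - 1) ∧
        e = s(u, v)}.ncard ≤ c)

/-- Membership of `G` in the class `𝒢(n,b,l,c)`. -/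
def InGClass {V : Type*} (G : SimpleGraph V) (n b l c : ℕ) : Prop :=
  ∃ s r : V, InGClassWith G n b l c s r

namespace GP

def col (k : ℕ) (p : ℕ × ℕ) : ℕ := if p.1 = 1 then p.2 * (k / 2 - 1) else p.2

variable {k x N : ℕ}

lemma col_le (v : GkxNVertex k x N) : col k v.1 ≤ x * (k / 2 - 1) := by
  rcases v.2 with ⟨h1, h2⟩ | ⟨h1, h2, h3⟩
  · rw [col, if_pos h1]; exact Nat.mul_le_mul_right _ h2
  · rw [col, if_neg (by omega)]; exact h3

lemma adj_iff (a b : GkxNVertex k x N) :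
    (GkxN k x N).Adj a b ↔ a ≠ b ∧ (GkxNRel k a.1 b.1 ∨ GkxNRel k b.1 a.1) :=
  SimpleGraph.fromRel_adj _ a b

lemma adjE (a b : GkxNVertex k x N) (h1 : a.1 ≠ b.1) (h2 : GkxNRel k a.1 b.1) :
    (GkxN k x N).Adj a b := by
  rw [adj_iff]; exact ⟨fun h => h1 (congrArg _ h), Or.inl h2⟩

lemma adjE' (a b : GkxNVertex k x N) (h1 : a.1 ≠ b.1) (h2 : GkxNRel k b.1 a.1) :
    (GkxN k x N).Adj a b := by
  rw [adj_iff]; exact ⟨fun h => h1 (congrArg _ h), Or.inr h2⟩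

lemma rel_col {p q : ℕ × ℕ} (h : GkxNRel k p q) :
    col k q = col k p ∨ col k q = col k p + 1 ∨
    (p.1 = 1 ∧ q.1 = 1 ∧ q.2 = p.2 + 1 ∧ col k p = p.2 * (k / 2 - 1) ∧
      col k q = p.2 * (k / 2 - 1) + (k / 2 - 1)) := by
  rcases h with ⟨h1, h2, h3⟩ | ⟨h1, h2, h3⟩ | ⟨h1, h2, h3⟩ | ⟨h1, h2, h3, h4, h5⟩
  · refine Or.inr (Or.inr ⟨h1, h2, h3, by rw [col, if_pos h1], ?_⟩)
    rw [col, if_pos h2, h3, Nat.add_mul, one_mul]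
  · refine Or.inr (Or.inl ?_)
    rw [col, col, if_neg (by omega), if_neg (by omega), h3]
  · refine Or.inl ?_
    rw [col, col, if_pos h1, if_neg (by omega), h3]
  · refine Or.inl ?_
    rw [col, col, if_neg (by omega), if_neg (by omega), h4]

lemma adj_s (hK : 1 ≤ k / 2 - 1) {w : GkxNVertex k x N}
    (h : GkxNRel k (2, 0) w.1 ∨ GkxNRel k w.1 (2, 0)) :
    col k w.1 = 0 ∨ w.1 = (2, 1) := by
  rcases h with (⟨h1, h2, h3⟩ | ⟨h1, h2, h3⟩ | ⟨h1, h2, h3⟩ | ⟨h1, h2, h3, h4, h5⟩) |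
    (⟨h1, h2, h3⟩ | ⟨h1, h2, h3⟩ | ⟨h1, h2, h3⟩ | ⟨h1, h2, h3, h4, h5⟩)
  · simp at h1
  · exact Or.inr (Prod.ext h2 h3)
  · simp at h1
  · left; rw [col, if_neg (by omega)]; omega
  · simp at h2
  · simp at h3
  · left; rw [col, if_pos h1]
    simp only at h3
    have : w.1.2 = 0 := by
      rcases Nat.mul_eq_zero.mp h3.symm with h | h
      · exact h
      · omega
    rw [this, Nat.zero_mul]
  · left; rw [col, if_neg (by omega)]; omega

lemma adj_r (hK : 1 ≤ k / 2 - 1) {w : GkxNVertex k x N}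
    (h : GkxNRel k (2, x * (k / 2 - 1)) w.1 ∨ GkxNRel k w.1 (2, x * (k / 2 - 1))) :
    col k w.1 = x * (k / 2 - 1) ∨ w.1 = (2, x * (k / 2 - 1) - 1) ∧ w.1.1 = 2 := by
  rcases h with (⟨h1, h2, h3⟩ | ⟨h1, h2, h3⟩ | ⟨h1, h2, h3⟩ | ⟨h1, h2, h3, h4, h5⟩) |
    (⟨h1, h2, h3⟩ | ⟨h1, h2, h3⟩ | ⟨h1, h2, h3⟩ | ⟨h1, h2, h3, h4, h5⟩)
  · simp at h1
  · exfalso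
    simp only at h2 h3
    rcases w.2 with ⟨a, b⟩ | ⟨a, b, c⟩
    · omega
    · omega
  · simp at h1
  · left; rw [col, if_neg (by omega)]; omega
  · simp at h2
  · simp only at h2 h3
    exact Or.inr ⟨Prod.ext h2.symm (by omega), h2.symm⟩
  · left; rw [col, if_pos h1]
    simp only at h3
    omega
  · left; rw [col, if_neg (by omega)]; omega

lemma ncard_le_one_of_ss {α : Type*} {S : Set α} (h : S.Subsingleton) : S.ncard ≤ 1 := by
  rcases S.eq_empty_or_nonempty with hS | ⟨a, ha⟩
  · simp [hS]
  · rw [h.eq_singleton_of_mem ha]; simp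

lemma induce_connected_of_path {V : Type*} (G : SimpleGraph V) (S : Set V)
    (f : ℕ → V) (b : ℕ)
    (hmem : ∀ j, j ≤ b → f j ∈ S)
    (hsurj : ∀ v ∈ S, ∃ j, j ≤ b ∧ f j = v)
    (hadj : ∀ j, j < b → G.Adj (f j) (f (j+1))) :
    (G.induce S).Connected := by
  rw [SimpleGraph.connected_iff]
  have reach : ∀ j (hj : j ≤ b),
      (G.induce S).Reachable ⟨f 0, hmem 0 (Nat.zero_le _)⟩ ⟨f j, hmem j hj⟩ := by
    intro j hj
    induction j with
    | zero => exact SimpleGraph.Reachable.refl _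
    | succ n ih =>
      refine (ih (Nat.le_of_succ_le hj)).trans ?_
      exact SimpleGraph.Adj.reachable (by
        show G.Adj _ _
        exact hadj n (Nat.lt_of_succ_le hj))
  constructor
  · intro a c
    obtain ⟨ja, hja, hfa⟩ := hsurj a.1 a.2
    obtain ⟨jc, hjc, hfc⟩ := hsurj c.1 c.2
    have ha : a = ⟨f ja, hmem ja hja⟩ := Subtype.ext hfa.symm
    have hc : c = ⟨f jc, hmem jc hjc⟩ := Subtype.ext hfc.symm
    rw [ha, hc]
    exact (reach ja hja).symm.trans (reach jc hjc)
  · exact ⟨⟨f 0, hmem 0 (Nat.zero_le _)⟩⟩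



set_option maxHeartbeats 1600000 in
theorem master (k x N : ℕ) (hK : 1 ≤ k / 2 - 1) (hx : 2 ≤ x) (hN : 2 ≤ N) :
    InGClass (GkxN k x N) (Nat.card (GkxNVertex k x N)) N (x * (k / 2 - 1) + 3) 1 := by
  set m := x * (k / 2 - 1) with hmdef
  have hm : 2 ≤ m := by
    rw [hmdef]
    calc 2 = 2 * 1 := rfl
    _ ≤ x * (k / 2 - 1) := Nat.mul_le_mul hx hK
  set l := m + 3 with hldef
  have hl3 : 3 ≤ l := by omega
  set s : GkxNVertex k x N := ⟨(2, 0), Or.inr ⟨le_rfl, hN, Nat.zero_le _⟩⟩ with hsdef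
  set r : GkxNVertex k x N := ⟨(2, m), Or.inr ⟨le_rfl, hN, hmdef.le⟩⟩ with hrdef
  have hs1 : s.1 = (2, 0) := rfl
  have hr1 : r.1 = (2, m) := rfl
  have hcols : col k s.1 = 0 := by rw [hs1, col, if_neg (by omega)]
  have hcolr : col k r.1 = m := by rw [hr1, col, if_neg (by omega)]
  have hcolle : ∀ v : GkxNVertex k x N, col k v.1 ≤ m := by
    intro v; rw [hmdef]; exact col_le v
  have hsr : s ≠ r := by
    intro h
    have : (0 : ℕ) = m := congrArg (fun v : GkxNVertex k x N => v.1.2) h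
    omega
  have nbr_s : ∀ w, (GkxN k x N).Adj s w → col k w.1 = 0 ∨ w.1 = (2, 1) := by
    intro w h
    exact adj_s hK ((adj_iff s w).mp h).2
  have nbr_r : ∀ w, (GkxN k x N).Adj r w →
      col k w.1 = m ∨ w.1 = (2, m - 1) ∧ w.1.1 = 2 := by
    intro w h
    have := ((adj_iff r w).mp h).2
    rw [hr1, hmdef] at this
    rcases adj_r hK this with h' | h'
    · left; rw [hmdef]; exact h'
    · right; rw [hmdef]; exact h'
  have hnsr : ¬ (GkxN k x N).Adj s r := by
    intro h
    rcases nbr_s r h with h' | h'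
    · rw [hcolr] at h'; omega
    · rw [hr1] at h'
      have : m = 1 := congrArg Prod.snd h'
      omega
  set X : ℕ → Set (GkxNVertex k x N) := fun t =>
    if t = 1 then {s} else if t = l then {r}
    else {v | col k v.1 + 2 = t ∧ v ≠ s ∧ v ≠ r} with hXdef
  set Q : ℕ → Set (GkxNVertex k x N) := fun i =>
    if i = 1 then {v | v.1.1 = 1}
    else if i = 2 then {v | v.1.1 = 2 ∧ v.1.2 ≠ 0 ∧ v.1.2 ≠ m}
    else {v | v.1.1 = i} with hQdef
  have hX1 : X 1 = {s} := by rw [hXdef]; simp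
  have hXl : X l = {r} := by
    rw [hXdef]; simp only
    rw [if_neg (by omega : ¬ l = 1)]; simp
  have memX : ∀ t (v : GkxNVertex k x N), t ≠ 1 → t ≠ l →
      (v ∈ X t ↔ (col k v.1 + 2 = t ∧ v ≠ s ∧ v ≠ r)) := by
    intro t v h1 h2
    rw [hXdef]
    simp only [if_neg h1, if_neg h2, Set.mem_setOf_eq]
  have memR : ∀ i₀, 1 ≤ i₀ → i₀ + 1 ≤ l → ∀ v : GkxNVertex k x N,
      (v ∈ Rset X l i₀ ↔ (v = r ∨ (v ≠ s ∧ v ≠ r ∧ i₀ + 1 ≤ col k v.1 + 2))) := by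
    intro i₀ h1 h2 v
    simp only [Rset, Set.mem_iUnion, Finset.mem_Icc, exists_prop]
    constructor
    · rintro ⟨t, ⟨ht1, ht2⟩, hvt⟩
      rcases eq_or_ne t l with rfl | htl
      · rw [hXl] at hvt; exact Or.inl hvt
      · rw [memX t v (by omega) htl] at hvt
        exact Or.inr ⟨hvt.2.1, hvt.2.2, by omega⟩
    · rintro (rfl | ⟨hs', hr', hcol⟩)
      · refine ⟨l, ⟨h2, le_rfl⟩, ?_⟩
        rw [hXl]; rfl
      · have hc := hcolle v
        refine ⟨col k v.1 + 2, ⟨hcol, by omega⟩, ?_⟩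
        rw [memX _ _ (by omega) (by omega)]
        exact ⟨rfl, hs', hr'⟩
  have memL : ∀ i₀, 1 ≤ i₀ → i₀ + 1 ≤ l → ∀ v : GkxNVertex k x N,
      (v ∈ Lset X l i₀ ↔ (v = s ∨ (v ≠ s ∧ v ≠ r ∧ col k v.1 + 2 ≤ l - i₀))) := by
    intro i₀ h1 h2 v
    simp only [Lset, Set.mem_iUnion, Finset.mem_Icc, exists_prop]
    constructor
    · rintro ⟨t, ⟨ht1, ht2⟩, hvt⟩
      rcases eq_or_ne t 1 with rfl | ht1'
      · rw [hX1] at hvt; exact Or.inl hvt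
      · rw [memX t v ht1' (by omega)] at hvt
        exact Or.inr ⟨hvt.2.1, hvt.2.2, by omega⟩
    · rintro (rfl | ⟨hs', hr', hcol⟩)
      · refine ⟨1, ⟨le_rfl, by omega⟩, ?_⟩
        rw [hX1]; rfl
      · refine ⟨col k v.1 + 2, ⟨by omega, hcol⟩, ?_⟩
        rw [memX _ _ (by omega) (by omega)]
        exact ⟨rfl, hs', hr'⟩
  have memQ1 : ∀ v : GkxNVertex k x N, v ∈ Q 1 ↔ v.1.1 = 1 := by
    intro v; rw [hQdef]; simp
  have memQ2 : ∀ v : GkxNVertex k x N,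
      v ∈ Q 2 ↔ (v.1.1 = 2 ∧ v.1.2 ≠ 0 ∧ v.1.2 ≠ m) := by
    intro v; rw [hQdef]
    simp only [if_neg (by omega : ¬ (2 : ℕ) = 1), if_pos (rfl : (2 : ℕ) = 2),
      Set.mem_setOf_eq]
    rfl
  have memQ3 : ∀ t, t ≠ 1 → t ≠ 2 → ∀ v : GkxNVertex k x N, (v ∈ Q t ↔ v.1.1 = t) := by
    intro t h1 h2 v; rw [hQdef]; simp only
    rw [if_neg h1, if_neg h2]
    rfl
  refine ⟨s, r, rfl, by omega, X, Q, ?_, ?_, hX1, hXl, ?_, ?_, ?_, ?_, ?_, ?_⟩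
  · -- X disjoint
    intro i j h1 h2 h3
    rw [Set.disjoint_left]
    intro v hvi hvj
    have hj1 : j ≠ 1 := by omega
    rcases eq_or_ne j l with rfl | hjl
    · rw [hXl] at hvj
      have hvr : v = r := hvj
      rcases eq_or_ne i 1 with rfl | hi1
      · rw [hX1] at hvi
        exact hsr ((Set.mem_singleton_iff.mp hvi).symm.trans hvr)
      · rw [memX i v hi1 (by omega)] at hvi
        exact hvi.2.2 hvr
    · rw [memX j v hj1 hjl] at hvj
      rcases eq_or_ne i 1 with rfl | hi1
      · rw [hX1] at hvi
        exact hvj.2.1 (Set.mem_singleton_iff.mp hvi)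
      · rw [memX i v hi1 (by omega)] at hvi
        omega
  · -- X union
    ext v
    simp only [Set.mem_iUnion, Finset.mem_Icc, exists_prop, Set.mem_univ, iff_true]
    rcases eq_or_ne v s with rfl | hvs
    · exact ⟨1, ⟨le_rfl, by omega⟩, by rw [hX1]; rfl⟩
    · rcases eq_or_ne v r with rfl | hvr
      · exact ⟨l, ⟨by omega, le_rfl⟩, by rw [hXl]; rfl⟩
      · have hc := hcolle v
        exact ⟨col k v.1 + 2, ⟨by omega, by omega⟩, by
          rw [memX _ _ (by omega) (by omega)]; exact ⟨rfl, hvs, hvr⟩⟩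
  · -- Q disjoint
    have rowQ : ∀ t (v : GkxNVertex k x N), v ∈ Q t → v.1.1 = t := by
      intro t v hv
      rcases eq_or_ne t 1 with rfl | h1
      · exact (memQ1 v).mp hv
      · rcases eq_or_ne t 2 with rfl | h2
        · exact ((memQ2 v).mp hv).1
        · exact (memQ3 t h1 h2 v).mp hv
    intro i j h1 h2 h3
    rw [Set.disjoint_left]
    intro v hvi hvj
    have e1 := rowQ i v hvi
    have e2 := rowQ j v hvj
    omega
  · -- Q union
    ext v
    simp only [Set.mem_iUnion, Finset.mem_Icc, exists_prop, Set.mem_diff, Set.mem_univ,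
      true_and, Set.mem_insert_iff, Set.mem_singleton_iff, not_or]
    constructor
    · rintro ⟨t, ⟨ht1, ht2⟩, hvt⟩
      rcases eq_or_ne t 1 with rfl | h1
      · rw [memQ1 v] at hvt
        refine ⟨fun h => ?_, fun h => ?_⟩
        · have : v.1.1 = 2 := by rw [h]
          omega
        · have : v.1.1 = 2 := by rw [h]
          omega
      · rcases eq_or_ne t 2 with rfl | h2
        · obtain ⟨ha, hb, hc⟩ := (memQ2 v).mp hvt
          refine ⟨fun h => ?_, fun h => ?_⟩
          · have : v.1.2 = 0 := by rw [h]
            omega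
          · have : v.1.2 = m := by rw [h]
            omega
        · have := (memQ3 t h1 h2 v).mp hvt
          refine ⟨fun h => ?_, fun h => ?_⟩
          · have h2' : v.1.1 = 2 := by rw [h]
            omega
          · have h2' : v.1.1 = 2 := by rw [h]
            omega
    · rintro ⟨hvs, hvr⟩
      rcases v.2 with hval | hval
      · exact ⟨1, ⟨le_rfl, by omega⟩, (memQ1 v).mpr hval.1⟩
      · rcases eq_or_ne v.1.1 2 with h2 | h2
        · refine ⟨2, ⟨by omega, hN⟩, (memQ2 v).mpr ⟨h2, ?_, ?_⟩⟩
          · intro h0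
            exact hvs (Subtype.ext (Prod.ext h2 h0))
          · intro hm'
            exact hvr (Subtype.ext (Prod.ext h2 hm'))
        · exact ⟨v.1.1, ⟨by omega, hval.2.1⟩, (memQ3 v.1.1 (by omega) h2 v).mpr rfl⟩
  · -- Q connected
    intro i h1 h2
    rcases eq_or_ne i 1 with rfl | hi1
    · apply induce_connected_of_path (GkxN k x N) (Q 1)
        (fun j => ⟨(1, min j x), Or.inl ⟨rfl, min_le_right _ _⟩⟩) x
      · intro j hj
        exact (memQ1 _).mpr rfl
      · intro v hv
        rw [memQ1 v] at hv
        rcases v.2 with hval | hval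
        · exact ⟨v.1.2, hval.2, Subtype.ext (Prod.ext hv.symm (min_eq_left hval.2))⟩
        · exfalso; omega
      · intro j hj
        have e1 : min j x = j := min_eq_left (by omega)
        have e2 : min (j + 1) x = j + 1 := min_eq_left (by omega)
        apply adjE
        · intro hcon
          have h' := congrArg Prod.snd hcon
          simp only at h'
          rw [e1, e2] at h'
          omega
        · exact Or.inl ⟨rfl, rfl, by show min (j+1) x = min j x + 1; rw [e1, e2]⟩
    · rcases eq_or_ne i 2 with rfl | hi2
      · apply induce_connected_of_path (GkxN k x N) (Q 2)
          (fun j => ⟨(2, min (j + 1) (m - 1)),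
            Or.inr ⟨le_rfl, hN, (min_le_right _ _).trans (by omega)⟩⟩) (m - 2)
        · intro j hj
          have he : min (j + 1) (m - 1) = j + 1 := min_eq_left (by omega)
          refine (memQ2 _).mpr ⟨rfl, ?_, ?_⟩
          · show min (j + 1) (m - 1) ≠ 0
            rw [he]; omega
          · show min (j + 1) (m - 1) ≠ m
            rw [he]; omega
        · intro v hv
          obtain ⟨h2', hz, hm'⟩ := (memQ2 v).mp hv
          have hle : v.1.2 ≤ m := by
            rcases v.2 with hval | hval
            · omega
            · have := hval.2.2; omega
          refine ⟨v.1.2 - 1, by omega, Subtype.ext (Prod.ext h2'.symm ?_)⟩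
          show min (v.1.2 - 1 + 1) (m - 1) = v.1.2
          have he : v.1.2 - 1 + 1 = v.1.2 := by omega
          rw [he]
          exact min_eq_left (by omega)
        · intro j hj
          have e1 : min (j + 1) (m - 1) = j + 1 := min_eq_left (by omega)
          have e2 : min (j + 1 + 1) (m - 1) = j + 2 := min_eq_left (by omega)
          apply adjE
          · intro hcon
            have h' := congrArg Prod.snd hcon
            simp only at h'
            rw [e1, e2] at h'
            omega
          · exact Or.inr (Or.inl ⟨le_rfl, rfl,
              by show min (j+1+1) (m-1) = min (j+1) (m-1) + 1; rw [e1, e2]⟩)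
      · apply induce_connected_of_path (GkxN k x N) (Q i)
          (fun j => ⟨(i, min j m), Or.inr ⟨by omega, h2, (min_le_right _ _).trans (by omega)⟩⟩) m
        · intro j hj
          exact (memQ3 i hi1 hi2 _).mpr rfl
        · intro v hv
          rw [memQ3 i hi1 hi2 v] at hv
          have hle : v.1.2 ≤ m := by
            rcases v.2 with hval | hval
            · omega
            · have := hval.2.2; omega
          exact ⟨v.1.2, hle, Subtype.ext (Prod.ext hv.symm (min_eq_left hle))⟩
        · intro j hj
          have e1 : min j m = j := min_eq_left (by omega)
          have e2 : min (j + 1) m = j + 1 := min_eq_left (by omega)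
          apply adjE
          · intro hcon
            have h' := congrArg Prod.snd hcon
            simp only at h'
            rw [e1, e2] at h'
            omega
          · exact Or.inr (Or.inl ⟨by show 2 ≤ i; omega, rfl, by show min (j+1) m = min j m + 1; rw [e1, e2]⟩)
  · -- adj s
    intro i h1 h2
    rcases eq_or_ne i 1 with rfl | hi1
    · refine ⟨⟨(1, 0), Or.inl ⟨rfl, Nat.zero_le _⟩⟩, (memQ1 _).mpr rfl, ?_⟩
      apply adjE'
      · intro hcon
        have h' : (2 : ℕ) = 1 := congrArg Prod.fst hcon
        omega
      · exact Or.inr (Or.inr (Or.inl ⟨rfl, le_rfl, by simp [hs1]⟩))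
    · rcases eq_or_ne i 2 with rfl | hi2
      · refine ⟨⟨(2, 1), Or.inr ⟨le_rfl, hN, by omega⟩⟩,
          (memQ2 _).mpr ⟨rfl, by show (1:ℕ) ≠ 0; omega, by show (1:ℕ) ≠ m; omega⟩, ?_⟩
        apply adjE
        · intro hcon
          have h' : (0 : ℕ) = 1 := congrArg Prod.snd hcon
          omega
        · exact Or.inr (Or.inl ⟨le_rfl, rfl, rfl⟩)
      · refine ⟨⟨(i, 0), Or.inr ⟨by omega, h2, Nat.zero_le _⟩⟩, (memQ3 i hi1 hi2 _).mpr rfl, ?_⟩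
        apply adjE
        · intro hcon
          have h' : (2 : ℕ) = i := congrArg Prod.fst hcon
          omega
        · exact Or.inr (Or.inr (Or.inr ⟨le_rfl, by show 2 ≤ i; omega,
            by show (2:ℕ) ≠ i; omega, rfl, dvd_zero _⟩))
  · -- adj r
    intro i h1 h2
    rcases eq_or_ne i 1 with rfl | hi1
    · refine ⟨⟨(1, x), Or.inl ⟨rfl, le_rfl⟩⟩, (memQ1 _).mpr rfl, ?_⟩
      apply adjE'
      · intro hcon
        have h' : (2 : ℕ) = 1 := congrArg Prod.fst hcon
        omega
      · exact Or.inr (Or.inr (Or.inl ⟨rfl, le_rfl, by show m = x * (k / 2 - 1); omega⟩))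
    · rcases eq_or_ne i 2 with rfl | hi2
      · refine ⟨⟨(2, m - 1), Or.inr ⟨le_rfl, hN, by omega⟩⟩,
          (memQ2 _).mpr ⟨rfl, by show m - 1 ≠ 0; omega, by show m - 1 ≠ m; omega⟩, ?_⟩
        apply adjE'
        · intro hcon
          have h' := congrArg Prod.snd hcon
          simp only at h'
          simp only [hr1, Prod.mk.injEq] at hcon; omega
        · exact Or.inr (Or.inl ⟨le_rfl, rfl, by show m = m - 1 + 1; omega⟩)
      · refine ⟨⟨(i, m), Or.inr ⟨by omega, h2, by omega⟩⟩, (memQ3 i hi1 hi2 _).mpr rfl, ?_⟩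
        apply adjE
        · intro hcon
          have h' : (2 : ℕ) = i := congrArg Prod.fst hcon
          omega
        · refine Or.inr (Or.inr (Or.inr ⟨le_rfl, by show 2 ≤ i; omega,
            by show (2:ℕ) ≠ i; omega, rfl, ⟨x, ?_⟩⟩))
          show m = (k / 2 - 1) * x
          rw [hmdef, Nat.mul_comm]
  · -- C3
    intro i hi2 hil
    have hl' : l = m + 3 := hldef
    have hilm : 2 * i ≤ m + 1 := by omega
    constructor
    · -- R side
      apply ncard_le_one_of_ss
      have shape : ∀ u v : GkxNVertex k x N, (GkxN k x N).Adj u v → u ∈ Rset X l i →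
          v ∉ Rset X l (i - 1) →
          (i = 2 ∧ u.1 = (2, 1) ∧ v = s) ∨
          (∃ j, u.1 = (1, j + 1) ∧ v.1 = (1, j) ∧ j * (k / 2 - 1) + 2 < i ∧
            i ≤ j * (k / 2 - 1) + (k / 2 - 1) + 1) := by
        intro u v hadj huR hvR
        rw [memR i (by omega) (by omega)] at huR
        rw [memR (i - 1) (by omega) (by omega)] at hvR
        have hvR' : v ≠ r ∧ (v = s ∨ col k v.1 + 2 < i) := by
          constructor
          · intro h; exact hvR (Or.inl h)
          · by_cases hvs : v = s
            · exact Or.inl hvs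
            · right
              by_contra hcol
              exact hvR (Or.inr ⟨hvs, fun h => hvR (Or.inl h), by omega⟩)
        obtain ⟨hvr', hvcase⟩ := hvR'
        rcases huR with rfl | ⟨hus, hur, hcolu⟩
        · exfalso
          rcases nbr_r v hadj with hc | hc
          · rcases hvcase with rfl | hlt
            · exact hnsr hadj.symm
            · omega
          · have hcv : col k v.1 = m - 1 := by rw [hc.1]; simp [col]
            rcases hvcase with rfl | hlt
            · exact hnsr hadj.symm
            · omega
        · rcases hvcase with rfl | hlt
          · rcases nbr_s u hadj.symm with hc | hc
            · exfalso; omega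
            · have hcu : col k u.1 = 1 := by rw [hc]; simp [col]
              exact Or.inl ⟨by omega, hc, rfl⟩
          · obtain ⟨hne, hrel⟩ := (adj_iff u v).mp hadj
            rcases hrel with h | h
            · exfalso
              rcases rel_col h with hc | hc | ⟨h1', h2', h3', h4', h5'⟩
              · omega
              · omega
              · omega
            · rcases rel_col h with hc | hc | ⟨hv1, hu1, hu2, hcv, hcu⟩
              · exfalso; omega
              · exfalso; omega
              · exact Or.inr ⟨v.1.2, Prod.ext hu1 hu2, Prod.ext hv1 rfl, by omega, by omega⟩
      intro e₁ he₁ e₂ he₂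
      obtain ⟨u₁, v₁, ha₁, hu₁, hv₁, rfl⟩ := he₁
      obtain ⟨u₂, v₂, ha₂, hu₂, hv₂, rfl⟩ := he₂
      rcases shape u₁ v₁ ha₁ hu₁ hv₁ with ⟨hi, hu, hv⟩ | ⟨j₁, hu, hv, hj1, hj2⟩
      · rcases shape u₂ v₂ ha₂ hu₂ hv₂ with ⟨hi', hu', hv'⟩ | ⟨j₂, hu', hv', hj1', hj2'⟩
        · rw [Subtype.ext (hu.trans hu'.symm), hv, hv']
        · exfalso; omega
      · rcases shape u₂ v₂ ha₂ hu₂ hv₂ with ⟨hi', hu', hv'⟩ | ⟨j₂, hu', hv', hj1', hj2'⟩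
        · exfalso; omega
        · have hjj : j₁ = j₂ := by
            rcases lt_trichotomy j₁ j₂ with hlt | heq | hlt
            · exfalso
              have hmul : (j₁ + 1) * (k / 2 - 1) ≤ j₂ * (k / 2 - 1) :=
                Nat.mul_le_mul_right _ (by omega)
              have hexp : (j₁ + 1) * (k / 2 - 1) = j₁ * (k / 2 - 1) + (k / 2 - 1) := by ring
              omega
            · exact heq
            · exfalso
              have hmul : (j₂ + 1) * (k / 2 - 1) ≤ j₁ * (k / 2 - 1) :=
                Nat.mul_le_mul_right _ (by omega)
              have hexp : (j₂ + 1) * (k / 2 - 1) = j₂ * (k / 2 - 1) + (k / 2 - 1) := by ring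
              omega
          have e1 : u₁ = u₂ := Subtype.ext (by rw [hu, hu', hjj])
          have e2 : v₁ = v₂ := Subtype.ext (by rw [hv, hv', hjj])
          rw [e1, e2]
    · -- L side
      apply ncard_le_one_of_ss
      have shape : ∀ u v : GkxNVertex k x N, (GkxN k x N).Adj u v → u ∈ Lset X l i →
          v ∉ Lset X l (i - 1) →
          (i = 2 ∧ u.1 = (2, m - 1) ∧ v = r) ∨
          (∃ j, u.1 = (1, j) ∧ v.1 = (1, j + 1) ∧ j * (k / 2 - 1) + 2 ≤ l - i ∧
            l - i ≤ j * (k / 2 - 1) + (k / 2 - 1) ∧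
            j * (k / 2 - 1) + (k / 2 - 1) ≤ m) := by
        intro u v hadj huL hvL
        rw [memL i (by omega) (by omega)] at huL
        rw [memL (i - 1) (by omega) (by omega)] at hvL
        have hvL' : v ≠ s ∧ (v = r ∨ l - i + 1 < col k v.1 + 2) := by
          constructor
          · intro h; exact hvL (Or.inl h)
          · by_cases hvr' : v = r
            · exact Or.inl hvr'
            · right
              by_contra hcol
              exact hvL (Or.inr ⟨fun h => hvL (Or.inl h), hvr', by omega⟩)
        obtain ⟨hvs', hvcase⟩ := hvL'
        have hcvle := hcolle v
        rcases huL with rfl | ⟨hus, hur, hcolu⟩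
        · exfalso
          rcases hvcase with rfl | hlt
          · exact hnsr hadj
          · rcases nbr_s v hadj with hc | hc
            · omega
            · have hcv : col k v.1 = 1 := by rw [hc]; simp [col]
              omega
        · rcases hvcase with rfl | hlt
          · rcases nbr_r u hadj.symm with hc | hc
            · exfalso; omega
            · have hcu : col k u.1 = m - 1 := by rw [hc.1]; simp [col]
              exact Or.inl ⟨by omega, hc.1, rfl⟩
          · have hgap : col k u.1 + 2 ≤ col k v.1 := by omega
            obtain ⟨hne, hrel⟩ := (adj_iff u v).mp hadj
            rcases hrel with h | h
            · rcases rel_col h with hc | hc | ⟨hu1, hv1, hv2, hcu, hcv⟩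
              · exfalso; omega
              · exfalso; omega
              · exact Or.inr ⟨u.1.2, Prod.ext hu1 rfl, Prod.ext hv1 hv2,
                  by omega, by omega, by omega⟩
            · exfalso
              rcases rel_col h with hc | hc | ⟨h1', h2', h3', h4', h5'⟩
              · omega
              · omega
              · omega
      intro e₁ he₁ e₂ he₂
      obtain ⟨u₁, v₁, ha₁, hu₁, hv₁, rfl⟩ := he₁
      obtain ⟨u₂, v₂, ha₂, hu₂, hv₂, rfl⟩ := he₂
      rcases shape u₁ v₁ ha₁ hu₁ hv₁ with ⟨hi, hu, hv⟩ | ⟨j₁, hu, hv, hj1, hj2, hj3⟩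
      · rcases shape u₂ v₂ ha₂ hu₂ hv₂ with ⟨hi', hu', hv'⟩ | ⟨j₂, hu', hv', hj1', hj2', hj3'⟩
        · rw [Subtype.ext (hu.trans hu'.symm), hv, hv']
        · exfalso; omega
      · rcases shape u₂ v₂ ha₂ hu₂ hv₂ with ⟨hi', hu', hv'⟩ | ⟨j₂, hu', hv', hj1', hj2', hj3'⟩
        · exfalso; omega
        · have hjj : j₁ = j₂ := by
            rcases lt_trichotomy j₁ j₂ with hlt | heq | hlt
            · exfalso
              have hmul : (j₁ + 1) * (k / 2 - 1) ≤ j₂ * (k / 2 - 1) :=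
                Nat.mul_le_mul_right _ (by omega)
              have hexp : (j₁ + 1) * (k / 2 - 1) = j₁ * (k / 2 - 1) + (k / 2 - 1) := by ring
              omega
            · exact heq
            · exfalso
              have hmul : (j₂ + 1) * (k / 2 - 1) ≤ j₁ * (k / 2 - 1) :=
                Nat.mul_le_mul_right _ (by omega)
              have hexp : (j₂ + 1) * (k / 2 - 1) = j₂ * (k / 2 - 1) + (k / 2 - 1) := by ring
              omega
          have e1 : u₁ = u₂ := Subtype.ext (by rw [hu, hu', hjj])
          have e2 : v₁ = v₂ := Subtype.ext (by rw [hv, hv', hjj])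
          rw [e1, e2]

end GP

/-- For even `k ≥ 4`, `K = k/2 - 1`, `D > 2K` and `N ≥ 2kD`, setting `x = D - K`, the
graph `G(k,x,N)` belongs to the class `𝒢(n, N, xK + 3, 1)`, where `n` is its number of
vertices. -/
theorem GkxN_mem_GClass (k D N : ℕ) (hk : 4 ≤ k) (hke : Even k)
    (hD : 2 * (k / 2 - 1) < D) (hN : 2 * k * D ≤ N) :
    InGClass (GkxN k (D - (k / 2 - 1)) N)
      (Nat.card (GkxNVertex k (D - (k / 2 - 1)) N)) N
      ((D - (k / 2 - 1)) * (k / 2 - 1) + 3) 1 := by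
  have hK : 1 ≤ k / 2 - 1 := by omega
  have hx : 2 ≤ D - (k / 2 - 1) := by omega
  have hN2 : 2 ≤ N := by nlinarith
  exact GP.master k (D - (k / 2 - 1)) N hK hx hN2
end

section
/- Let G be a finite simple graph, let P ⊆ V(G), and let Ĝ be the 1-hop extension of P in G. Let W be a shortest path in Ĝ between two vertices of Ĝ, and let u_0, u_1, …, u_{c'} be the vertices of W that belong to P, listed in the order in which they appear along W. Then for all indices x and a with a ≥ 3 and x + a ≤ c', the closed neighborhoods N_G[u_x] and N_G[u_{x+a}] are disjoint; equivalently, dist_G(u_x, u_{x+a}) ≥ 3. -/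
/-- The closed neighborhood `N_G[v] = {v} ∪ N_G(v)` of a vertex. -/
def closedNbhd {V : Type*} (G : SimpleGraph V) (v : V) : Set V :=
  insert v (G.neighborSet v)

private lemma finOE_add_le {n m : ℕ} (f : Fin n ↪o Fin m) :
    ∀ (a x : ℕ) (h : x + a < n),
      ((f ⟨x, by omega⟩ : Fin m) : ℕ) + a ≤ ((f ⟨x + a, h⟩ : Fin m) : ℕ) := by
  intro a
  induction a with
  | zero => intro x h; simp
  | succ b ih =>
    intro x h
    have h1 : x + b < n := by omega
    have h2 := ih x h1
    have h3 : (⟨x + b, h1⟩ : Fin n) < ⟨x + (b + 1), h⟩ := by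
      simp [Fin.lt_def]
    have h4 := f.strictMono h3
    have : ((f ⟨x + b, h1⟩ : Fin m) : ℕ) < ((f ⟨x + (b+1), h⟩ : Fin m) : ℕ) := h4
    omega

private lemma support_get_eq_getVert {V : Type*} {G : SimpleGraph V} {s t : V}
    (w : G.Walk s t) : ∀ (i : ℕ) (h : i < w.support.length),
    w.support.get ⟨i, h⟩ = w.getVert i := by
  induction w with
  | nil =>
    intro i h
    simp only [SimpleGraph.Walk.support_nil, List.length_singleton] at h
    interval_cases i
    rfl
  | cons ha q ih =>
    intro i h
    cases i with
    | zero => rfl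
    | succ k =>
      simp only [SimpleGraph.Walk.support_cons, List.length_cons] at h
      have := ih k (by omega)
      simpa [SimpleGraph.Walk.support_cons] using this

private lemma exists_walk_getVert {V : Type*} {G : SimpleGraph V} {s t : V}
    (w : G.Walk s t) : ∀ (i j : ℕ), i ≤ j →
    ∃ p : G.Walk (w.getVert i) (w.getVert j), p.length ≤ j - i := by
  induction w with
  | nil => intro i j _; exact ⟨SimpleGraph.Walk.nil, by simp⟩
  | cons ha q ih =>
    intro i j hij
    match i, j with
    | 0, 0 => exact ⟨SimpleGraph.Walk.nil, by simp⟩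
    | 0, (m+1) =>
      obtain ⟨p, hp⟩ := ih 0 m (by omega)
      exact ⟨(SimpleGraph.Walk.cons ha (p.copy (q.getVert_zero) rfl)).copy
          (SimpleGraph.Walk.getVert_zero _).symm (SimpleGraph.Walk.getVert_cons_succ q ha).symm,
        by simp only [SimpleGraph.Walk.length_copy, SimpleGraph.Walk.length_cons]; omega⟩
    | (k+1), (m+1) =>
      obtain ⟨p, hp⟩ := ih k m (by omega)
      exact ⟨p.copy (by simp) (by simp), by simp; omega⟩

/-- Let `Ĝ` be the 1-hop extension of `P` in `G`, `w` a shortest path in `Ĝ`, and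
`u_0, …, u_{c'}` the vertices of `w` lying in `P`, in order along `w`. Then for `a ≥ 3`
and `x + a ≤ c'`, the closed neighborhoods `N_G[u_x]` and `N_G[u_{x+a}]` are disjoint. -/
theorem oneHopExt_shortest_path_spread {V : Type*} [Fintype V] (G : SimpleGraph V)
    (P : Set V) [DecidablePred (· ∈ P)]
    (s t : V) (w : (oneHopExt G P).Walk s t) (hpath : w.IsPath)
    (hshortest : w.length = (oneHopExt G P).dist s t)
    (x a : ℕ) (ha : 3 ≤ a)
    (hxa : x + a < (w.support.filter (fun z => decide (z ∈ P))).length) :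
    Disjoint
      (closedNbhd G ((w.support.filter (fun z => decide (z ∈ P))).get
        ⟨x, by omega⟩))
      (closedNbhd G ((w.support.filter (fun z => decide (z ∈ P))).get
        ⟨x + a, hxa⟩)) := by
  set L := w.support.filter (fun z => decide (z ∈ P)) with hL
  set u := L.get ⟨x, by omega⟩ with hu_def
  set v := L.get ⟨x + a, hxa⟩ with hv_def
  have hsub : List.Sublist L w.support := List.filter_sublist
  obtain ⟨f, hf⟩ := List.sublist_iff_exists_fin_orderEmbedding_get_eq.mp hsub
  set ix : Fin L.length := ⟨x, by omega⟩ with hix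
  set iy : Fin L.length := ⟨x + a, hxa⟩ with hiy
  set i : ℕ := (f ix : ℕ) with hi_def
  set j : ℕ := (f iy : ℕ) with hj_def
  have hij : i + a ≤ j := finOE_add_le f a x hxa
  have hjlen : j ≤ w.length := by
    have := (f iy).isLt
    have hsl : w.support.length = w.length + 1 := SimpleGraph.Walk.length_support w
    omega
  have hu_gv : u = w.getVert i := by
    rw [hu_def, hf ix, support_get_eq_getVert]
  have hv_gv : v = w.getVert j := by
    rw [hv_def, hf iy, support_get_eq_getVert]
  -- u and v belong to P
  have huP : u ∈ P := by
    have hmem : u ∈ L := List.get_mem L ⟨x, by omega⟩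
    rw [hL] at hmem
    have := List.of_mem_filter hmem
    exact of_decide_eq_true this
  have hvP : v ∈ P := by
    have hmem : v ∈ L := List.get_mem L ⟨x+a, hxa⟩
    rw [hL] at hmem
    have := List.of_mem_filter hmem
    exact of_decide_eq_true this
  by_contra hdisj
  rw [Set.not_disjoint_iff] at hdisj
  obtain ⟨z, hz1, hz2⟩ := hdisj
  rw [closedNbhd, Set.mem_insert_iff] at hz1 hz2
  -- build a short walk from u to v in the one-hop extension
  have hr : ∃ r : (oneHopExt G P).Walk u v, r.length ≤ 2 := by
    rcases hz1 with h1 | h1 <;> rcases hz2 with h2 | h2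
    · exact ⟨SimpleGraph.Walk.nil.copy rfl (h1.symm.trans h2), by simp⟩
    · have h2' : G.Adj v z := h2
      have hadj : (oneHopExt G P).Adj u v := ⟨h1 ▸ h2'.symm, Or.inl huP⟩
      exact ⟨SimpleGraph.Walk.cons hadj SimpleGraph.Walk.nil, by simp⟩
    · have h1' : G.Adj u z := h1
      have hadj : (oneHopExt G P).Adj u v := ⟨h2 ▸ h1', Or.inl huP⟩
      exact ⟨SimpleGraph.Walk.cons hadj SimpleGraph.Walk.nil, by simp⟩
    · have h1' : G.Adj u z := h1
      have h2' : G.Adj v z := h2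
      have hadj1 : (oneHopExt G P).Adj u z := ⟨h1', Or.inl huP⟩
      have hadj2 : (oneHopExt G P).Adj z v := ⟨h2'.symm, Or.inr hvP⟩
      exact ⟨SimpleGraph.Walk.cons hadj1
        (SimpleGraph.Walk.cons hadj2 SimpleGraph.Walk.nil), by simp⟩
  obtain ⟨r, hrlen⟩ := hr
  obtain ⟨p, hplen⟩ := exists_walk_getVert w 0 i (Nat.zero_le i)
  obtain ⟨q, hqlen⟩ := exists_walk_getVert w j w.length hjlen
  -- build a new walk from s to t of length < w.length
  let p' : (oneHopExt G P).Walk s (w.getVert i) := p.copy (w.getVert_zero) rfl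
  let q' : (oneHopExt G P).Walk (w.getVert j) t := q.copy rfl (w.getVert_length)
  let r' : (oneHopExt G P).Walk (w.getVert i) (w.getVert j) :=
    r.copy hu_gv hv_gv
  let W : (oneHopExt G P).Walk s t := p'.append (r'.append q')
  have hWlen : W.length ≤ i + 2 + (w.length - j) := by
    have : W.length = p'.length + (r'.length + q'.length) := by
      simp [W, SimpleGraph.Walk.length_append]
    have hp' : p'.length ≤ i := by simpa [p'] using hplen
    have hq' : q'.length ≤ w.length - j := by simpa [q'] using hqlen
    have hr' : r'.length ≤ 2 := by simpa [r'] using hrlen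
    omega
  have hdle : (oneHopExt G P).dist s t ≤ W.length := SimpleGraph.dist_le W
  rw [← hshortest] at hdle
  omega
end
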